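/- arXiv:1412.1975 — 6 statements merged into one kernel-verified Lean document; each statement's English description precedes it below -/
import Mathlib

section
/- Let T be a connected ℤ^d-tile T(A,D), let n₀ ≥ 1 and K ∈ ℕ, and suppose that for each n ≥ n₀ a nonempty set W₂^(n) ⊆ V_n is given such that the subgraph of the Hata graph G_n induced on W₂^(n) is connected, W₂^(n+1) ⊆ C(W₂^(n)), and #W₂^(n) ≤ K. Then the sets X_n(W₂^(n)) are nonempty compact connected sets satisfying X_{n+1}(W₂^(n+1)) ⊆ X_n(W₂^(n)) for all n ≥ n₀, their diameters tend to 0 as n → ∞, and ⋂_{n≥n₀} X_n(W₂^(n)) consists of a single point. -/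
open Set Filter Topology Matrix

noncomputable section

/-- A set is the union of two nonempty separated sets. -/
def SepUnion {α : Type*} [TopologicalSpace α] (S : Set α) : Prop :=
  ∃ U V : Set α, S = U ∪ V ∧ U.Nonempty ∧ V.Nonempty ∧
    closure U ∩ V = ∅ ∧ U ∩ closure V = ∅

/-- `X` is a cut set of `T`: `X ⊆ T` and `T \ X` is disconnected. -/
def IsCutSet {α : Type*} [TopologicalSpace α] (T X : Set α) : Prop :=
  X ⊆ T ∧ SepUnion (T \ X)

/-- `X` is an irreducible cut set of `T`. -/
def IsIrredCutSet {α : Type*} [TopologicalSpace α] (T X : Set α) : Prop :=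
  IsCutSet T X ∧ ∀ X₀ : Set α, X₀ ⊂ X → closure X₀ ∩ T ⊆ X₀ → ¬ SepUnion (T \ X₀)

/-- The real matrix obtained from an integer matrix. -/
def rmat {d : ℕ} (A : Matrix (Fin d) (Fin d) ℤ) : Matrix (Fin d) (Fin d) ℝ :=
  A.map Int.cast

/-- The real vector obtained from an integer vector. -/
def rvec {d : ℕ} (v : Fin d → ℤ) : Fin d → ℝ := fun i => (v i : ℝ)

/-- The translate `T + v` of `T` by a lattice vector `v`. -/
def trT {d : ℕ} (T : Set (Fin d → ℝ)) (v : Fin d → ℤ) : Set (Fin d → ℝ) :=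
  (fun x => x + rvec v) '' T

/-- Every complex eigenvalue of `A` has modulus `> 1`. -/
def Expanding {d : ℕ} (A : Matrix (Fin d) (Fin d) ℤ) : Prop :=
  ∀ μ : ℂ, Module.End.HasEigenvalue (Matrix.toLin' (A.map (Int.cast : ℤ → ℂ))) μ →
    1 < ‖μ‖

/-- `D` is a complete set of coset representatives of `ℤ^d / A ℤ^d`. -/
def ResidueSystem {d : ℕ} (A : Matrix (Fin d) (Fin d) ℤ) (D : Set (Fin d → ℤ)) : Prop :=
  ∀ x : Fin d → ℤ, ∃! e, e ∈ D ∧ ∃ y : Fin d → ℤ, x = A.mulVec y + e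

/-- `T` is the attractor `T(A,D)`: nonempty, compact, with `A·T = T + D`. -/
def SelfAffine {d : ℕ} (A : Matrix (Fin d) (Fin d) ℤ) (D : Set (Fin d → ℤ))
    (T : Set (Fin d → ℝ)) : Prop :=
  T.Nonempty ∧ IsCompact T ∧
    (rmat A).mulVec '' T = ⋃ e ∈ D, (fun x => x + rvec e) '' T

/-- `T = T(A,D)` is a `ℤ^d`-tile: a self-affine attractor for an expanding integer
matrix and a standard digit set, with nonempty interior, tiling `ℝ^d` by `ℤ^d`. -/
def IsZdTile {d : ℕ} (A : Matrix (Fin d) (Fin d) ℤ) (D : Set (Fin d → ℤ))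
    (T : Set (Fin d → ℝ)) : Prop :=
  Expanding A ∧ ResidueSystem A D ∧ SelfAffine A D T ∧ (interior T).Nonempty ∧
    (⋃ v : Fin d → ℤ, trT T v) = univ ∧
    Pairwise fun v₁ v₂ : Fin d → ℤ => interior (trT T v₁) ∩ trT T v₂ = ∅

/-- `V_n = D + A·D + ⋯ + A^{n-1}·D`, the vertex set of the `n`-th Hata graph. -/
def Vset {d : ℕ} (A : Matrix (Fin d) (Fin d) ℤ) (D : Set (Fin d → ℤ)) (n : ℕ) :
    Set (Fin d → ℤ) :=
  {v | ∃ dig : Fin n → (Fin d → ℤ), (∀ k, dig k ∈ D) ∧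
    v = ∑ k : Fin n, (A ^ (k : ℕ)).mulVec (dig k)}

/-- The set of children `C(U) = A·U + D`. -/
def childSet {d : ℕ} (A : Matrix (Fin d) (Fin d) ℤ) (D : Set (Fin d → ℤ))
    (U : Set (Fin d → ℤ)) : Set (Fin d → ℤ) :=
  {w | ∃ u ∈ U, ∃ e ∈ D, w = A.mulVec u + e}

/-- `X_n(W) = ⋃_{v ∈ W} A^{-n}(T + v)`. -/
def XnSet {d : ℕ} (A : Matrix (Fin d) (Fin d) ℤ) (T : Set (Fin d → ℝ)) (n : ℕ)
    (W : Set (Fin d → ℤ)) : Set (Fin d → ℝ) :=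
  ⋃ v ∈ W, ((rmat A)⁻¹ ^ n).mulVec '' trT T v

/-- The subgraph of the `n`-th Hata graph induced on `W` is connected:
any two vertices of `W` are joined by a path inside `W`, consecutive tiles meeting. -/
def HataConn {d : ℕ} (T : Set (Fin d → ℝ)) (W : Set (Fin d → ℤ)) : Prop :=
  ∀ v ∈ W, ∀ w ∈ W,
    Relation.ReflTransGen (fun a b => a ∈ W ∧ b ∈ W ∧ (trT T a ∩ trT T b).Nonempty) v w


/-! ### Auxiliary lemmas -/

section SpectralAux

attribute [local instance] Matrix.linftyOpNormedRing Matrix.linftyOpNormedAlgebra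

open scoped ENNReal NNReal

variable {d : ℕ} {A : Matrix (Fin d) (Fin d) ℤ}

lemma isUnit_cmat (h : Expanding A) : IsUnit (A.map (Int.cast : ℤ → ℂ)) := by
  by_contra hu
  have h0 : (0:ℂ) ∈ spectrum ℂ (A.map (Int.cast : ℤ → ℂ)) := (spectrum.zero_mem_iff ℂ).mpr hu
  rw [← AlgEquiv.spectrum_eq (Matrix.toLinAlgEquiv' : Matrix (Fin d) (Fin d) ℂ ≃ₐ[ℂ] _)] at h0
  have he : Module.End.HasEigenvalue (Matrix.toLin' (A.map (Int.cast : ℤ → ℂ))) 0 :=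
    Module.End.hasEigenvalue_iff_mem_spectrum.mpr h0
  have := h 0 he
  norm_num at this

lemma cmat_eq_map_rmat : (rmat A).map (Complex.ofReal) = A.map (Int.cast : ℤ → ℂ) := by
  ext i j
  simp [rmat, Matrix.map_apply]

lemma isUnit_det_rmat (h : Expanding A) : IsUnit (rmat A).det := by
  have h1 : IsUnit (A.map (Int.cast : ℤ → ℂ)).det := (Matrix.isUnit_iff_isUnit_det _).mp (isUnit_cmat h)
  rw [← cmat_eq_map_rmat] at h1
  have h2 : ((rmat A).map Complex.ofReal).det = ((rmat A).det : ℂ) := by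
    rw [show ((rmat A).map Complex.ofReal) = Complex.ofRealHom.mapMatrix (rmat A) from rfl,
      ← RingHom.map_det]; rfl
  rw [h2, isUnit_iff_ne_zero] at h1
  simpa [isUnit_iff_ne_zero] using fun hz => h1 (by rw [hz]; simp)

lemma inv_cmat_eq (h : Expanding A) :
    (A.map (Int.cast : ℤ → ℂ))⁻¹ = ((rmat A)⁻¹).map Complex.ofReal := by
  apply Matrix.inv_eq_left_inv
  rw [← cmat_eq_map_rmat,
    show ((rmat A)⁻¹.map Complex.ofReal) = Complex.ofRealHom.mapMatrix ((rmat A)⁻¹) from rfl,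
    show ((rmat A).map Complex.ofReal) = Complex.ofRealHom.mapMatrix (rmat A) from rfl,
    ← _root_.map_mul, Matrix.nonsing_inv_mul _ (isUnit_det_rmat h), _root_.map_one]

lemma spectralRadius_inv_lt_one (h : Expanding A) :
    spectralRadius ℂ ((A.map (Int.cast : ℤ → ℂ))⁻¹) < 1 := by
  set Ac := A.map (Int.cast : ℤ → ℂ) with hAc
  have hu : IsUnit Ac := isUnit_cmat h
  have hbnd : ∀ k ∈ spectrum ℂ (Ac⁻¹), ‖k‖₊ < 1 := by
    intro k hk
    have hinvu : IsUnit (Ac⁻¹) := Matrix.isUnit_nonsing_inv_iff.mpr hu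
    have hk0 : k ≠ 0 := by
      rintro rfl
      exact (spectrum.zero_mem_iff ℂ).mp hk hinvu
    set u := hu.unit with hu'
    have hcu : (↑(u⁻¹) : Matrix (Fin d) (Fin d) ℂ) = Ac⁻¹ := by
      rw [Matrix.coe_units_inv, hu.unit_spec]
    have hk' : (↑(Units.mk0 k hk0) : ℂ) ∈
        spectrum ℂ ((u⁻¹ : (Matrix (Fin d) (Fin d) ℂ)ˣ) : Matrix (Fin d) (Fin d) ℂ) := by
      rw [hcu]; exact hk
    have h2 := spectrum.inv_mem_iff.mp hk'
    simp only [inv_inv, hu.unit_spec, Units.val_inv_eq_inv_val, Units.val_mk0] at h2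
    rw [← AlgEquiv.spectrum_eq (Matrix.toLinAlgEquiv' : Matrix (Fin d) (Fin d) ℂ ≃ₐ[ℂ] _)] at h2
    have he : Module.End.HasEigenvalue (Matrix.toLin' Ac) k⁻¹ :=
      Module.End.hasEigenvalue_iff_mem_spectrum.mpr h2
    have h3 := h _ he
    rw [norm_inv] at h3
    have habs : ‖k‖ < 1 := by
      have h4 : (0:ℝ) < ‖k‖ := norm_pos_iff.mpr hk0
      nlinarith [mul_pos h4 (lt_trans one_pos h3), mul_lt_mul_of_pos_left h3 h4,
        mul_inv_cancel₀ (ne_of_gt h4)]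
    have hn : ‖k‖ < 1 := by exact habs
    exact_mod_cast hn
  rcases Set.eq_empty_or_nonempty (spectrum ℂ (Ac⁻¹)) with hemp | hne
  · rw [spectralRadius]
    simp [hemp]
  · have := spectrum.spectralRadius_lt_of_forall_lt_of_nonempty hne (r := 1) hbnd
    simpa using this

lemma exists_contraction_bound (h : Expanding A) :
    ∃ c : ℕ → ℝ, Tendsto c atTop (𝓝 0) ∧ (∀ n, 0 ≤ c n) ∧
      ∀ (n : ℕ) (x : Fin d → ℝ), ‖((rmat A)⁻¹ ^ n).mulVec x‖ ≤ c n * ‖x‖ := by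
  set a := (A.map (Int.cast : ℤ → ℂ))⁻¹ with ha
  have hg := spectrum.pow_nnnorm_pow_one_div_tendsto_nhds_spectralRadius a
  obtain ⟨r, hr1, hr2⟩ := ENNReal.lt_iff_exists_nnreal_btwn.mp (spectralRadius_inv_lt_one h)
  have hev : ∀ᶠ n : ℕ in atTop, (‖a ^ n‖₊ : ℝ≥0∞) ^ (1/(n:ℝ)) < r := hg.eventually_lt_const hr1
  have hmapnorm : ∀ n : ℕ, ‖a ^ n‖ = ‖(rmat A)⁻¹ ^ n‖ := by
    intro n
    have h1 : a ^ n = ((rmat A)⁻¹ ^ n).map Complex.ofReal := by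
      rw [ha, inv_cmat_eq h,
        show ((rmat A)⁻¹.map Complex.ofReal) = Complex.ofRealHom.mapMatrix ((rmat A)⁻¹) from rfl,
        ← map_pow]
      rfl
    rw [h1, ← coe_nnnorm, ← coe_nnnorm]
    congr 1
    rw [Matrix.linfty_opNNNorm_def, Matrix.linfty_opNNNorm_def]
    simp [Matrix.map_apply]
  refine ⟨fun n => ‖(rmat A)⁻¹ ^ n‖, ?_, fun n => norm_nonneg _, ?_⟩
  · have hb : ∀ᶠ n in atTop, ‖(rmat A)⁻¹ ^ n‖ ≤ (r:ℝ)^n := by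
      filter_upwards [hev, eventually_ge_atTop 1] with n hn hn1
      have hxn : (‖a ^ n‖₊ : ℝ≥0∞) ≤ (r:ℝ≥0∞) ^ (n:ℝ) := by
        have h2 : ((‖a ^ n‖₊ : ℝ≥0∞) ^ (1/(n:ℝ))) ^ (n:ℝ) ≤ (r:ℝ≥0∞) ^ (n:ℝ) :=
          ENNReal.rpow_le_rpow hn.le (Nat.cast_nonneg n)
        rwa [← ENNReal.rpow_mul, one_div, inv_mul_cancel₀
          (by exact_mod_cast Nat.one_le_iff_ne_zero.mp hn1 : (n:ℝ) ≠ 0), ENNReal.rpow_one] at h2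
      rw [ENNReal.rpow_natCast, ← ENNReal.coe_pow, ENNReal.coe_le_coe] at hxn
      have : ‖a ^ n‖ ≤ (r:ℝ)^n := by
        rw [← coe_nnnorm]
        exact_mod_cast hxn
      rwa [hmapnorm n] at this
    exact squeeze_zero' (Eventually.of_forall fun n => norm_nonneg _) hb
      (tendsto_pow_atTop_nhds_zero_of_lt_one r.coe_nonneg (by exact_mod_cast hr2))
  · intro n x
    exact Matrix.linfty_opNorm_mulVec _ _

end SpectralAux

section GeomAux

variable {d : ℕ} {T : Set (Fin d → ℝ)}

lemma isometry_tr (c : Fin d → ℝ) : Isometry (fun x : Fin d → ℝ => x + c) :=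
  Isometry.of_dist_eq fun a b => by simp [dist_eq_norm]

lemma diam_trT (T : Set (Fin d → ℝ)) (v : Fin d → ℤ) :
    Metric.diam (trT T v) = Metric.diam T :=
  (isometry_tr (rvec v)).diam_image T

lemma trT_isCompact (hT : IsCompact T) (v : Fin d → ℤ) : IsCompact (trT T v) :=
  hT.image (continuous_id.add continuous_const)

lemma dist_le_card_mul_diam (hT : IsCompact T) {W : Set (Fin d → ℤ)}
    (hfin : W.Finite) (hWconn : HataConn T W) {K : ℕ} (hK : W.encard ≤ K) :
    ∀ x ∈ ⋃ v ∈ W, trT T v, ∀ y ∈ ⋃ v ∈ W, trT T v, dist x y ≤ K * Metric.diam T := by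
  classical
  haveI : Fintype ↥W := hfin.fintype
  set G : SimpleGraph ↥W :=
    { Adj := fun a b => a ≠ b ∧ (trT T a.1 ∩ trT T b.1).Nonempty
      symm := ⟨fun a b h => ⟨h.1.symm, by rw [Set.inter_comm]; exact h.2⟩⟩
      loopless := ⟨fun a h => h.1 rfl⟩ } with hG
  have hbd : ∀ v : Fin d → ℤ, Bornology.IsBounded (trT T v) :=
    fun v => (trT_isCompact hT v).isBounded
  have key : ∀ (a b : ↥W) (p : G.Walk a b) (x y : Fin d → ℝ),
      x ∈ trT T a.1 → y ∈ trT T b.1 →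
      dist x y ≤ (p.length + 1) * Metric.diam T := by
    intro a b p
    induction p with
    | nil =>
      intro x y hx hy
      have := Metric.dist_le_diam_of_mem (hbd _) hx hy
      rw [diam_trT] at this
      simpa using this
    | @cons u v w h q ih =>
      intro x y hx hy
      obtain ⟨z, hz1, hz2⟩ := h.2
      have h1 : dist x z ≤ Metric.diam T := by
        have := Metric.dist_le_diam_of_mem (hbd _) hx hz1
        rwa [diam_trT] at this
      have h2 : dist z y ≤ (q.length + 1) * Metric.diam T := ih z y hz2 hy
      calc dist x y ≤ dist x z + dist z y := dist_triangle _ _ _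
        _ ≤ Metric.diam T + (q.length + 1) * Metric.diam T := add_le_add h1 h2
        _ = ((SimpleGraph.Walk.cons h q).length + 1) * Metric.diam T := by
            rw [SimpleGraph.Walk.length_cons]
            push_cast
            ring
  have hcard : (Fintype.card ↥W : ℝ) ≤ K := by
    have h1 : W.ncard ≤ K := (Set.encard_le_coe_iff_finite_ncard_le.mp hK).2
    have h2 : Fintype.card ↥W = W.ncard := by
      rw [← Nat.card_coe_set_eq, Nat.card_eq_fintype_card]
    rw [h2]
    exact_mod_cast h1
  intro x hx y hy
  obtain ⟨v, hv, hxv⟩ := Set.mem_iUnion₂.mp hx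
  obtain ⟨w, hw, hyw⟩ := Set.mem_iUnion₂.mp hy
  have hreach : ∀ {b : Fin d → ℤ}, Relation.ReflTransGen
      (fun a b => a ∈ W ∧ b ∈ W ∧ (trT T a ∩ trT T b).Nonempty) v b →
      ∀ hb : b ∈ W, Nonempty (G.Walk ⟨v, hv⟩ ⟨b, hb⟩) := by
    intro b hrel
    induction hrel with
    | refl => exact fun hb => ⟨SimpleGraph.Walk.nil⟩
    | @tail b c hvb hbc ih =>
      intro hc
      obtain ⟨p⟩ := ih hbc.1
      by_cases hbceq : b = c
      · subst hbceq
        exact ⟨p⟩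
      · exact ⟨p.concat ⟨fun hh => hbceq (congrArg Subtype.val hh), hbc.2.2⟩⟩
  obtain ⟨p⟩ := hreach (hWconn v hv w hw) hw
  have hq := p.toPath.2
  have hlen : ((p.toPath : G.Walk ⟨v,hv⟩ ⟨w,hw⟩).length + 1 : ℝ) ≤ K := by
    have := hq.length_lt
    have h3 : ((p.toPath : G.Walk ⟨v,hv⟩ ⟨w,hw⟩).length + 1 : ℝ)
        ≤ (Fintype.card ↥W : ℝ) := by exact_mod_cast this
    exact h3.trans hcard
  calc dist x y ≤ ((p.toPath : G.Walk ⟨v,hv⟩ ⟨w,hw⟩).length + 1) * Metric.diam T :=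
        key _ _ _ x y hxv hyw
    _ ≤ K * Metric.diam T := by
        apply mul_le_mul_of_nonneg_right _ Metric.diam_nonneg
        exact_mod_cast hlen

lemma rvec_child (A : Matrix (Fin d) (Fin d) ℤ) (u e : Fin d → ℤ) :
    rvec (A.mulVec u + e) = (rmat A).mulVec (rvec u) + rvec e := by
  funext i
  simp only [rvec, Pi.add_apply, Matrix.mulVec, dotProduct, rmat, Matrix.map_apply]
  push_cast
  ring

end GeomAux

theorem statement5 {d : ℕ} (A : Matrix (Fin d) (Fin d) ℤ) (D : Set (Fin d → ℤ))
    (T : Set (Fin d → ℝ)) (htile : IsZdTile A D T) (hconn : IsConnected T)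
    (n₀ : ℕ) (hn₀ : 1 ≤ n₀) (K : ℕ) (W₂ : ℕ → Set (Fin d → ℤ))
    (hW2V : ∀ n, n₀ ≤ n → W₂ n ⊆ Vset A D n)
    (hne : ∀ n, n₀ ≤ n → (W₂ n).Nonempty)
    (hW2conn : ∀ n, n₀ ≤ n → HataConn T (W₂ n))
    (hc2 : ∀ n, n₀ ≤ n → W₂ (n + 1) ⊆ childSet A D (W₂ n))
    (hK : ∀ n, n₀ ≤ n → (W₂ n).encard ≤ K) :
    (∀ n, n₀ ≤ n → (XnSet A T n (W₂ n)).Nonempty ∧ IsCompact (XnSet A T n (W₂ n)) ∧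
        IsConnected (XnSet A T n (W₂ n)) ∧
        XnSet A T (n + 1) (W₂ (n + 1)) ⊆ XnSet A T n (W₂ n)) ∧
      Tendsto (fun n => Metric.diam (XnSet A T n (W₂ n))) atTop (𝓝 0) ∧
      ∃ z : Fin d → ℝ, (⋂ n ≥ n₀, XnSet A T n (W₂ n)) = {z} := by
  obtain ⟨hexp, hres, hsa, hintT, htiling, hpair⟩ := htile
  obtain ⟨hTne, hTc, hTeq⟩ := hsa
  have hdet : IsUnit (rmat A).det := isUnit_det_rmat hexp
  obtain ⟨c, hc0, hcnn, hcb⟩ := exists_contraction_bound hexp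
  have hWfin : ∀ n, n₀ ≤ n → (W₂ n).Finite := fun n hn =>
    (Set.encard_le_coe_iff_finite_ncard_le.mp (hK n hn)).1
  have hcont : ∀ n : ℕ, Continuous fun x : Fin d → ℝ => ((rmat A)⁻¹ ^ n).mulVec x := by
    intro n
    have h : (fun x : Fin d → ℝ => ((rmat A)⁻¹ ^ n).mulVec x)
        = ⇑(Matrix.mulVecLin ((rmat A)⁻¹ ^ n)) := by funext x; rfl
    rw [h]
    exact LinearMap.continuous_of_finiteDimensional _
  have htrne : ∀ v : Fin d → ℤ, (trT T v).Nonempty := fun v => hTne.image _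
  have htrconn : ∀ v : Fin d → ℤ, IsConnected (trT T v) := fun v =>
    hconn.image _ (continuous_id.add continuous_const).continuousOn
  have part1 : ∀ n, n₀ ≤ n → (XnSet A T n (W₂ n)).Nonempty ∧ IsCompact (XnSet A T n (W₂ n)) ∧
      IsConnected (XnSet A T n (W₂ n)) ∧
      XnSet A T (n + 1) (W₂ (n + 1)) ⊆ XnSet A T n (W₂ n) := by
    intro n hn
    refine ⟨?_, ?_, ?_, ?_⟩
    · obtain ⟨v, hv⟩ := hne n hn
      obtain ⟨t, ht⟩ := htrne v
      exact ⟨_, Set.mem_biUnion hv ⟨t, ht, rfl⟩⟩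
    · exact (hWfin n hn).isCompact_biUnion fun v _ => (trT_isCompact hTc v).image (hcont n)
    · apply IsConnected.biUnion_of_reflTransGen (hne n hn)
      · intro v _
        exact (htrconn v).image _ (hcont n).continuousOn
      · intro i hi j hj
        refine Relation.ReflTransGen.mono ?_ _ _ (hW2conn n hn i hi j hj)
        intro a b hab
        obtain ⟨z, hz1, hz2⟩ := hab.2.2
        exact ⟨⟨_, ⟨z, hz1, rfl⟩, ⟨z, hz2, rfl⟩⟩, hab.1⟩
    · intro x hx
      obtain ⟨w, hw, hx⟩ := Set.mem_iUnion₂.mp hx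
      obtain ⟨y, hy, rfl⟩ := hx
      obtain ⟨t, ht, rfl⟩ := hy
      obtain ⟨u, hu, e, he, rfl⟩ := hc2 n hn hw
      have h1 : t + rvec e ∈ (rmat A).mulVec '' T := by
        rw [hTeq]
        exact Set.mem_biUnion he ⟨t, ht, rfl⟩
      obtain ⟨s, hs, hseq⟩ := h1
      beta_reduce
      have h2 : t + rvec (A.mulVec u + e) = (rmat A).mulVec (s + rvec u) := by
        rw [rvec_child, Matrix.mulVec_add, hseq]
        abel
      rw [h2]
      have h3 : ((rmat A)⁻¹ ^ (n+1)).mulVec ((rmat A).mulVec (s + rvec u))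
          = ((rmat A)⁻¹ ^ n).mulVec (s + rvec u) := by
        rw [Matrix.mulVec_mulVec, pow_succ, Matrix.mul_assoc,
          Matrix.nonsing_inv_mul _ hdet, Matrix.mul_one]
      rw [h3]
      exact Set.mem_biUnion hu ⟨s + rvec u, ⟨s, hs, rfl⟩, rfl⟩
  have hdiam : ∀ n, n₀ ≤ n →
      Metric.diam (XnSet A T n (W₂ n)) ≤ c n * (K * Metric.diam T) := by
    intro n hn
    apply Metric.diam_le_of_forall_dist_le
      (mul_nonneg (hcnn n) (mul_nonneg (Nat.cast_nonneg K) Metric.diam_nonneg))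
    intro x hx y hy
    obtain ⟨v, hv, x', hx', rfl⟩ := Set.mem_iUnion₂.mp hx
    obtain ⟨w, hw, y', hy', rfl⟩ := Set.mem_iUnion₂.mp hy
    have hd : dist x' y' ≤ K * Metric.diam T :=
      dist_le_card_mul_diam hTc (hWfin n hn) (hW2conn n hn) (hK n hn)
        x' (Set.mem_biUnion hv hx') y' (Set.mem_biUnion hw hy')
    calc dist (((rmat A)⁻¹ ^ n).mulVec x') (((rmat A)⁻¹ ^ n).mulVec y')
        = ‖((rmat A)⁻¹ ^ n).mulVec x' - ((rmat A)⁻¹ ^ n).mulVec y'‖ := dist_eq_norm _ _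
      _ = ‖((rmat A)⁻¹ ^ n).mulVec (x' - y')‖ := by rw [Matrix.mulVec_sub]
      _ ≤ c n * ‖x' - y'‖ := hcb n _
      _ = c n * dist x' y' := by rw [dist_eq_norm]
      _ ≤ c n * (K * Metric.diam T) := mul_le_mul_of_nonneg_left hd (hcnn n)
  have hdiam0 : Tendsto (fun n => Metric.diam (XnSet A T n (W₂ n))) atTop (𝓝 0) := by
    apply squeeze_zero' (Eventually.of_forall fun n => Metric.diam_nonneg)
      (eventually_atTop.mpr ⟨n₀, hdiam⟩)
    simpa using hc0.mul_const ((K : ℝ) * Metric.diam T)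
  refine ⟨part1, hdiam0, ?_⟩
  set Y : ℕ → Set (Fin d → ℝ) := fun k => XnSet A T (n₀ + k) (W₂ (n₀ + k)) with hY
  have hYsub : ∀ k, Y (k+1) ⊆ Y k := by
    intro k
    exact (part1 (n₀ + k) (Nat.le_add_right _ _)).2.2.2
  have hYne : ∀ k, (Y k).Nonempty := fun k => (part1 _ (Nat.le_add_right _ _)).1
  have hYc : ∀ k, IsCompact (Y k) := fun k => (part1 _ (Nat.le_add_right _ _)).2.1
  have hint : (⋂ k, Y k).Nonempty :=
    IsCompact.nonempty_iInter_of_sequence_nonempty_isCompact_isClosed Y hYsub hYne (hYc 0)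
      fun k => (hYc k).isClosed
  obtain ⟨z, hz⟩ := hint
  have hzmem : ∀ n, n₀ ≤ n → z ∈ XnSet A T n (W₂ n) := by
    intro n hn
    have h4 := Set.mem_iInter.mp hz (n - n₀)
    rw [hY] at h4
    simp only at h4
    rwa [Nat.add_sub_cancel' hn] at h4
  refine ⟨z, Set.eq_singleton_iff_unique_mem.mpr ⟨Set.mem_iInter₂.mpr hzmem, ?_⟩⟩
  intro x hx
  have hx' : ∀ n, n₀ ≤ n → x ∈ XnSet A T n (W₂ n) := fun n hn => Set.mem_iInter₂.mp hx n hn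
  have hdist : ∀ n, n₀ ≤ n → dist x z ≤ Metric.diam (XnSet A T n (W₂ n)) := fun n hn =>
    Metric.dist_le_diam_of_mem ((part1 n hn).2.1).isBounded (hx' n hn) (hzmem n hn)
  have hle : dist x z ≤ 0 := ge_of_tendsto hdiam0 (eventually_atTop.mpr ⟨n₀, hdist⟩)
  exact dist_le_zero.mp hle
end
end

section
/- Let n ≥ 4 be even, Q_n(i,j) := [i/n,(i+1)/n] × [j/n,(j+1)/n] for i,j ∈ {0,…,n−1}, and T_n := ⋃_{i,j ∈ {0,…,n−1}, i+j ≡ 0 (mod 2)} Q_n(i,j) ⊆ ℝ². Then T_n is connected, and the set X := {(k/n, (k+1)/n) : k = 1, …, n−2} is an irreducible cut set of T_n of cardinality #X = n − 2. -/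
open Set Filter Topology

/-- The square `Q_n(i,j) = [i/n,(i+1)/n] × [j/n,(j+1)/n]`. -/
def Qsq (n i j : ℕ) : Set (ℝ × ℝ) :=
  Set.Icc ((i : ℝ) / n) (((i : ℝ) + 1) / n) ×ˢ Set.Icc ((j : ℝ) / n) (((j : ℝ) + 1) / n)

/-- The checkerboard set `T_n`. -/
def Tcheck (n : ℕ) : Set (ℝ × ℝ) :=
  ⋃ p ∈ {p : ℕ × ℕ | p.1 < n ∧ p.2 < n ∧ (p.1 + p.2) % 2 = 0}, Qsq n p.1 p.2

namespace Statement7Aux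

open Relation

/-- A preconnected set is not a union of two nonempty separated sets. -/
theorem not_sepUnion {α : Type*} [TopologicalSpace α] {S : Set α}
    (h : IsPreconnected S) : ¬ SepUnion S := by
  rintro ⟨U, V, hS, ⟨u, hu⟩, ⟨v, hv⟩, hUV, hVU⟩
  obtain ⟨z, hzS, hz1, hz2⟩ := h (closure V)ᶜ (closure U)ᶜ
    isClosed_closure.isOpen_compl isClosed_closure.isOpen_compl
    (by
      intro x hx
      rw [hS] at hx
      rcases hx with hx | hx
      · left
        intro hxc
        exact absurd (Set.mem_inter hx hxc) (by rw [hVU]; exact fun h => h)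
      · right
        intro hxc
        exact absurd (Set.mem_inter hxc hx) (by rw [hUV]; exact fun h => h))
    ⟨u, by rw [hS]; exact Or.inl hu, fun hc =>
      absurd (Set.mem_inter hu hc) (by rw [hVU]; exact fun h => h)⟩
    ⟨v, by rw [hS]; exact Or.inr hv, fun hc =>
      absurd (Set.mem_inter hc hv) (by rw [hUV]; exact fun h => h)⟩
  rw [hS] at hzS
  rcases hzS with hz | hz
  · exact hz2 (subset_closure hz)
  · exact hz1 (subset_closure hz)

/-- The cut set `X`. -/
def Xset (n : ℕ) : Set (ℝ × ℝ) :=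
  (fun k : ℕ => (((k : ℝ) / n, ((k : ℝ) + 1) / n) : ℝ × ℝ)) '' {k : ℕ | 1 ≤ k ∧ k ≤ n - 2}

/-- The index set of squares making up `T_n`. -/
def Iset (n : ℕ) : Set (ℕ × ℕ) := {p : ℕ × ℕ | p.1 < n ∧ p.2 < n ∧ (p.1 + p.2) % 2 = 0}

variable {n : ℕ}

lemma npos (hn : 4 ≤ n) : (0 : ℝ) < n := by
  exact_mod_cast Nat.lt_of_lt_of_le (by norm_num) hn

lemma dle (hn : 4 ≤ n) {a b : ℝ} (h : a ≤ b) : a / n ≤ b / n :=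
  (div_le_div_iff_of_pos_right (npos hn)).2 h

lemma dlt (hn : 4 ≤ n) {a b : ℝ} : a / n < b / n ↔ a < b :=
  div_lt_div_iff_of_pos_right (npos hn)

lemma dinjR (hn : 4 ≤ n) {a b : ℝ} (h : a / n = b / n) : a = b := by
  have hp := npos hn
  field_simp at h
  exact h

lemma dinj (hn : 4 ≤ n) {a b : ℕ} (h : (a : ℝ) / n = (b : ℝ) / n) : a = b := by
  exact_mod_cast dinjR hn h

lemma mem_Qsq {z : ℝ × ℝ} {i j : ℕ} :
    z ∈ Qsq n i j ↔ ((i : ℝ) / n ≤ z.1 ∧ z.1 ≤ ((i : ℝ) + 1) / n) ∧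
      ((j : ℝ) / n ≤ z.2 ∧ z.2 ≤ ((j : ℝ) + 1) / n) := by
  rw [Qsq, Set.mem_prod, Set.mem_Icc, Set.mem_Icc]

lemma corner_mem (hn : 4 ≤ n) {a b i j : ℕ} (hia : i ≤ a) (hai : a ≤ i + 1)
    (hjb : j ≤ b) (hbj : b ≤ j + 1) :
    (((a : ℝ) / n, (b : ℝ) / n) : ℝ × ℝ) ∈ Qsq n i j := by
  rw [mem_Qsq]
  refine ⟨⟨dle hn ?_, dle hn ?_⟩, ⟨dle hn ?_, dle hn ?_⟩⟩ <;> push_cast <;>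
    [exact_mod_cast Nat.cast_le.2 hia; exact_mod_cast (by exact_mod_cast hai : (a:ℝ) ≤ i + 1);
     exact_mod_cast Nat.cast_le.2 hjb; exact_mod_cast (by exact_mod_cast hbj : (b:ℝ) ≤ j + 1)]

lemma mem_Xset {z : ℝ × ℝ} :
    z ∈ Xset n ↔ ∃ k : ℕ, 1 ≤ k ∧ k ≤ n - 2 ∧ z = (((k : ℝ) / n, ((k : ℝ) + 1) / n)) := by
  constructor
  · rintro ⟨k, ⟨h1, h2⟩, rfl⟩; exact ⟨k, h1, h2, rfl⟩
  · rintro ⟨k, h1, h2, rfl⟩; exact ⟨k, ⟨h1, h2⟩, rfl⟩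

lemma corner_not_mem_X (hn : 4 ≤ n) {a b : ℕ} (h : ¬(b = a + 1 ∧ 1 ≤ a ∧ a ≤ n - 2)) :
    (((a : ℝ) / n, (b : ℝ) / n) : ℝ × ℝ) ∉ Xset n := by
  rw [mem_Xset]
  rintro ⟨k, hk1, hk2, hk⟩
  rw [Prod.ext_iff] at hk
  obtain ⟨hka, hkb⟩ := hk
  simp only at hka hkb
  have h1 : a = k := dinj hn hka
  have h2 : b = k + 1 := by
    apply dinj hn
    rw [hkb]; push_cast; ring
  exact h ⟨by omega, by omega, by omega⟩

/-- The open square. -/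
def Qo (n i j : ℕ) : Set (ℝ × ℝ) :=
  Set.Ioo ((i : ℝ) / n) (((i : ℝ) + 1) / n) ×ˢ Set.Ioo ((j : ℝ) / n) (((j : ℝ) + 1) / n)

lemma lt_div_succ (hn : 4 ≤ n) (i : ℕ) : (i : ℝ) / n < ((i : ℝ) + 1) / n :=
  (dlt hn).2 (by linarith)

lemma closure_Qo (hn : 4 ≤ n) (i j : ℕ) : closure (Qo n i j) = Qsq n i j := by
  rw [Qo, closure_prod_eq, closure_Ioo (ne_of_lt (lt_div_succ hn i)),
    closure_Ioo (ne_of_lt (lt_div_succ hn j))]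
  rfl

lemma Qo_disjoint_X (hn : 4 ≤ n) {i j : ℕ} {z : ℝ × ℝ} (hz : z ∈ Qo n i j) : z ∉ Xset n := by
  rw [mem_Xset]
  rintro ⟨k, _, _, rfl⟩
  obtain ⟨⟨h1, h2⟩, -⟩ := hz
  have l1 : (i : ℝ) < k := (dlt hn).1 h1
  have l2 : (k : ℝ) < i + 1 := (dlt hn).1 h2
  have : i < k := by exact_mod_cast l1
  have : (k : ℝ) < (i : ℝ) + 1 := l2
  have hk : k < i + 1 := by exact_mod_cast (by push_cast; linarith : (k : ℝ) < ((i + 1 : ℕ) : ℝ))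
  omega

lemma preconn_piece (hn : 4 ≤ n) {F : Set (ℝ × ℝ)} (hF : F ⊆ Xset n) (i j : ℕ) :
    IsPreconnected (Qsq n i j \ F) := by
  have hQo : IsPreconnected (Qo n i j) :=
    ((convex_Ioo _ _).prod (convex_Ioo _ _)).isPreconnected
  apply hQo.subset_closure
  · intro z hz
    exact ⟨by rw [← closure_Qo hn i j]; exact subset_closure hz,
      fun hzF => Qo_disjoint_X hn hz (hF hzF)⟩
  · rw [closure_Qo hn i j]
    exact Set.diff_subset

/-- The chaining relation between squares. -/
def R' (n : ℕ) (F : Set (ℝ × ℝ)) (a b : ℕ × ℕ) : Prop :=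
  ((Qsq n a.1 a.2 \ F) ∩ (Qsq n b.1 b.2 \ F)).Nonempty ∧ a ∈ Iset n ∧ b ∈ Iset n

lemma R'_symm {F : Set (ℝ × ℝ)} : Symmetric (R' n F) := by
  rintro a b ⟨⟨z, hz1, hz2⟩, ha, hb⟩
  exact ⟨⟨z, hz2, hz1⟩, hb, ha⟩

lemma step (hn : 4 ≤ n) {F : Set (ℝ × ℝ)} {a b : ℕ × ℕ}
    (ha : a ∈ Iset n) (hb : b ∈ Iset n) {c : ℝ × ℝ}
    (hc1 : c ∈ Qsq n a.1 a.2) (hc2 : c ∈ Qsq n b.1 b.2) (hcF : c ∉ F) : R' n F a b :=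
  ⟨⟨c, ⟨hc1, hcF⟩, ⟨hc2, hcF⟩⟩, ha, hb⟩

lemma step_corner (hn : 4 ≤ n) {F : Set (ℝ × ℝ)} (hF : F ⊆ Xset n) {a b : ℕ × ℕ}
    (ha : a ∈ Iset n) (hb : b ∈ Iset n) {x y : ℕ}
    (h1 : a.1 ≤ x) (h2 : x ≤ a.1 + 1) (h3 : a.2 ≤ y) (h4 : y ≤ a.2 + 1)
    (h5 : b.1 ≤ x) (h6 : x ≤ b.1 + 1) (h7 : b.2 ≤ y) (h8 : y ≤ b.2 + 1)
    (hX : ¬(y = x + 1 ∧ 1 ≤ x ∧ x ≤ n - 2)) : R' n F a b :=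
  step hn ha hb (corner_mem hn h1 h2 h3 h4) (corner_mem hn h5 h6 h7 h8)
    (fun hc => corner_not_mem_X hn hX (hF hc))

lemma mem_Iset {p : ℕ × ℕ} : p ∈ Iset n ↔ p.1 < n ∧ p.2 < n ∧ (p.1 + p.2) % 2 = 0 :=
  Iff.rfl

lemma lower_chain (hn : 4 ≤ n) {F : Set (ℝ × ℝ)} (hF : F ⊆ Xset n) :
    ∀ m i j : ℕ, i + j ≤ m → j ≤ i → i < n → (i + j) % 2 = 0 →
      ReflTransGen (R' n F) (i, j) (0, 0) := by
  intro m
  induction m with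
  | zero =>
    intro i j hm hji hi hp
    have hi0 : i = 0 := by omega
    have hj0 : j = 0 := by omega
    subst hi0; subst hj0
    exact ReflTransGen.refl
  | succ m ih =>
    intro i j hm hji hi hp
    rcases Nat.eq_zero_or_pos j with hj0 | hj1
    · subst hj0
      rcases Nat.eq_zero_or_pos i with hi0 | hi1
      · subst hi0; exact ReflTransGen.refl
      · obtain ⟨i', rfl⟩ : ∃ i', i = i' + 2 := ⟨i - 2, by omega⟩
        have hA : ((i' + 2 : ℕ), (0 : ℕ)) ∈ Iset n := ⟨by omega, by omega, by omega⟩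
        have hB : ((i' + 1 : ℕ), (1 : ℕ)) ∈ Iset n := ⟨by omega, by omega, by omega⟩
        have hC : ((i' : ℕ), (0 : ℕ)) ∈ Iset n := ⟨by omega, by omega, by omega⟩
        have s1 : R' n F (i' + 2, 0) (i' + 1, 1) :=
          step_corner hn hF hA hB (x := i' + 2) (y := 1)
            (by omega) (by omega) (by omega) (by omega)
            (by omega) (by omega) (by omega) (by omega) (by omega)
        have s2 : R' n F (i' + 1, 1) (i', 0) :=
          step_corner hn hF hB hC (x := i' + 1) (y := 1)
            (by omega) (by omega) (by omega) (by omega)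
            (by omega) (by omega) (by omega) (by omega) (by omega)
        exact ReflTransGen.head s1 (ReflTransGen.head s2
          (ih i' 0 (by omega) (by omega) (by omega) (by omega)))
    · obtain ⟨j', rfl⟩ : ∃ j', j = j' + 1 := ⟨j - 1, by omega⟩
      obtain ⟨i', rfl⟩ : ∃ i', i = i' + 1 := ⟨i - 1, by omega⟩
      have hA : ((i' + 1 : ℕ), (j' + 1 : ℕ)) ∈ Iset n := ⟨by omega, by omega, by omega⟩
      have hB : ((i' : ℕ), (j' : ℕ)) ∈ Iset n := ⟨by omega, by omega, by omega⟩
      have s1 : R' n F (i' + 1, j' + 1) (i', j') :=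
        step_corner hn hF hA hB (x := i' + 1) (y := j' + 1)
          (by omega) (by omega) (by omega) (by omega)
          (by omega) (by omega) (by omega) (by omega) (by omega)
      exact ReflTransGen.head s1
        (ih i' j' (by omega) (by omega) (by omega) (by omega))

lemma upper_chain (hn : 4 ≤ n) {F : Set (ℝ × ℝ)} (hF : F ⊆ Xset n) :
    ∀ m i j : ℕ, i + j ≤ m → i + 2 ≤ j → j < n → (i + j) % 2 = 0 →
      ReflTransGen (R' n F) (i, j) (0, 2) := by
  intro m
  induction m with
  | zero => intro i j hm hij hj hp; omega
  | succ m ih =>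
    intro i j hm hij hj hp
    rcases Nat.eq_zero_or_pos i with hi0 | hi1
    · subst hi0
      rcases Nat.lt_or_ge j 4 with hj4 | hj4
      · have : j = 2 := by omega
        subst this
        exact ReflTransGen.refl
      · obtain ⟨j', rfl⟩ : ∃ j', j = j' + 2 := ⟨j - 2, by omega⟩
        have hA : ((0 : ℕ), (j' + 2 : ℕ)) ∈ Iset n := ⟨by omega, by omega, by omega⟩
        have hB : ((1 : ℕ), (j' + 1 : ℕ)) ∈ Iset n := ⟨by omega, by omega, by omega⟩
        have hC : ((0 : ℕ), (j' : ℕ)) ∈ Iset n := ⟨by omega, by omega, by omega⟩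
        have s1 : R' n F (0, j' + 2) (1, j' + 1) :=
          step_corner hn hF hA hB (x := 1) (y := j' + 2)
            (by omega) (by omega) (by omega) (by omega)
            (by omega) (by omega) (by omega) (by omega) (by omega)
        have s2 : R' n F (1, j' + 1) (0, j') :=
          step_corner hn hF hB hC (x := 1) (y := j' + 1)
            (by omega) (by omega) (by omega) (by omega)
            (by omega) (by omega) (by omega) (by omega) (by omega)
        exact ReflTransGen.head s1 (ReflTransGen.head s2
          (ih 0 j' (by omega) (by omega) (by omega) (by omega)))
    · obtain ⟨i', rfl⟩ : ∃ i', i = i' + 1 := ⟨i - 1, by omega⟩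
      obtain ⟨j', rfl⟩ : ∃ j', j = j' + 1 := ⟨j - 1, by omega⟩
      have hA : ((i' + 1 : ℕ), (j' + 1 : ℕ)) ∈ Iset n := ⟨by omega, by omega, by omega⟩
      have hB : ((i' : ℕ), (j' : ℕ)) ∈ Iset n := ⟨by omega, by omega, by omega⟩
      have s1 : R' n F (i' + 1, j' + 1) (i', j') :=
        step_corner hn hF hA hB (x := i' + 1) (y := j' + 1)
          (by omega) (by omega) (by omega) (by omega)
          (by omega) (by omega) (by omega) (by omega) (by omega)
      exact ReflTransGen.head s1
        (ih i' j' (by omega) (by omega) (by omega) (by omega))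

lemma bridge (hn : 4 ≤ n) {F : Set (ℝ × ℝ)} {k : ℕ} (hk1 : 1 ≤ k) (hk2 : k ≤ n - 2)
    (hkF : (((k : ℝ) / n, ((k : ℝ) + 1) / n) : ℝ × ℝ) ∉ F) :
    R' n F (k, k) (k - 1, k + 1) := by
  obtain ⟨k', rfl⟩ : ∃ k', k = k' + 1 := ⟨k - 1, by omega⟩
  have hA : ((k' + 1 : ℕ), (k' + 1 : ℕ)) ∈ Iset n := ⟨by omega, by omega, by omega⟩
  have hB : ((k' + 1 - 1 : ℕ), (k' + 2 : ℕ)) ∈ Iset n := ⟨by omega, by omega, by omega⟩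
  have hcast : (((k' + 1 : ℕ) : ℝ) / n, (((k' + 2 : ℕ)) : ℝ) / n) =
      ((((k' + 1 : ℕ) : ℝ)) / n, (((k' + 1 : ℕ) : ℝ) + 1) / n) := by
    push_cast; ring_nf
  apply step hn hA hB (c := ((((k' + 1 : ℕ) : ℝ)) / n, (((k' + 2 : ℕ)) : ℝ) / n))
  · exact corner_mem hn (by omega) (by omega) (by omega) (by omega)
  · exact corner_mem hn (by omega) (by omega) (by omega) (by omega)
  · rw [hcast]
    intro hc
    apply hkF
    convert hc using 3 <;> push_cast <;> ring

lemma reach (hn : 4 ≤ n) {F : Set (ℝ × ℝ)} (hF : F ⊆ Xset n) {k : ℕ}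
    (hk1 : 1 ≤ k) (hk2 : k ≤ n - 2)
    (hkF : (((k : ℝ) / n, ((k : ℝ) + 1) / n) : ℝ × ℝ) ∉ F) :
    ∀ p ∈ Iset n, ReflTransGen (R' n F) p (0, 0) := by
  have hsym : Symmetric (ReflTransGen (R' n F)) := by haveI : Std.Symm (R' n F) := ⟨fun a b h => R'_symm h⟩; exact fun a b h => Std.Symm.symm _ _ h
  have hbase : ReflTransGen (R' n F) (0, 2) (0, 0) := by
    -- (0,2) →* (k-1,k+1) →(bridge) (k,k) →* (0,0)
    have h1 : ReflTransGen (R' n F) (k - 1, k + 1) (0, 2) :=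
      upper_chain hn hF (k - 1 + (k + 1)) (k - 1) (k + 1) (le_refl _) (by omega)
        (by omega) (by omega)
    have h2 : ReflTransGen (R' n F) (k, k) (0, 0) :=
      lower_chain hn hF (k + k) k k (le_refl _) (le_refl _) (by omega) (by omega)
    exact (hsym h1).trans ((ReflTransGen.single (R'_symm (bridge hn hk1 hk2 hkF))).trans h2)
  rintro ⟨i, j⟩ ⟨hi, hj, hp⟩
  rcases le_or_gt j i with hji | hij
  · exact lower_chain hn hF (i + j) i j (le_refl _) hji hi hp
  · have hij2 : i + 2 ≤ j := by omega
    exact (upper_chain hn hF (i + j) i j (le_refl _) hij2 hj hp).trans hbase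

lemma Tcheck_eq : Tcheck n = ⋃ p ∈ Iset n, Qsq n p.1 p.2 := rfl

lemma preconn_diff (hn : 4 ≤ n) {F : Set (ℝ × ℝ)} (hF : F ⊆ Xset n) {k : ℕ}
    (hk1 : 1 ≤ k) (hk2 : k ≤ n - 2)
    (hkF : (((k : ℝ) / n, ((k : ℝ) + 1) / n) : ℝ × ℝ) ∉ F) :
    IsPreconnected (Tcheck n \ F) := by
  have heq : Tcheck n \ F = ⋃ p ∈ Iset n, (Qsq n p.1 p.2 \ F) := by
    rw [Tcheck_eq]
    simp only [Set.iUnion_diff]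
  rw [heq]
  apply IsPreconnected.biUnion_of_reflTransGen
  · intro p _
    exact preconn_piece hn hF p.1 p.2
  · intro p hp q hq
    have h1 := reach hn hF hk1 hk2 hkF p hp
    have h2 := reach hn hF hk1 hk2 hkF q hq
    have hsym : Symmetric (ReflTransGen (R' n F)) := by haveI : Std.Symm (R' n F) := ⟨fun a b h => R'_symm h⟩; exact fun a b h => Std.Symm.symm _ _ h
    refine ReflTransGen.mono ?_ _ _ (h1.trans (hsym h2))
    rintro a b ⟨hab, ha, _⟩
    exact ⟨hab, ha⟩

/-! ### The separation -/

def Aset (n : ℕ) : Set (ℝ × ℝ) :=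
  ⋃ p ∈ {p : ℕ × ℕ | p ∈ Iset n ∧ p.2 ≤ p.1}, Qsq n p.1 p.2

def Bset (n : ℕ) : Set (ℝ × ℝ) :=
  ⋃ p ∈ {p : ℕ × ℕ | p ∈ Iset n ∧ p.1 + 2 ≤ p.2}, Qsq n p.1 p.2

lemma isClosed_Qsq (i j : ℕ) : IsClosed (Qsq n i j) :=
  (isClosed_Icc).prod (isClosed_Icc)

lemma finite_index (s : Set (ℕ × ℕ)) (hs : s ⊆ Iset n) : s.Finite := by
  apply Set.Finite.subset ((Set.finite_Iio n).prod (Set.finite_Iio n))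
  intro p hp
  exact ⟨(hs hp).1, (hs hp).2.1⟩

lemma isClosed_Aset : IsClosed (Aset n) := by
  apply Set.Finite.isClosed_biUnion (finite_index _ (fun p hp => hp.1))
  intro p _
  exact isClosed_Qsq p.1 p.2

lemma isClosed_Bset : IsClosed (Bset n) := by
  apply Set.Finite.isClosed_biUnion (finite_index _ (fun p hp => hp.1))
  intro p _
  exact isClosed_Qsq p.1 p.2

lemma T_eq_union : Tcheck n = Aset n ∪ Bset n := by
  rw [Tcheck_eq]
  apply Set.Subset.antisymm
  · intro z hz
    rw [Set.mem_iUnion₂] at hz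
    obtain ⟨p, hp, hzp⟩ := hz
    rcases le_or_gt p.2 p.1 with h | h
    · exact Or.inl (Set.mem_biUnion ⟨hp, h⟩ hzp)
    · have : p.1 + 2 ≤ p.2 := by
        obtain ⟨_, _, hpar⟩ := hp
        omega
      exact Or.inr (Set.mem_biUnion ⟨hp, this⟩ hzp)
  · intro z hz
    rcases hz with hz | hz
    · rw [Aset, Set.mem_iUnion₂] at hz
      obtain ⟨p, hp, hzp⟩ := hz
      exact Set.mem_biUnion hp.1 hzp
    · rw [Bset, Set.mem_iUnion₂] at hz
      obtain ⟨p, hp, hzp⟩ := hz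
      exact Set.mem_biUnion hp.1 hzp

lemma AB_inter_subset (hn : 4 ≤ n) : Aset n ∩ Bset n ⊆ Xset n := by
  rintro z ⟨hzA, hzB⟩
  rw [Aset, Set.mem_iUnion₂] at hzA
  rw [Bset, Set.mem_iUnion₂] at hzB
  obtain ⟨⟨i, j⟩, ⟨⟨hi, hj, hpar⟩, hji⟩, hzq⟩ := hzA
  obtain ⟨⟨i', j'⟩, ⟨⟨hi', hj', hpar'⟩, hij'⟩, hzq'⟩ := hzB
  rw [mem_Qsq] at hzq hzq'
  simp only at hzq hzq' hji hij' hi hj hi' hj' hpar hpar'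
  obtain ⟨⟨a1, a2⟩, ⟨a3, a4⟩⟩ := hzq
  obtain ⟨⟨b1, b2⟩, ⟨b3, b4⟩⟩ := hzq'
  have hp := npos hn
  -- key chain of inequalities
  have c1 : ((j : ℝ) + 1) / n ≤ ((i : ℝ) + 1) / n := by
    apply dle hn
    have : (j : ℝ) ≤ i := by exact_mod_cast hji
    linarith
  have c2 : ((i : ℝ) + 1) / n ≤ z.1 + 1 / n := by
    have : ((i : ℝ) + 1) / n = (i : ℝ) / n + 1 / n := by ring
    linarith [a1]
  have c3 : z.1 + 1 / n ≤ ((i' : ℝ) + 2) / n := by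
    have : ((i' : ℝ) + 2) / n = ((i' : ℝ) + 1) / n + 1 / n := by ring
    linarith [b2]
  have c4 : ((i' : ℝ) + 2) / n ≤ (j' : ℝ) / n := by
    apply dle hn
    have : (i' : ℝ) + 2 ≤ j' := by exact_mod_cast hij'
    linarith
  -- so everything is equal
  have e1 : z.2 = ((j : ℝ) + 1) / n := le_antisymm a4 (by linarith)
  have e2 : z.1 = (i : ℝ) / n := by
    have h1 : ((i : ℝ) + 1) / n = z.1 + 1 / n := le_antisymm c2 (by linarith)
    have : ((i : ℝ) + 1) / n = (i : ℝ) / n + 1 / n := by ring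
    linarith
  have e3 : (j : ℝ) = (i : ℝ) := by
    have : ((j : ℝ) + 1) / n = ((i : ℝ) + 1) / n := le_antisymm c1 (by linarith)
    have := dinjR hn this
    linarith
  have e4 : (i : ℝ) + 1 = (i' : ℝ) + 2 := by
    have : ((i : ℝ) + 1) / n = ((i' : ℝ) + 2) / n := le_antisymm (by linarith) (by linarith)
    exact dinjR hn this
  have e5 : (j' : ℝ) = (i' : ℝ) + 2 := by
    have : ((i' : ℝ) + 2) / n = (j' : ℝ) / n := le_antisymm c4 (by linarith)
    have := dinjR hn this
    linarith
  have hii' : i = i' + 1 := by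
    have h' : (i : ℝ) = (i' : ℝ) + 1 := by linarith
    exact_mod_cast h'
  have hjj' : j' = i' + 2 := by
    have h' : (j' : ℝ) = (i' : ℝ) + 2 := by linarith
    exact_mod_cast h'
  rw [mem_Xset]
  refine ⟨i, by omega, by omega, ?_⟩
  apply Prod.ext
  · exact e2
  · rw [e1, e3]

lemma zero_mem_AdiffX (hn : 4 ≤ n) : ((0 : ℝ), (0 : ℝ)) ∈ Aset n \ Xset n := by
  constructor
  · apply Set.mem_biUnion (x := ((0 : ℕ), (0 : ℕ)))
    · exact ⟨⟨by omega, by omega, by omega⟩, le_refl _⟩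
    · have := corner_mem (n := n) hn (a := 0) (b := 0) (i := 0) (j := 0)
        (by omega) (by omega) (by omega) (by omega)
      simpa using this
  · rw [mem_Xset]
    rintro ⟨k, hk1, hk2, hk⟩
    rw [Prod.ext_iff] at hk
    have hp := npos hn
    have h0 : ((k : ℝ) + 1) / n = 0 := hk.2.symm
    have hpos0 : (0 : ℝ) < ((k : ℝ) + 1) / n :=
      div_pos (by positivity) hp
    linarith

lemma pt2_mem_BdiffX (hn : 4 ≤ n) : ((0 : ℝ), (2 : ℝ) / n) ∈ Bset n \ Xset n := by
  constructor
  · apply Set.mem_biUnion (x := ((0 : ℕ), (2 : ℕ)))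
    · exact ⟨⟨by omega, by omega, by omega⟩, by omega⟩
    · have := corner_mem (n := n) hn (a := 0) (b := 2) (i := 0) (j := 2)
        (by omega) (by omega) (by omega) (by omega)
      simpa using this
  · rw [mem_Xset]
    rintro ⟨k, hk1, hk2, hk⟩
    rw [Prod.ext_iff] at hk
    have hp := npos hn
    have h0 : (k : ℝ) / n = 0 := hk.1.symm
    have hk1' : (0 : ℝ) < (k : ℝ) := by exact_mod_cast hk1
    have hpos0 : (0 : ℝ) < (k : ℝ) / n := div_pos hk1' hp
    linarith

lemma sepUnion_T_diff_X (hn : 4 ≤ n) : SepUnion (Tcheck n \ Xset n) := by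
  refine ⟨Aset n \ Xset n, Bset n \ Xset n, ?_, ⟨_, zero_mem_AdiffX hn⟩,
    ⟨_, pt2_mem_BdiffX hn⟩, ?_, ?_⟩
  · rw [T_eq_union, Set.union_diff_distrib]
  · apply Set.eq_empty_of_forall_notMem
    rintro z ⟨hzc, hzB, hzX⟩
    have hzA : z ∈ Aset n :=
      (isClosed_Aset.closure_subset_iff.2 Set.diff_subset) hzc
    exact hzX (AB_inter_subset hn ⟨hzA, hzB⟩)
  · apply Set.eq_empty_of_forall_notMem
    rintro z ⟨⟨hzA, hzX⟩, hzc⟩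
    have hzB : z ∈ Bset n :=
      (isClosed_Bset.closure_subset_iff.2 Set.diff_subset) hzc
    exact hzX (AB_inter_subset hn ⟨hzA, hzB⟩)

lemma Xset_subset_T (hn : 4 ≤ n) : Xset n ⊆ Tcheck n := by
  rintro z hz
  rw [mem_Xset] at hz
  obtain ⟨k, hk1, hk2, rfl⟩ := hz
  rw [Tcheck_eq]
  apply Set.mem_biUnion (x := ((k : ℕ), (k : ℕ)))
  · exact ⟨by omega, by omega, by omega⟩
  · have := corner_mem (n := n) hn (a := k) (b := k + 1) (i := k) (j := k)
      (by omega) (by omega) (by omega) (by omega)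
    convert this using 2
    push_cast; ring

lemma ncard_X (hn : 4 ≤ n) : (Xset n).ncard = n - 2 := by
  rw [Xset]
  rw [Set.ncard_image_of_injective _ (fun a b hab => by
    have := congrArg Prod.fst hab
    simp only at this
    exact dinj hn this)]
  have : {k : ℕ | 1 ≤ k ∧ k ≤ n - 2} = ↑(Finset.Icc 1 (n - 2)) := by
    ext k; simp [Finset.mem_Icc]
  rw [this, Set.ncard_coe_finset, Nat.card_Icc]
  omega

end Statement7Aux

open Statement7Aux in
theorem statement7 (n : ℕ) (hn : 4 ≤ n) (heven : Even n) :
    IsConnected (Tcheck n) ∧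
      IsIrredCutSet (Tcheck n)
        ((fun k : ℕ => (((k : ℝ) / n, ((k : ℝ) + 1) / n) : ℝ × ℝ)) ''
          {k : ℕ | 1 ≤ k ∧ k ≤ n - 2}) ∧
      ((fun k : ℕ => (((k : ℝ) / n, ((k : ℝ) + 1) / n) : ℝ × ℝ)) ''
          {k : ℕ | 1 ≤ k ∧ k ≤ n - 2}).ncard = n - 2 := by
  have hXeq : (fun k : ℕ => (((k : ℝ) / n, ((k : ℝ) + 1) / n) : ℝ × ℝ)) ''
      {k : ℕ | 1 ≤ k ∧ k ≤ n - 2} = Xset n := rfl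
  rw [hXeq]
  refine ⟨?_, ⟨⟨Xset_subset_T hn, sepUnion_T_diff_X hn⟩, ?_⟩, ncard_X hn⟩
  · constructor
    · exact ⟨((0 : ℝ), (0 : ℝ)), by
        rw [T_eq_union]; exact Or.inl (zero_mem_AdiffX hn).1⟩
    · have h := preconn_diff hn (F := (∅ : Set (ℝ × ℝ))) (Set.empty_subset _)
        (k := 1) (le_refl _) (by omega) (Set.notMem_empty _)
      rwa [Set.diff_empty] at h
  · intro X₀ hX₀ _hcl
    obtain ⟨x, hxX, hxX₀⟩ := Set.exists_of_ssubset hX₀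
    rw [mem_Xset] at hxX
    obtain ⟨k, hk1, hk2, rfl⟩ := hxX
    exact not_sepUnion (preconn_diff hn hX₀.subset hk1 hk2 hxX₀)
end

section
/- Let n ≥ 2 be even, Q_n(i,j) := [i/n,(i+1)/n] × [j/n,(j+1)/n] for i,j ∈ {0,…,n−1}, and T_n := ⋃_{i,j ∈ {0,…,n−1}, i+j ≡ 0 (mod 2)} Q_n(i,j) ⊆ ℝ². Then T_n is connected, and the set Y := {((n−k)/n, k/n) : k = 1, …, n−1} is an irreducible cut set of T_n of cardinality #Y = n − 1. -/
open Set Filter Topology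

open Relation
namespace Check
variable {n : ℕ}

lemma npos (hn : 2 ≤ n) : (0:ℝ) < n := by
  exact_mod_cast Nat.lt_of_lt_of_le (by norm_num) hn

lemma mem_Qsq {p : ℝ × ℝ} {i j : ℕ} :
    p ∈ Qsq n i j ↔ ((i:ℝ)/n ≤ p.1 ∧ p.1 ≤ ((i:ℝ)+1)/n) ∧ ((j:ℝ)/n ≤ p.2 ∧ p.2 ≤ ((j:ℝ)+1)/n) := by
  simp [Qsq, Set.mem_Icc, Prod.le_def]; tauto

lemma corner_mem (hn : 2 ≤ n) {i j a b : ℕ} (ha : i ≤ a) (ha' : a ≤ i+1)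
    (hb : j ≤ b) (hb' : b ≤ j+1) :
    ((a:ℝ)/n, (b:ℝ)/n) ∈ Qsq n i j := by
  have h0 : (0:ℝ) < n := npos hn
  rw [mem_Qsq]
  refine ⟨⟨?_, ?_⟩, ?_, ?_⟩ <;>
    · apply div_le_div_of_nonneg_right ?_ h0.le
      exact_mod_cast by omega

lemma corner_sum_lt (hn : 2 ≤ n) {a b : ℕ} (h : a + b < n) :
    ((a:ℝ)/n) + ((b:ℝ)/n) < 1 := by
  rw [← add_div, div_lt_one (npos hn)]
  exact_mod_cast h

lemma corner_sum_gt (hn : 2 ≤ n) {a b : ℕ} (h : n < a + b) :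
    1 < ((a:ℝ)/n) + ((b:ℝ)/n) := by
  rw [← add_div, lt_div_iff₀ (npos hn), one_mul]
  exact_mod_cast h

lemma Qsq_subset_T {i j : ℕ} (hi : i < n) (hj : j < n) (hp : (i + j) % 2 = 0) :
    Qsq n i j ⊆ Tcheck n := by
  intro x hx
  exact Set.mem_biUnion (show ((i,j) : ℕ×ℕ) ∈ _ from ⟨hi, hj, hp⟩) hx

lemma Qsq_convex {i j : ℕ} : Convex ℝ (Qsq n i j) :=
  (convex_Icc _ _).prod (convex_Icc _ _)

lemma linmap : IsLinearMap ℝ (fun p : ℝ × ℝ => p.1 + p.2) :=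
  ⟨fun x y => by simp [add_add_add_comm], fun c x => by simp [mul_add]⟩

lemma convex_lt : Convex ℝ {p : ℝ × ℝ | p.1 + p.2 < 1} := convex_halfSpace_lt linmap 1

lemma convex_gt : Convex ℝ {p : ℝ × ℝ | 1 < p.1 + p.2} := convex_halfSpace_gt linmap 1

lemma sum_lower {x : ℝ × ℝ} {i j : ℕ} (hx : x ∈ Qsq n i j) :
    ((i:ℝ)+(j:ℝ))/n ≤ x.1 + x.2 := by
  rw [mem_Qsq] at hx
  have := hx.1.1; have := hx.2.1
  rw [add_div]; linarith

lemma sum_upper {x : ℝ × ℝ} {i j : ℕ} (hx : x ∈ Qsq n i j) :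
    x.1 + x.2 ≤ ((i:ℝ)+(j:ℝ)+2)/n := by
  rw [mem_Qsq] at hx
  have := hx.1.2; have := hx.2.2
  have : ((i:ℝ)+(j:ℝ)+2)/n = ((i:ℝ)+1)/n + ((j:ℝ)+1)/n := by ring
  rw [this]; linarith [hx.1.2, hx.2.2]


section chains
set_option linter.unusedSectionVars false
variable {α : Type*} [TopologicalSpace α]


lemma rtg_symm {ι : Type*} {s : ι → Set α} {t : Set ι} {p q : ι}
    (h : ReflTransGen (fun i j => (s i ∩ s j).Nonempty ∧ i ∈ t ∧ j ∈ t) p q) :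
    ReflTransGen (fun i j => (s i ∩ s j).Nonempty ∧ i ∈ t ∧ j ∈ t) q p := by
  have hsymm : Symmetric (fun i j => (s i ∩ s j).Nonempty ∧ i ∈ t ∧ j ∈ t) := by
    rintro i j ⟨⟨x, hx1, hx2⟩, hi, hj⟩
    exact ⟨⟨x, hx2, hx1⟩, hj, hi⟩
  exact @Std.Symm.symm _ _ (@ReflTransGen.stdSymm _ _ ⟨fun a b h => hsymm h⟩) _ _ h

/-- chain down to (0,0) -/
lemma chain_down {s : ℕ × ℕ → Set α} {t : Set (ℕ × ℕ)}
    (hpar : ∀ p ∈ t, (p.1 + p.2) % 2 = 0)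
    (hdown : ∀ i j, (i+1, j+1) ∈ t → (i, j) ∈ t ∧ (s (i,j) ∩ s (i+1,j+1)).Nonempty)
    (hleft : ∀ j, (0, j+2) ∈ t → (1, j+1) ∈ t ∧ (s (0,j+2) ∩ s (1,j+1)).Nonempty)
    (hbot : ∀ i, (i+2, 0) ∈ t → (i+1, 1) ∈ t ∧ (s (i+2,0) ∩ s (i+1,1)).Nonempty) :
    ∀ p ∈ t, ReflTransGen (fun i j => (s i ∩ s j).Nonempty ∧ i ∈ t ∧ j ∈ t) p (0,0) := by
  set R := fun i j : ℕ × ℕ => (s i ∩ s j).Nonempty ∧ i ∈ t ∧ j ∈ t with hR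
  suffices H : ∀ m i j, i + j = m → (i,j) ∈ t → ReflTransGen R (i,j) (0,0) by
    rintro ⟨i, j⟩ hp; exact H (i+j) i j rfl hp
  intro m
  induction m using Nat.strong_induction_on with
  | _ m ih =>
  intro i j hij hp
  match i, j with
  | 0, 0 => exact ReflTransGen.refl
  | 0, 1 => simpa using hpar _ hp
  | 1, 0 => simpa using hpar _ hp
  | 0, (j+2) =>
    obtain ⟨h1, hne1⟩ := hleft j hp
    obtain ⟨h2, hne2⟩ := hdown 0 j h1
    have step1 : ReflTransGen R (0, j+2) (1, j+1) := ReflTransGen.single ⟨hne1, hp, h1⟩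
    have step2 : ReflTransGen R (1, j+1) (0, j) := ReflTransGen.single ⟨(by
        obtain ⟨x, hx1, hx2⟩ := hne2; exact ⟨x, hx2, hx1⟩), h1, h2⟩
    exact (step1.trans step2).trans (ih j (by omega) 0 j (by omega) h2)
  | (i+2), 0 =>
    obtain ⟨h1, hne1⟩ := hbot i hp
    obtain ⟨h2, hne2⟩ := hdown i 0 h1
    have step1 : ReflTransGen R (i+2, 0) (i+1, 1) := ReflTransGen.single ⟨hne1, hp, h1⟩
    have step2 : ReflTransGen R (i+1, 1) (i, 0) := ReflTransGen.single ⟨(by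
        obtain ⟨x, hx1, hx2⟩ := hne2; exact ⟨x, hx2, hx1⟩), h1, h2⟩
    exact (step1.trans step2).trans (ih i (by omega) i 0 (by omega) h2)
  | (i+1), (j+1) =>
    obtain ⟨h2, hne2⟩ := hdown i j hp
    have step : ReflTransGen R (i+1, j+1) (i, j) := ReflTransGen.single ⟨(by
        obtain ⟨x, hx1, hx2⟩ := hne2; exact ⟨x, hx2, hx1⟩), hp, h2⟩
    exact step.trans (ih (i+j) (by omega) i j (by omega) h2)

/-- chain up to (n-1,n-1) -/
lemma chain_up (n : ℕ) (hn : 2 ≤ n) {s : ℕ × ℕ → Set α} {t : Set (ℕ × ℕ)}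
    (ht : ∀ p ∈ t, p.1 < n ∧ p.2 < n ∧ (p.1 + p.2) % 2 = 0)
    (hup : ∀ i j, (i, j) ∈ t → i+1 < n → j+1 < n →
      (i+1, j+1) ∈ t ∧ (s (i,j) ∩ s (i+1,j+1)).Nonempty)
    (hanti : ∀ i j, (i+1, j) ∈ t → j+1 < n →
      (i, j+1) ∈ t ∧ (s (i+1,j) ∩ s (i,j+1)).Nonempty)
    (hanti' : ∀ i j, (i, j+1) ∈ t → i+1 < n →
      (i+1, j) ∈ t ∧ (s (i,j+1) ∩ s (i+1,j)).Nonempty) :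
    ∀ p ∈ t, ReflTransGen (fun i j => (s i ∩ s j).Nonempty ∧ i ∈ t ∧ j ∈ t) p (n-1, n-1) := by
  set R := fun i j : ℕ × ℕ => (s i ∩ s j).Nonempty ∧ i ∈ t ∧ j ∈ t with hR
  suffices H : ∀ m i j, (n-1-i) + (n-1-j) = m → (i,j) ∈ t → ReflTransGen R (i,j) (n-1, n-1) by
    rintro ⟨i, j⟩ hp; exact H _ i j rfl hp
  intro m
  induction m using Nat.strong_induction_on with
  | _ m ih =>
  intro i j hij hp
  have hq := ht _ hp
  have hi : i < n := hq.1
  have hj : j < n := hq.2.1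
  have hparity : (i + j) % 2 = 0 := hq.2.2
  rcases Nat.lt_or_ge i (n-1) with hi1 | hi1
  · rcases Nat.lt_or_ge j (n-1) with hj1 | hj1
    · -- up step
      obtain ⟨h2, hne⟩ := hup i j hp (by omega) (by omega)
      exact (ReflTransGen.single ⟨hne, hp, h2⟩).trans (ih ((n-1-(i+1))+(n-1-(j+1))) (by omega) (i+1) (j+1) rfl h2)
    · -- j = n-1, i < n-1 : i ≤ n-3 by parity
      have hj2 : j = n-1 := by omega
      have hi3 : i + 2 ≤ n - 1 := by omega
      subst hj2
      obtain ⟨j', hj'⟩ : ∃ j', n - 1 = j' + 1 := ⟨n-2, by omega⟩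
      rw [hj'] at hp
      rw [show ((i : ℕ), n-1) = ((i:ℕ), j'+1) from by rw [hj']]
      obtain ⟨h2, hne2⟩ := hanti' i j' hp (by omega)
      obtain ⟨h3, hne3⟩ := hup (i+1) j' h2 (by omega) (by omega)
      have step1 : ReflTransGen R (i, j'+1) (i+1, j') := ReflTransGen.single ⟨hne2, hp, h2⟩
      have step2 : ReflTransGen R (i+1, j') (i+2, j'+1) := ReflTransGen.single ⟨hne3, h2, h3⟩
      exact (step1.trans step2).trans (ih ((n-1-(i+2))+(n-1-(j'+1))) (by omega) (i+2) (j'+1) rfl h3)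
  · have hi2 : i = n-1 := by omega
    rcases Nat.lt_or_ge j (n-1) with hj1 | hj1
    · -- i = n-1, j < n-1
      subst hi2
      obtain ⟨i', hi'⟩ : ∃ i', n - 1 = i' + 1 := ⟨n-2, by omega⟩
      rw [hi'] at hp
      rw [show ((n-1, (j:ℕ)) : ℕ × ℕ) = (i'+1, (j:ℕ)) from by rw [hi']]
      obtain ⟨h2, hne2⟩ := hanti i' j hp (by omega)
      obtain ⟨h3, hne3⟩ := hup i' (j+1) h2 (by omega) (by omega)
      have step1 : ReflTransGen R (i'+1, j) (i', j+1) := ReflTransGen.single ⟨hne2, hp, h2⟩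
      have step2 : ReflTransGen R (i', j+1) (i'+1, j+2) := ReflTransGen.single ⟨hne3, h2, h3⟩
      exact (step1.trans step2).trans (ih ((n-1-(i'+1))+(n-1-(j+2))) (by omega) (i'+1) (j+2) rfl h3)
    · have : i = n-1 ∧ j = n-1 := by omega
      rw [this.1, this.2]

end chains

end Check





namespace Check
variable {n : ℕ}

def ST (n : ℕ) : Set (ℕ × ℕ) := {p : ℕ × ℕ | p.1 < n ∧ p.2 < n ∧ (p.1 + p.2) % 2 = 0}
def SU (n : ℕ) : Set (ℕ × ℕ) := {p : ℕ × ℕ | p.1 + p.2 + 2 ≤ n ∧ (p.1 + p.2) % 2 = 0}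
def SV (n : ℕ) : Set (ℕ × ℕ) :=
  {p : ℕ × ℕ | p.1 < n ∧ p.2 < n ∧ n ≤ p.1 + p.2 ∧ (p.1 + p.2) % 2 = 0}

def sqU (n : ℕ) (p : ℕ × ℕ) : Set (ℝ × ℝ) := Qsq n p.1 p.2 ∩ {x : ℝ × ℝ | x.1 + x.2 < 1}
def sqV (n : ℕ) (p : ℕ × ℕ) : Set (ℝ × ℝ) := Qsq n p.1 p.2 ∩ {x : ℝ × ℝ | 1 < x.1 + x.2}

lemma Tcheck_eq : Tcheck n = ⋃ p ∈ ST n, Qsq n p.1 p.2 := rfl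

/-- T is preconnected -/
lemma T_preconnected (hn : 2 ≤ n) : IsPreconnected (Tcheck n) := by
  rw [Tcheck_eq]
  apply IsPreconnected.biUnion_of_reflTransGen
    (fun p _ => Qsq_convex.isPreconnected)
  have key : ∀ p ∈ ST n, ReflTransGen
      (fun p q : ℕ × ℕ => (Qsq n p.1 p.2 ∩ Qsq n q.1 q.2).Nonempty ∧ p ∈ ST n ∧ q ∈ ST n)
      p (0,0) := by
    apply chain_down (s := fun p => Qsq n p.1 p.2)
    · exact fun p hp => hp.2.2
    · rintro i j ⟨h1, h2, h3⟩
      refine ⟨⟨by omega, by omega, by omega⟩, ⟨((i+1 : ℕ)/(n:ℝ), ((j+1:ℕ))/(n:ℝ)), ?_, ?_⟩⟩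
      · exact corner_mem hn (by omega) (by omega) (by omega) (by omega)
      · exact corner_mem hn (by omega) (by omega) (by omega) (by omega)
    · rintro j ⟨h1, h2, h3⟩
      refine ⟨⟨by omega, by omega, by omega⟩, ⟨((1 : ℕ)/(n:ℝ), ((j+2:ℕ))/(n:ℝ)), ?_, ?_⟩⟩
      · exact corner_mem hn (by omega) (by omega) (by omega) (by omega)
      · exact corner_mem hn (by omega) (by omega) (by omega) (by omega)
    · rintro i ⟨h1, h2, h3⟩
      refine ⟨⟨by omega, by omega, by omega⟩, ⟨((i+2 : ℕ)/(n:ℝ), ((1:ℕ))/(n:ℝ)), ?_, ?_⟩⟩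
      · exact corner_mem hn (by omega) (by omega) (by omega) (by omega)
      · exact corner_mem hn (by omega) (by omega) (by omega) (by omega)
  intro p hp q hq
  exact ReflTransGen.mono (fun a b h => ⟨h.1, h.2.1⟩) _ _ ((key p hp).trans (rtg_symm (key q hq)))

lemma U_eq (hn : 2 ≤ n) (he : n % 2 = 0) :
    Tcheck n ∩ {x : ℝ × ℝ | x.1 + x.2 < 1} = ⋃ p ∈ SU n, sqU n p := by
  apply Set.Subset.antisymm
  · rintro x ⟨hxT, hx1⟩
    rw [Tcheck_eq] at hxT
    obtain ⟨p, hp, hxp⟩ := Set.mem_iUnion₂.mp hxT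
    obtain ⟨h1, h2, h3⟩ := hp
    have hlow := sum_lower (n := n) hxp
    have hsum : p.1 + p.2 + 2 ≤ n := by
      by_contra hcon
      have hge : n ≤ p.1 + p.2 := by omega
      have : (1:ℝ) ≤ ((p.1:ℝ)+(p.2:ℝ))/n := by
        rw [le_div_iff₀ (npos hn), one_mul]; exact_mod_cast hge
      exact absurd (lt_of_le_of_lt (this.trans hlow) hx1) (lt_irrefl _)
    exact Set.mem_biUnion (show p ∈ SU n from ⟨hsum, h3⟩) ⟨hxp, hx1⟩
  · rintro x hx
    obtain ⟨p, hp, hxp, hx1⟩ := Set.mem_iUnion₂.mp hx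
    obtain ⟨hs, hpar⟩ := hp
    exact ⟨Qsq_subset_T (by omega : p.1 < n) (by omega : p.2 < n) hpar hxp, hx1⟩

lemma V_eq (hn : 2 ≤ n) (he : n % 2 = 0) :
    Tcheck n ∩ {x : ℝ × ℝ | 1 < x.1 + x.2} = ⋃ p ∈ SV n, sqV n p := by
  apply Set.Subset.antisymm
  · rintro x ⟨hxT, hx1⟩
    rw [Tcheck_eq] at hxT
    obtain ⟨p, hp, hxp⟩ := Set.mem_iUnion₂.mp hxT
    obtain ⟨h1, h2, h3⟩ := hp
    have hup := sum_upper (n := n) hxp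
    have hsum : n ≤ p.1 + p.2 := by
      by_contra hcon
      have hle : p.1 + p.2 + 2 ≤ n := by omega
      have : ((p.1:ℝ)+(p.2:ℝ)+2)/n ≤ 1 := by
        rw [div_le_one (npos hn)]; exact_mod_cast hle
      exact absurd (lt_of_lt_of_le hx1 (hup.trans this)) (lt_irrefl _)
    exact Set.mem_biUnion (show p ∈ SV n from ⟨h1, h2, hsum, h3⟩) ⟨hxp, hx1⟩
  · rintro x hx
    obtain ⟨p, hp, hxp, hx1⟩ := Set.mem_iUnion₂.mp hx
    exact ⟨Qsq_subset_T hp.1 hp.2.1 hp.2.2.2 hxp, hx1⟩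

lemma U_preconnected (hn : 2 ≤ n) (he : n % 2 = 0) :
    IsPreconnected (Tcheck n ∩ {x : ℝ × ℝ | x.1 + x.2 < 1}) := by
  rw [U_eq hn he]
  apply IsPreconnected.biUnion_of_reflTransGen
    (fun p _ => (Qsq_convex.inter convex_lt).isPreconnected)
  have key : ∀ p ∈ SU n, ReflTransGen
      (fun p q : ℕ × ℕ => (sqU n p ∩ sqU n q).Nonempty ∧ p ∈ SU n ∧ q ∈ SU n) p (0,0) := by
    apply chain_down (s := sqU n)
    · exact fun p hp => hp.2
    · rintro i j ⟨h1, h2⟩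
      refine ⟨⟨by omega, by omega⟩, ⟨((i+1 : ℕ)/(n:ℝ), ((j+1:ℕ))/(n:ℝ)), ?_, ?_⟩⟩ <;>
        exact ⟨corner_mem hn (by omega) (by omega) (by omega) (by omega),
          corner_sum_lt hn (by omega)⟩
    · rintro j ⟨h1, h2⟩
      refine ⟨⟨by omega, by omega⟩, ⟨((1 : ℕ)/(n:ℝ), ((j+2:ℕ))/(n:ℝ)), ?_, ?_⟩⟩ <;>
        exact ⟨corner_mem hn (by omega) (by omega) (by omega) (by omega),
          corner_sum_lt hn (by omega)⟩
    · rintro i ⟨h1, h2⟩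
      refine ⟨⟨by omega, by omega⟩, ⟨((i+2 : ℕ)/(n:ℝ), ((1:ℕ))/(n:ℝ)), ?_, ?_⟩⟩ <;>
        exact ⟨corner_mem hn (by omega) (by omega) (by omega) (by omega),
          corner_sum_lt hn (by omega)⟩
  intro p hp q hq
  exact ReflTransGen.mono (fun a b h => ⟨h.1, h.2.1⟩) _ _ ((key p hp).trans (rtg_symm (key q hq)))

lemma V_preconnected (hn : 2 ≤ n) (he : n % 2 = 0) :
    IsPreconnected (Tcheck n ∩ {x : ℝ × ℝ | 1 < x.1 + x.2}) := by
  rw [V_eq hn he]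
  apply IsPreconnected.biUnion_of_reflTransGen
    (fun p _ => (Qsq_convex.inter convex_gt).isPreconnected)
  have key : ∀ p ∈ SV n, ReflTransGen
      (fun p q : ℕ × ℕ => (sqV n p ∩ sqV n q).Nonempty ∧ p ∈ SV n ∧ q ∈ SV n)
      p (n-1, n-1) := by
    apply chain_up n hn (s := sqV n)
    · exact fun p hp => ⟨hp.1, hp.2.1, hp.2.2.2⟩
    · rintro i j ⟨h1, h2, h3, h4⟩ hi hj
      refine ⟨⟨by omega, by omega, by omega, by omega⟩,
        ⟨((i+1 : ℕ)/(n:ℝ), ((j+1:ℕ))/(n:ℝ)), ?_, ?_⟩⟩ <;>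
        exact ⟨corner_mem hn (by omega) (by omega) (by omega) (by omega),
          corner_sum_gt hn (by omega)⟩
    · rintro i j ⟨h1, h2, h3, h4⟩ hj
      refine ⟨⟨by omega, by omega, by omega, by omega⟩,
        ⟨((i+1 : ℕ)/(n:ℝ), ((j+1:ℕ))/(n:ℝ)), ?_, ?_⟩⟩ <;>
        exact ⟨corner_mem hn (by omega) (by omega) (by omega) (by omega),
          corner_sum_gt hn (by omega)⟩
    · rintro i j ⟨h1, h2, h3, h4⟩ hi
      refine ⟨⟨by omega, by omega, by omega, by omega⟩,
        ⟨((i+1 : ℕ)/(n:ℝ), ((j+1:ℕ))/(n:ℝ)), ?_, ?_⟩⟩ <;>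
        exact ⟨corner_mem hn (by omega) (by omega) (by omega) (by omega),
          corner_sum_gt hn (by omega)⟩
  intro p hp q hq
  exact ReflTransGen.mono (fun a b h => ⟨h.1, h.2.1⟩) _ _ ((key p hp).trans (rtg_symm (key q hq)))

end Check

namespace Check
variable {n : ℕ}

noncomputable def fY (n k : ℕ) : ℝ × ℝ := (((n : ℝ) - (k : ℝ)) / n, (k : ℝ) / n)

def Ycut (n : ℕ) : Set (ℝ × ℝ) := fY n '' {k : ℕ | 1 ≤ k ∧ k ≤ n - 1}

lemma fY_cast {k : ℕ} (hk : k ≤ n) : fY n k = (((n - k : ℕ) : ℝ) / n, (k : ℝ) / n) := by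
  simp [fY, Nat.cast_sub hk]

lemma Y_subset_T (hn : 2 ≤ n) (he : n % 2 = 0) : Ycut n ⊆ Tcheck n := by
  rintro y ⟨k, ⟨hk1, hk2⟩, rfl⟩
  rw [fY_cast (by omega)]
  refine Qsq_subset_T (i := n - k) (j := k) (by omega) (by omega) (by omega) ?_
  exact corner_mem hn (le_refl _) (by omega) (le_refl _) (by omega)

lemma Y_sum (hn : 2 ≤ n) {y : ℝ × ℝ} (hy : y ∈ Ycut n) : y.1 + y.2 = 1 := by
  obtain ⟨k, ⟨hk1, hk2⟩, rfl⟩ := hy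
  have h0 : (n:ℝ) ≠ 0 := (npos hn).ne'
  simp only [fY]
  field_simp
  ring

lemma T_line_subset_Y (hn : 2 ≤ n) (he : n % 2 = 0) :
    Tcheck n ∩ {x : ℝ × ℝ | x.1 + x.2 = 1} ⊆ Ycut n := by
  rintro x ⟨hxT, hx1⟩
  simp only [Set.mem_setOf_eq] at hx1
  rw [Tcheck_eq] at hxT
  obtain ⟨p, hp, hxp⟩ := Set.mem_iUnion₂.mp hxT
  obtain ⟨h1, h2, h3⟩ := hp
  have h0 : (0:ℝ) < n := npos hn
  have hlow := sum_lower (n := n) hxp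
  have hup := sum_upper (n := n) hxp
  rw [hx1] at hlow hup
  have hle : p.1 + p.2 ≤ n := by
    have : ((p.1:ℝ) + p.2) ≤ n := by
      rw [div_le_one h0] at hlow; exact hlow
    exact_mod_cast this
  have hge : n ≤ p.1 + p.2 + 2 := by
    have : (n:ℝ) ≤ (p.1:ℝ) + p.2 + 2 := by
      rw [one_le_div h0] at hup; exact hup
    exact_mod_cast this
  rw [mem_Qsq] at hxp
  rcases (by omega : p.1 + p.2 = n ∨ p.1 + p.2 + 2 = n) with hc | hc
  · -- x = (p.1/n, p.2/n), k = p.2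
    have hsum : ((p.1:ℝ)/n) + ((p.2:ℝ)/n) = 1 := by
      rw [← add_div, div_eq_one_iff_eq h0.ne']
      exact_mod_cast hc
    have e1 : x.1 = (p.1:ℝ)/n := by linarith [hxp.1.1, hxp.2.1]
    have e2 : x.2 = (p.2:ℝ)/n := by linarith [hxp.1.1, hxp.2.1]
    refine ⟨p.2, ⟨by omega, by omega⟩, ?_⟩
    rw [fY_cast (by omega)]
    have : n - p.2 = p.1 := by omega
    rw [this, Prod.ext_iff]
    exact ⟨e1.symm, e2.symm⟩
  · -- x = ((p.1+1)/n, (p.2+1)/n), k = p.2 + 1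
    have hsum : (((p.1:ℝ)+1)/n) + (((p.2:ℝ)+1)/n) = 1 := by
      rw [← add_div, div_eq_one_iff_eq h0.ne']
      have := congrArg (Nat.cast (R := ℝ)) hc
      push_cast at this
      linarith
    have e1 : x.1 = ((p.1:ℝ)+1)/n := by linarith [hxp.1.2, hxp.2.2]
    have e2 : x.2 = ((p.2:ℝ)+1)/n := by linarith [hxp.1.2, hxp.2.2]
    refine ⟨p.2 + 1, ⟨by omega, by omega⟩, ?_⟩
    rw [fY_cast (by omega)]
    have : n - (p.2 + 1) = p.1 + 1 := by omega
    rw [this, Prod.ext_iff]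
    constructor
    · rw [e1]; push_cast; ring_nf
    · rw [e2]; push_cast; ring_nf

lemma mem_closure_U (hn : 2 ≤ n) (he : n % 2 = 0) {k : ℕ} (hk1 : 1 ≤ k) (hk2 : k ≤ n - 1) :
    fY n k ∈ closure (Tcheck n ∩ {x : ℝ × ℝ | x.1 + x.2 < 1}) := by
  have h0 : (0:ℝ) < n := npos hn
  have hN : (n:ℝ) ≠ 0 := h0.ne'
  set c1 : ℝ := ((n:ℝ) - k)/n with hc1
  set c2 : ℝ := (k:ℝ)/n with hc2
  have hTend : Tendsto (fun t : ℝ => ((c1 - t, c2 - t) : ℝ × ℝ)) (𝓝[>] (0:ℝ)) (𝓝 (fY n k)) := by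
    have : Tendsto (fun t : ℝ => ((c1 - t, c2 - t) : ℝ × ℝ)) (𝓝 (0:ℝ)) (𝓝 ((c1 - 0, c2 - 0) : ℝ × ℝ)) := by
      exact ((continuous_const.sub continuous_id).prodMk (continuous_const.sub continuous_id)).tendsto 0
    simpa [fY] using this.mono_left nhdsWithin_le_nhds
  refine mem_closure_of_tendsto hTend ?_
  filter_upwards [Ioo_mem_nhdsGT_of_mem (Set.left_mem_Ico.mpr (by positivity : (0:ℝ) < 1/n))]
    with t ht
  obtain ⟨ht0, htn⟩ := ht
  have hcast1 : ((n - k - 1 : ℕ) : ℝ) = (n:ℝ) - (k:ℝ) - 1 := by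
    have h' : n - k - 1 = n - (k+1) := by omega
    rw [h', Nat.cast_sub (by omega)]; push_cast; ring
  have hcast2 : ((k - 1 : ℕ) : ℝ) = (k:ℝ) - 1 := by
    rw [Nat.cast_sub (by omega)]; push_cast; ring
  constructor
  · refine Qsq_subset_T (i := n - k - 1) (j := k - 1) (by omega) (by omega) (by omega) ?_
    rw [mem_Qsq, hcast1, hcast2]
    try dsimp only
    have e1 : ((n:ℝ) - k - 1)/n = c1 - 1/n := by rw [hc1]; ring
    have e2 : ((n:ℝ) - k - 1 + 1)/n = c1 := by rw [hc1]; ring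
    have e3 : ((k:ℝ) - 1)/n = c2 - 1/n := by rw [hc2]; ring
    have e4 : ((k:ℝ) - 1 + 1)/n = c2 := by rw [hc2]; ring
    rw [e1, e2, e3, e4]
    refine ⟨⟨by linarith, by linarith⟩, by linarith, by linarith⟩
  · simp only [Set.mem_setOf_eq]
    try dsimp only
    have hsum : c1 + c2 = 1 := by rw [hc1, hc2]; field_simp; ring
    linarith

lemma mem_closure_V (hn : 2 ≤ n) (he : n % 2 = 0) {k : ℕ} (hk1 : 1 ≤ k) (hk2 : k ≤ n - 1) :
    fY n k ∈ closure (Tcheck n ∩ {x : ℝ × ℝ | 1 < x.1 + x.2}) := by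
  have h0 : (0:ℝ) < n := npos hn
  have hN : (n:ℝ) ≠ 0 := h0.ne'
  set c1 : ℝ := ((n:ℝ) - k)/n with hc1
  set c2 : ℝ := (k:ℝ)/n with hc2
  have hTend : Tendsto (fun t : ℝ => ((c1 + t, c2 + t) : ℝ × ℝ)) (𝓝[>] (0:ℝ)) (𝓝 (fY n k)) := by
    have : Tendsto (fun t : ℝ => ((c1 + t, c2 + t) : ℝ × ℝ)) (𝓝 (0:ℝ)) (𝓝 ((c1 + 0, c2 + 0) : ℝ × ℝ)) := by
      exact ((continuous_const.add continuous_id).prodMk (continuous_const.add continuous_id)).tendsto 0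
    simpa [fY] using this.mono_left nhdsWithin_le_nhds
  refine mem_closure_of_tendsto hTend ?_
  filter_upwards [Ioo_mem_nhdsGT_of_mem (Set.left_mem_Ico.mpr (by positivity : (0:ℝ) < 1/n))]
    with t ht
  obtain ⟨ht0, htn⟩ := ht
  have hcast1 : ((n - k : ℕ) : ℝ) = (n:ℝ) - (k:ℝ) := by
    rw [Nat.cast_sub (by omega)]
  constructor
  · refine Qsq_subset_T (i := n - k) (j := k) (by omega) (by omega) (by omega) ?_
    rw [mem_Qsq, hcast1]
    try dsimp only
    have e2 : ((n:ℝ) - k + 1)/n = c1 + 1/n := by rw [hc1]; ring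
    have e4 : ((k:ℝ) + 1)/n = c2 + 1/n := by rw [hc2]; ring
    rw [e2, e4]
    refine ⟨⟨by rw [hc1]; linarith, by linarith⟩, by rw [hc2]; linarith, by linarith⟩
  · simp only [Set.mem_setOf_eq]
    try dsimp only
    have hsum : c1 + c2 = 1 := by rw [hc1, hc2]; field_simp; ring
    linarith


end Check

lemma not_sepUnion_of_preconnected {α : Type*} [TopologicalSpace α] {W : Set α}
    (h : IsPreconnected W) : ¬ SepUnion W := by
  rintro ⟨A, B, hWeq, ⟨a, ha⟩, ⟨b, hb⟩, hAB, hBA⟩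
  rw [isPreconnected_closed_iff] at h
  obtain ⟨x, hxW, hxA, hxB⟩ := h (closure A) (closure B) isClosed_closure isClosed_closure
    (by rw [hWeq]; exact Set.union_subset_union subset_closure subset_closure)
    ⟨a, by rw [hWeq]; exact Or.inl ha, subset_closure ha⟩
    ⟨b, by rw [hWeq]; exact Or.inr hb, subset_closure hb⟩
  rw [hWeq] at hxW
  rcases hxW with hx | hx
  · exact Set.eq_empty_iff_forall_notMem.mp hBA x ⟨hx, hxB⟩
  · exact Set.eq_empty_iff_forall_notMem.mp hAB x ⟨hxA, hx⟩

namespace Check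

lemma sum_line_closed : IsClosed {x : ℝ × ℝ | x.1 + x.2 ≤ 1} :=
  isClosed_le (continuous_fst.add continuous_snd) continuous_const

lemma sum_line_closed' : IsClosed {x : ℝ × ℝ | 1 ≤ x.1 + x.2} :=
  isClosed_le continuous_const (continuous_fst.add continuous_snd)

variable {n : ℕ}

lemma U_nonempty (hn : 2 ≤ n) : (Tcheck n ∩ {x : ℝ × ℝ | x.1 + x.2 < 1}).Nonempty := by
  refine ⟨(((0:ℕ):ℝ)/n, ((0:ℕ):ℝ)/n), ?_, ?_⟩
  · exact Qsq_subset_T (i := 0) (j := 0) (by omega) (by omega) (by omega)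
      (corner_mem hn le_rfl (by omega) le_rfl (by omega))
  · exact corner_sum_lt hn (by omega)

lemma V_nonempty (hn : 2 ≤ n) (he : n % 2 = 0) :
    (Tcheck n ∩ {x : ℝ × ℝ | 1 < x.1 + x.2}).Nonempty := by
  refine ⟨(((n:ℕ):ℝ)/n, ((n:ℕ):ℝ)/n), ?_, ?_⟩
  · exact Qsq_subset_T (i := n-1) (j := n-1) (by omega) (by omega) (by omega)
      (corner_mem hn (by omega) (by omega) (by omega) (by omega))
  · exact corner_sum_gt hn (by omega)

lemma T_diff_Y (hn : 2 ≤ n) (he : n % 2 = 0) :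
    Tcheck n \ Ycut n =
      (Tcheck n ∩ {x : ℝ × ℝ | x.1 + x.2 < 1}) ∪ (Tcheck n ∩ {x : ℝ × ℝ | 1 < x.1 + x.2}) := by
  ext x
  constructor
  · rintro ⟨hxT, hxY⟩
    rcases lt_trichotomy (x.1 + x.2) 1 with h | h | h
    · exact Or.inl ⟨hxT, h⟩
    · exact absurd (T_line_subset_Y hn he ⟨hxT, h⟩) hxY
    · exact Or.inr ⟨hxT, h⟩
  · rintro (⟨hxT, h⟩ | ⟨hxT, h⟩) <;>
      exact ⟨hxT, fun hxY => by
        have := Y_sum hn hxY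
        simp only [Set.mem_setOf_eq] at h
        linarith⟩

lemma T_diff_X₀ (hn : 2 ≤ n) (he : n % 2 = 0) {X₀ : Set (ℝ × ℝ)} (hX₀ : X₀ ⊆ Ycut n) :
    Tcheck n \ X₀ =
      (Tcheck n ∩ {x : ℝ × ℝ | x.1 + x.2 < 1}) ∪ (Tcheck n ∩ {x : ℝ × ℝ | 1 < x.1 + x.2})
        ∪ (Ycut n \ X₀) := by
  ext x
  constructor
  · rintro ⟨hxT, hxX⟩
    rcases lt_trichotomy (x.1 + x.2) 1 with h | h | h
    · exact Or.inl (Or.inl ⟨hxT, h⟩)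
    · exact Or.inr ⟨T_line_subset_Y hn he ⟨hxT, h⟩, hxX⟩
    · exact Or.inl (Or.inr ⟨hxT, h⟩)
  · rintro ((⟨hxT, h⟩ | ⟨hxT, h⟩) | ⟨hxY, hxX⟩)
    · refine ⟨hxT, fun hxX => ?_⟩
      have := Y_sum hn (hX₀ hxX)
      simp only [Set.mem_setOf_eq] at h
      linarith
    · refine ⟨hxT, fun hxX => ?_⟩
      have := Y_sum hn (hX₀ hxX)
      simp only [Set.mem_setOf_eq] at h
      linarith
    · exact ⟨Y_subset_T hn he hxY, hxX⟩

end Check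


theorem statement8 (n : ℕ) (hn : 2 ≤ n) (heven : Even n) :
    IsConnected (Tcheck n) ∧
      IsIrredCutSet (Tcheck n)
        ((fun k : ℕ => ((((n : ℝ) - (k : ℝ)) / n, (k : ℝ) / n) : ℝ × ℝ)) ''
          {k : ℕ | 1 ≤ k ∧ k ≤ n - 1}) ∧
      ((fun k : ℕ => ((((n : ℝ) - (k : ℝ)) / n, (k : ℝ) / n) : ℝ × ℝ)) ''
          {k : ℕ | 1 ≤ k ∧ k ≤ n - 1}).ncard = n - 1 := by
  have he : n % 2 = 0 := Nat.even_iff.mp heven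
  have h0 : (0:ℝ) < n := Check.npos hn
  have hYdef : ((fun k : ℕ => ((((n : ℝ) - (k : ℝ)) / n, (k : ℝ) / n) : ℝ × ℝ)) ''
      {k : ℕ | 1 ≤ k ∧ k ≤ n - 1}) = Check.Ycut n := rfl
  rw [hYdef]
  have hclU : closure (Tcheck n ∩ {x : ℝ × ℝ | x.1 + x.2 < 1}) ⊆ {x : ℝ × ℝ | x.1 + x.2 ≤ 1} :=
    closure_minimal (fun x hx => show x.1 + x.2 ≤ 1 from le_of_lt hx.2) Check.sum_line_closed
  have hclV : closure (Tcheck n ∩ {x : ℝ × ℝ | 1 < x.1 + x.2}) ⊆ {x : ℝ × ℝ | 1 ≤ x.1 + x.2} :=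
    closure_minimal (fun x hx => show 1 ≤ x.1 + x.2 from le_of_lt hx.2) Check.sum_line_closed'
  refine ⟨⟨?_, Check.T_preconnected hn⟩, ⟨⟨Check.Y_subset_T hn he, ?_⟩, ?_⟩, ?_⟩
  · obtain ⟨x, hx, _⟩ := Check.U_nonempty hn
    exact ⟨x, hx⟩
  · -- SepUnion (T \ Y)
    refine ⟨_, _, Check.T_diff_Y hn he, Check.U_nonempty hn, Check.V_nonempty hn he, ?_, ?_⟩
    · apply Set.eq_empty_iff_forall_notMem.mpr
      rintro x ⟨hxc, hxV⟩
      have h1 := hclU hxc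
      have h2 := hxV.2
      simp only [Set.mem_setOf_eq] at h1 h2
      linarith
    · apply Set.eq_empty_iff_forall_notMem.mpr
      rintro x ⟨hxU, hxc⟩
      have h1 := hclV hxc
      have h2 := hxU.2
      simp only [Set.mem_setOf_eq] at h1 h2
      linarith
  · -- irreducible
    intro X₀ hss _hcl
    obtain ⟨y, hyY, hyX⟩ := Set.exists_of_ssubset hss
    obtain ⟨k, ⟨hk1, hk2⟩, hyk⟩ := hyY
    apply not_sepUnion_of_preconnected
    have hyU : y ∈ closure (Tcheck n ∩ {x : ℝ × ℝ | x.1 + x.2 < 1}) := by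
      rw [← hyk]; exact Check.mem_closure_U hn he hk1 hk2
    have hyV : y ∈ closure (Tcheck n ∩ {x : ℝ × ℝ | 1 < x.1 + x.2}) := by
      rw [← hyk]; exact Check.mem_closure_V hn he hk1 hk2
    have hUp : IsPreconnected ((Tcheck n ∩ {x : ℝ × ℝ | x.1 + x.2 < 1}) ∪ {y}) :=
      (Check.U_preconnected hn he).subset_closure Set.subset_union_left
        (Set.union_subset subset_closure (Set.singleton_subset_iff.mpr hyU))
    have hVp : IsPreconnected ((Tcheck n ∩ {x : ℝ × ℝ | 1 < x.1 + x.2}) ∪ {y}) :=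
      (Check.V_preconnected hn he).subset_closure Set.subset_union_left
        (Set.union_subset subset_closure (Set.singleton_subset_iff.mpr hyV))
    have hC : IsPreconnected (((Tcheck n ∩ {x : ℝ × ℝ | x.1 + x.2 < 1}) ∪ {y}) ∪
        ((Tcheck n ∩ {x : ℝ × ℝ | 1 < x.1 + x.2}) ∪ {y})) :=
      IsPreconnected.union y (Set.mem_union_right _ rfl) (Set.mem_union_right _ rfl) hUp hVp
    have hX₀Y : X₀ ⊆ Check.Ycut n := hss.subset
    have hWeq := Check.T_diff_X₀ hn he hX₀Y
    have hyYX : y ∈ Check.Ycut n \ X₀ := ⟨⟨k, ⟨hk1, hk2⟩, hyk⟩, hyX⟩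
    apply hC.subset_closure
    · rw [hWeq]
      rintro x ((hx | hx) | (hx | hx))
      · exact Or.inl (Or.inl hx)
      · rw [Set.mem_singleton_iff] at hx; subst hx; exact Or.inr hyYX
      · exact Or.inl (Or.inr hx)
      · rw [Set.mem_singleton_iff] at hx; subst hx; exact Or.inr hyYX
    · rw [hWeq]
      rintro x ((hx | hx) | hx)
      · exact subset_closure (Or.inl (Or.inl hx))
      · exact subset_closure (Or.inr (Or.inl hx))
      · obtain ⟨⟨k', ⟨hk1', hk2'⟩, hxk⟩, _⟩ := hx
        have : x ∈ closure (Tcheck n ∩ {z : ℝ × ℝ | z.1 + z.2 < 1}) := by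
          rw [← hxk]; exact Check.mem_closure_U hn he hk1' hk2'
        exact closure_mono (fun z hz => Or.inl (Or.inl hz)) this
  · -- cardinality
    rw [hYdef.symm, Set.ncard_image_of_injOn ?_]
    · have hIcc : {k : ℕ | 1 ≤ k ∧ k ≤ n - 1} = ↑(Finset.Icc 1 (n - 1)) := by
        ext k; simp [Finset.mem_Icc]
      rw [hIcc, Set.ncard_coe_finset, Nat.card_Icc]
      omega
    · intro a ha b hb hab
      have h2 := congrArg Prod.snd hab
      simp only at h2
      have : (a:ℝ) = b := by
        field_simp at h2
        exact_mod_cast h2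
      exact_mod_cast this
end

section
/- For every integer m ≥ 1 there exist a positive integer q, injective contractions f₁, …, f_q of ℝ² into itself (Lipschitz maps with some ratio < 1), a nonempty compact connected set T ⊆ ℝ² with T = f₁(T) ∪ ⋯ ∪ f_q(T), and an irreducible cut set X of T with #X = m. -/
open Set Filter Topology

namespace S9

noncomputable section

variable (m : ℕ)

/-- aspect ratio constant -/
def cc : ℝ := m / (m + 1)

/-- denominator -/
def k2 : ℝ := 2 * ((m : ℝ) + 2)

lemma k2_pos : 0 < k2 m := by unfold k2; positivity

lemma cc_nonneg : 0 ≤ cc m := by unfold cc; positivity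

lemma cc_lt_one : cc m < 1 := by
  unfold cc
  rw [div_lt_one (by positivity)]
  linarith

lemma cc_key : cc m * ((m : ℝ) + 2) = m + cc m := by
  unfold cc
  field_simp
  ring

def fL (i : Fin m) (p : ℝ × ℝ) : ℝ × ℝ := (p.1 / 2, (((i : ℝ) + 1) * p.1 + p.2) / k2 m)

def fR (i : Fin m) (p : ℝ × ℝ) : ℝ × ℝ := (1 - p.1 / 2, (((i : ℝ) + 1) * p.1 + p.2) / k2 m)

def S0 : Set (ℝ × ℝ) :=
  {p | 0 ≤ p.1 ∧ p.1 ≤ 1 ∧ 0 ≤ p.2 ∧ p.2 ≤ cc m * p.1 ∧ p.2 ≤ cc m * (1 - p.1)}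

def F : Fin m ⊕ Fin m → ℝ × ℝ → ℝ × ℝ := Sum.elim (fL m) (fR m)

def H (S : Set (ℝ × ℝ)) : Set (ℝ × ℝ) := ⋃ ι, F m ι '' S

lemma H_eq (S : Set (ℝ × ℝ)) :
    H m S = (⋃ i, fL m i '' S) ∪ ⋃ i, fR m i '' S := by
  unfold H
  rw [iUnion_sum]
  rfl

def SS (n : ℕ) : Set (ℝ × ℝ) := (H m)^[n] (S0 m)

def T : Set (ℝ × ℝ) := ⋂ n, SS m n

def av : ℝ × ℝ := (0, 0)
def bv : ℝ × ℝ := (1, 0)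
def cpt (i : Fin m) : ℝ × ℝ := (1 / 2, ((i : ℝ) + 1) / k2 m)
def XX : Set (ℝ × ℝ) := Set.range (cpt m)
def rf (p : ℝ × ℝ) : ℝ × ℝ := (1 - p.1, p.2)

variable {m}

lemma fin_le (i : Fin m) : (i : ℝ) + 1 ≤ m := by
  have := i.isLt
  exact_mod_cast Nat.succ_le_of_lt this

lemma fin_nonneg (i : Fin m) : (0:ℝ) ≤ (i : ℝ) + 1 := by positivity

lemma fL_lip (i : Fin m) : LipschitzWith (1/2) (fL m i) := by
  apply LipschitzWith.of_dist_le_mul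
  intro p q
  have hd1 : dist p.1 q.1 ≤ dist p q := le_max_left _ _
  have hd2 : dist p.2 q.2 ≤ dist p q := le_max_right _ _
  rw [Real.dist_eq] at hd1 hd2
  obtain ⟨h1a, h1b⟩ := abs_le.1 hd1
  obtain ⟨h2a, h2b⟩ := abs_le.1 hd2
  have hi := fin_le i
  have hi0 := fin_nonneg i
  have hdn : (0:ℝ) ≤ dist p q := dist_nonneg
  have hk := k2_pos m
  have hk' : k2 m = 2 * ((m:ℝ) + 2) := rfl
  rw [fL, fL, Prod.dist_eq]
  push_cast
  apply max_le
  · rw [Real.dist_eq, abs_le]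
    constructor <;> nlinarith
  · rw [Real.dist_eq, abs_le, div_sub_div_same]
    constructor
    · rw [le_div_iff₀ hk, hk']
      nlinarith
    · rw [div_le_iff₀ hk, hk']
      nlinarith

lemma fR_lip (i : Fin m) : LipschitzWith (1/2) (fR m i) := by
  apply LipschitzWith.of_dist_le_mul
  intro p q
  have hd1 : dist p.1 q.1 ≤ dist p q := le_max_left _ _
  have hd2 : dist p.2 q.2 ≤ dist p q := le_max_right _ _
  rw [Real.dist_eq] at hd1 hd2
  obtain ⟨h1a, h1b⟩ := abs_le.1 hd1
  obtain ⟨h2a, h2b⟩ := abs_le.1 hd2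
  have hi := fin_le i
  have hi0 := fin_nonneg i
  have hdn : (0:ℝ) ≤ dist p q := dist_nonneg
  have hk := k2_pos m
  have hk' : k2 m = 2 * ((m:ℝ) + 2) := rfl
  rw [fR, fR, Prod.dist_eq]
  push_cast
  apply max_le
  · rw [Real.dist_eq, abs_le]
    constructor <;> nlinarith
  · rw [Real.dist_eq, abs_le, div_sub_div_same]
    constructor
    · rw [le_div_iff₀ hk, hk']
      nlinarith
    · rw [div_le_iff₀ hk, hk']
      nlinarith

lemma fL_inj (i : Fin m) : Function.Injective (fL m i) := by
  intro p q h
  have hk := (k2_pos m).ne'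
  rw [fL, fL, Prod.ext_iff] at h
  obtain ⟨h1, h2⟩ := h
  dsimp only at h1 h2
  have e1 : p.1 = q.1 := by linarith
  have e2 : p.2 = q.2 := by
    field_simp at h2
    rw [e1] at h2
    linarith
  exact Prod.ext e1 e2

lemma fR_inj (i : Fin m) : Function.Injective (fR m i) := by
  intro p q h
  have hk := (k2_pos m).ne'
  rw [fR, fR, Prod.ext_iff] at h
  obtain ⟨h1, h2⟩ := h
  dsimp only at h1 h2
  have e1 : p.1 = q.1 := by linarith
  have e2 : p.2 = q.2 := by
    field_simp at h2
    rw [e1] at h2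
    linarith
  exact Prod.ext e1 e2


lemma av_mem_S0 : av ∈ S0 m := by
  have hc := cc_nonneg m
  exact ⟨le_refl _, zero_le_one, le_refl _, by norm_num [av], by norm_num [av, hc]⟩

lemma bv_mem_S0 : bv ∈ S0 m := by
  have hc := cc_nonneg m
  exact ⟨zero_le_one, le_refl _, le_refl _, by norm_num [bv, hc], by norm_num [bv]⟩

variable (m) in
lemma S0_compact : IsCompact (S0 m) := by
  have hclosed : IsClosed (S0 m) := by
    have he : S0 m = {p : ℝ × ℝ | 0 ≤ p.1} ∩ ({p | p.1 ≤ 1} ∩ ({p | 0 ≤ p.2} ∩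
        ({p | p.2 ≤ cc m * p.1} ∩ {p | p.2 ≤ cc m * (1 - p.1)}))) := by
      ext p
      exact Iff.rfl
    rw [he]
    exact (isClosed_le continuous_const continuous_fst).inter <|
      (isClosed_le continuous_fst continuous_const).inter <|
      (isClosed_le continuous_const continuous_snd).inter <|
      (isClosed_le continuous_snd (continuous_const.mul continuous_fst)).inter
      (isClosed_le continuous_snd (continuous_const.mul (continuous_const.sub continuous_fst)))
  apply IsCompact.of_isClosed_subset (isCompact_Icc.prod isCompact_Icc) hclosed
  rintro p ⟨h1, h2, h3, h4, h5⟩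
  have hc0 := cc_nonneg m
  have hc1 := cc_lt_one m
  refine ⟨⟨h1, h2⟩, h3, ?_⟩
  nlinarith

variable (m) in
lemma S0_convex : Convex ℝ (S0 m) := by
  rintro p ⟨p1, p2, p3, p4, p5⟩ q ⟨q1, q2, q3, q4, q5⟩ a b ha hb hab
  refine ⟨?_, ?_, ?_, ?_, ?_⟩ <;>
    simp only [Prod.fst_add, Prod.snd_add, Prod.smul_fst, Prod.smul_snd, smul_eq_mul] <;>
    nlinarith

lemma H_mono {S S' : Set (ℝ × ℝ)} (h : S ⊆ S') : H m S ⊆ H m S' :=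
  iUnion_mono fun _ => image_mono h

lemma fL_mem_S0 (i : Fin m) {q : ℝ × ℝ} (hq : q ∈ S0 m) : fL m i q ∈ S0 m := by
  obtain ⟨h1, h2, h3, h4, h5⟩ := hq
  have hc0 := cc_nonneg m
  have hi := fin_le i
  have hi0 := fin_nonneg i
  have hk := k2_pos m
  have hk' : k2 m = 2 * ((m:ℝ) + 2) := rfl
  have e : cc m * (q.1 / 2) * (2 * ((m:ℝ) + 2)) = ((m:ℝ) + cc m) * q.1 := by
    linear_combination q.1 * cc_key m
  have hprod : ((i:ℝ) + 1) * q.1 ≤ (m:ℝ) * q.1 :=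
    mul_le_mul_of_nonneg_right (by linarith) h1
  refine ⟨?_, ?_, ?_, ?_, ?_⟩
  · show 0 ≤ q.1 / 2
    linarith
  · show q.1 / 2 ≤ 1
    linarith
  · show 0 ≤ (((i:ℝ) + 1) * q.1 + q.2) / k2 m
    positivity
  · show (((i:ℝ) + 1) * q.1 + q.2) / k2 m ≤ cc m * (q.1 / 2)
    rw [div_le_iff₀ hk, hk']
    nlinarith [e]
  · show (((i:ℝ) + 1) * q.1 + q.2) / k2 m ≤ cc m * (1 - q.1 / 2)
    rw [div_le_iff₀ hk, hk']
    nlinarith [e, mul_nonneg hc0 (sub_nonneg.2 h2)]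

lemma fR_mem_S0 (i : Fin m) {q : ℝ × ℝ} (hq : q ∈ S0 m) : fR m i q ∈ S0 m := by
  obtain ⟨h1, h2, h3, h4, h5⟩ := hq
  have hc0 := cc_nonneg m
  have hi := fin_le i
  have hi0 := fin_nonneg i
  have hk := k2_pos m
  have hk' : k2 m = 2 * ((m:ℝ) + 2) := rfl
  have e : cc m * (q.1 / 2) * (2 * ((m:ℝ) + 2)) = ((m:ℝ) + cc m) * q.1 := by
    linear_combination q.1 * cc_key m
  have hprod : ((i:ℝ) + 1) * q.1 ≤ (m:ℝ) * q.1 :=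
    mul_le_mul_of_nonneg_right (by linarith) h1
  refine ⟨?_, ?_, ?_, ?_, ?_⟩
  · show 0 ≤ 1 - q.1 / 2
    linarith
  · show 1 - q.1 / 2 ≤ 1
    linarith
  · show 0 ≤ (((i:ℝ) + 1) * q.1 + q.2) / k2 m
    positivity
  · show (((i:ℝ) + 1) * q.1 + q.2) / k2 m ≤ cc m * (1 - q.1 / 2)
    rw [div_le_iff₀ hk, hk']
    nlinarith [e, mul_nonneg hc0 (sub_nonneg.2 h2)]
  · show (((i:ℝ) + 1) * q.1 + q.2) / k2 m ≤ cc m * (1 - (1 - q.1 / 2))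
    rw [div_le_iff₀ hk, hk']
    nlinarith [e]

lemma H_S0 : H m (S0 m) ⊆ S0 m := by
  rw [H_eq]
  rintro p (hp | hp) <;> rw [mem_iUnion] at hp <;> obtain ⟨i, q, hq, rfl⟩ := hp
  · exact fL_mem_S0 i hq
  · exact fR_mem_S0 i hq

lemma SS_zero : SS m 0 = S0 m := rfl

lemma SS_succ (n : ℕ) : SS m (n + 1) = H m (SS m n) :=
  Function.iterate_succ_apply' _ _ _

lemma SS_antitone : Antitone (SS m) := by
  apply antitone_nat_of_succ_le
  intro n
  induction n with
  | zero => rw [SS_succ, SS_zero]; exact H_S0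
  | succ n ih =>
    rw [SS_succ (n+1)]
    calc H m (SS m (n+1)) ⊆ H m (SS m n) := H_mono ih
    _ = SS m (n+1) := (SS_succ n).symm

lemma F_lip (ι : Fin m ⊕ Fin m) : LipschitzWith (1/2) (F m ι) := by
  cases ι with
  | inl i => exact fL_lip i
  | inr i => exact fR_lip i

lemma F_inj (ι : Fin m ⊕ Fin m) : Function.Injective (F m ι) := by
  cases ι with
  | inl i => exact fL_inj i
  | inr i => exact fR_inj i

variable (m) in
lemma SS_compact (n : ℕ) : IsCompact (SS m n) := by
  induction n with
  | zero => exact S0_compact m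
  | succ n ih =>
    rw [SS_succ]
    exact isCompact_iUnion fun ι => ih.image (F_lip ι).continuous

lemma T_subset_SS (n : ℕ) : T m ⊆ SS m n := iInter_subset _ n

lemma T_subset_S0 : T m ⊆ S0 m := T_subset_SS 0

variable (m) in
lemma T_compact : IsCompact (T m) :=
  IsCompact.of_isClosed_subset (S0_compact m)
    (isClosed_iInter fun n => (SS_compact m n).isClosed) T_subset_S0

lemma fL_av (i : Fin m) : fL m i av = av := by
  simp [fL, av]

lemma fR_av (i : Fin m) : fR m i av = bv := by
  simp [fR, av, bv]

lemma fL_bv (i : Fin m) : fL m i bv = cpt m i := by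
  simp [fL, bv, cpt]

lemma fR_bv (i : Fin m) : fR m i bv = cpt m i := by
  simp [fR, bv, cpt]
  norm_num

lemma av_mem_H (hm : 1 ≤ m) {S : Set (ℝ × ℝ)} (h : av ∈ S) : av ∈ H m S := by
  rw [H_eq]
  exact Or.inl (mem_iUnion.2 ⟨⟨0, hm⟩, av, h, fL_av _⟩)

lemma bv_mem_H (hm : 1 ≤ m) {S : Set (ℝ × ℝ)} (h : av ∈ S) : bv ∈ H m S := by
  rw [H_eq]
  exact Or.inr (mem_iUnion.2 ⟨⟨0, hm⟩, av, h, fR_av _⟩)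

lemma av_mem_SS (hm : 1 ≤ m) (n : ℕ) : av ∈ SS m n := by
  induction n with
  | zero => exact av_mem_S0
  | succ n ih => rw [SS_succ]; exact av_mem_H hm ih

lemma bv_mem_SS (hm : 1 ≤ m) (n : ℕ) : bv ∈ SS m n := by
  cases n with
  | zero => exact bv_mem_S0
  | succ n => rw [SS_succ]; exact bv_mem_H hm (av_mem_SS hm n)

lemma av_mem_T (hm : 1 ≤ m) : av ∈ T m := mem_iInter.2 (av_mem_SS hm)

lemma bv_mem_T (hm : 1 ≤ m) : bv ∈ T m := mem_iInter.2 (bv_mem_SS hm)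

lemma SS_connected (hm : 1 ≤ m) (n : ℕ) : IsConnected (SS m n) := by
  induction n with
  | zero => exact ⟨⟨av, av_mem_S0⟩, (S0_convex m).isPreconnected⟩
  | succ n ih =>
    rw [SS_succ]
    have hav := av_mem_SS hm n
    have hbv := bv_mem_SS hm n
    refine ⟨⟨av, av_mem_H hm hav⟩, ?_⟩
    have he : H m (SS m n) = ⋃ i : Fin m, (fL m i '' SS m n ∪ fR m i '' SS m n) := by
      rw [H_eq, iUnion_union_distrib]
    rw [he]
    apply isPreconnected_iUnion
    · exact ⟨av, mem_iInter.2 fun i => Or.inl ⟨av, hav, fL_av i⟩⟩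
    · intro i
      apply IsPreconnected.union (cpt m i)
      · exact ⟨bv, hbv, fL_bv i⟩
      · exact ⟨bv, hbv, fR_bv i⟩
      · exact ih.isPreconnected.image _ (fL_lip i).continuous.continuousOn
      · exact ih.isPreconnected.image _ (fR_lip i).continuous.continuousOn


variable (m) in
lemma T_connected (hm : 1 ≤ m) : IsConnected (T m) := by
  refine ⟨⟨av, av_mem_T hm⟩, ?_⟩
  intro u v hu hv hcov hne1 hne2
  by_contra hempty
  rw [not_nonempty_iff_eq_empty] at hempty
  have hTc := T_compact m
  have hAc : IsCompact (T m ∩ vᶜ) := hTc.inter_right hv.isClosed_compl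
  have hBc : IsCompact (T m ∩ uᶜ) := hTc.inter_right hu.isClosed_compl
  have hAne : (T m ∩ vᶜ).Nonempty := by
    obtain ⟨x, hxT, hxu⟩ := hne1
    refine ⟨x, hxT, fun hxv => ?_⟩
    have : x ∈ T m ∩ (u ∩ v) := ⟨hxT, hxu, hxv⟩
    rw [hempty] at this
    exact this
  have hBne : (T m ∩ uᶜ).Nonempty := by
    obtain ⟨x, hxT, hxv⟩ := hne2
    refine ⟨x, hxT, fun hxu => ?_⟩
    have : x ∈ T m ∩ (u ∩ v) := ⟨hxT, hxu, hxv⟩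
    rw [hempty] at this
    exact this
  have hdisj : Disjoint (T m ∩ vᶜ) (T m ∩ uᶜ) := by
    rw [Set.disjoint_left]
    rintro x ⟨hxT, hxv⟩ ⟨-, hxu⟩
    rcases hcov hxT with h | h
    · exact hxu h
    · exact hxv h
  obtain ⟨u', v', hou, hov, hAu, hBv, hUV⟩ :=
    SeparatedNhds.of_isCompact_isCompact hAc hBc hdisj
  have hTuv : T m ⊆ u' ∪ v' := by
    intro x hx
    rcases hcov hx with h | h
    · by_cases hxv : x ∈ v
      · exfalso
        have : x ∈ T m ∩ (u ∩ v) := ⟨hx, h, hxv⟩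
        rw [hempty] at this
        exact this
      · exact Or.inl (hAu ⟨hx, hxv⟩)
    · by_cases hxu : x ∈ u
      · exfalso
        have : x ∈ T m ∩ (u ∩ v) := ⟨hx, hxu, h⟩
        rw [hempty] at this
        exact this
      · exact Or.inr (hBv ⟨hx, hxu⟩)
  have hex : ∃ n, SS m n ⊆ u' ∪ v' := by
    by_contra hno
    push_neg at hno
    have hne : ∀ n, (SS m n ∩ (u' ∪ v')ᶜ).Nonempty := by
      intro n
      obtain ⟨x, hx1, hx2⟩ := not_subset.1 (hno n)
      exact ⟨x, hx1, hx2⟩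
    have hdir : Directed (· ⊇ ·) (fun n => SS m n ∩ (u' ∪ v')ᶜ) := by
      intro a b
      exact ⟨max a b, inter_subset_inter_left _ (SS_antitone (le_max_left a b)),
        inter_subset_inter_left _ (SS_antitone (le_max_right a b))⟩
    obtain ⟨x, hx⟩ := IsCompact.nonempty_iInter_of_directed_nonempty_isCompact_isClosed
      (fun n => SS m n ∩ (u' ∪ v')ᶜ) hdir hne
      (fun n => (SS_compact m n).inter_right (hou.union hov).isClosed_compl)
      (fun n => (SS_compact m n).isClosed.inter (hou.union hov).isClosed_compl)
    have hxT : x ∈ T m := mem_iInter.2 fun n => (mem_iInter.1 hx n).1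
    exact (mem_iInter.1 hx 0).2 (hTuv hxT)
  obtain ⟨n, hn⟩ := hex
  have hconn := (SS_connected hm n).isPreconnected
  have h1 : (SS m n ∩ u').Nonempty := by
    obtain ⟨x, hx⟩ := hAne
    exact ⟨x, T_subset_SS n hx.1, hAu hx⟩
  have h2 : (SS m n ∩ v').Nonempty := by
    obtain ⟨x, hx⟩ := hBne
    exact ⟨x, T_subset_SS n hx.1, hBv hx⟩
  obtain ⟨x, hx⟩ := hconn u' v' hou hov hn h1 h2
  exact Set.disjoint_left.1 hUV hx.2.1 hx.2.2

variable (m) in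
lemma H_T : H m (T m) = T m := by
  apply Subset.antisymm
  · intro p hp
    apply mem_iInter.2
    intro n
    cases n with
    | zero => exact H_S0 (H_mono T_subset_S0 hp)
    | succ n => rw [SS_succ]; exact H_mono (T_subset_SS n) hp
  · intro p hp
    have hmem : ∀ n, ∃ ι, p ∈ F m ι '' SS m n := by
      intro n
      have h := mem_iInter.1 hp (n + 1)
      rw [SS_succ] at h
      exact mem_iUnion.1 h
    choose φ hφ using hmem
    obtain ⟨ι, hι⟩ := Finite.exists_infinite_fiber φ
    have hinf : (φ ⁻¹' {ι}).Infinite := Set.infinite_coe_iff.1 hι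
    have hall : ∀ n, p ∈ F m ι '' SS m n := by
      intro n
      obtain ⟨n', hn', hlt⟩ := hinf.exists_gt n
      have h : p ∈ F m ι '' SS m n' := by
        have h2 := hφ n'
        rwa [show φ n' = ι from hn'] at h2
      exact image_mono (SS_antitone hlt.le) h
    obtain ⟨s, hs0, hps⟩ := hall 0
    have hsT : s ∈ T m := by
      apply mem_iInter.2
      intro n
      obtain ⟨t, ht, hpt⟩ := hall n
      have he : t = s := F_inj ι (hpt.trans hps.symm)
      rwa [he] at ht
    exact mem_iUnion.2 ⟨ι, s, hsT, hps⟩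

lemma S0_x1 {p : ℝ × ℝ} (hp : p ∈ S0 m) (h : p.1 = 1) : p = bv := by
  obtain ⟨h1, h2, h3, h4, h5⟩ := hp
  have h5' : p.2 ≤ 0 := by
    rw [h] at h5
    simpa using h5
  have : p.2 = 0 := le_antisymm h5' h3
  exact Prod.ext h this

lemma S0_x0 {p : ℝ × ℝ} (hp : p ∈ S0 m) (h : p.1 = 0) : p = av := by
  obtain ⟨h1, h2, h3, h4, h5⟩ := hp
  have h4' : p.2 ≤ 0 := by
    rw [h] at h4
    simpa using h4
  have : p.2 = 0 := le_antisymm h4' h3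
  exact Prod.ext h this

lemma fin_cast_ge_one {i j : Fin m} (h : i ≠ j) : (1:ℝ) ≤ |(i:ℝ) - (j:ℝ)| := by
  have hne : (i:ℕ) ≠ (j:ℕ) := fun hh => h (Fin.ext hh)
  rcases lt_or_gt_of_ne hne with hlt | hlt
  · rw [abs_sub_comm, le_abs]
    left
    have : ((i:ℕ):ℝ) + 1 ≤ ((j:ℕ):ℝ) := by exact_mod_cast hlt
    linarith
  · rw [le_abs]
    left
    have : ((j:ℕ):ℝ) + 1 ≤ ((i:ℕ):ℝ) := by exact_mod_cast hlt
    linarith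

lemma snd_eq_aux {i j : Fin m} {q r : ℝ × ℝ}
    (he2 : (((j:ℝ) + 1) * r.1 + r.2) / k2 m = (((i:ℝ) + 1) * q.1 + q.2) / k2 m)
    (e1 : r.1 = q.1) (hqS : q ∈ S0 m) (hrS : r ∈ S0 m) (hij : i ≠ j) : q.1 = 0 := by
  have hk := (k2_pos m).ne'
  rw [div_eq_div_iff (k2_pos m).ne' (k2_pos m).ne'] at he2
  have hkey : ((j:ℝ) - (i:ℝ)) * q.1 = q.2 - r.2 := by
    have hk2 : (k2 m) ≠ 0 := (k2_pos m).ne'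
    have he3 : ((j:ℝ) + 1) * r.1 + r.2 = ((i:ℝ) + 1) * q.1 + q.2 :=
      mul_right_cancel₀ hk2 he2
    rw [e1] at he3
    linear_combination he3
  by_contra hne
  have hpos : 0 < q.1 := lt_of_le_of_ne hqS.1 (Ne.symm hne)
  have hq4 := hqS.2.2.2.1
  have hq3 := hqS.2.2.1
  have hr4 : r.2 ≤ cc m * q.1 := by
    have := hrS.2.2.2.1
    rwa [e1] at this
  have hr3 := hrS.2.2.1
  have hcc := cc_lt_one m
  have habs : |q.2 - r.2| ≤ cc m * q.1 := abs_le.2 ⟨by linarith, by linarith⟩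
  have h1 : (1:ℝ) ≤ |(j:ℝ) - (i:ℝ)| := fin_cast_ge_one (Ne.symm hij)
  have e3 : |((j:ℝ) - (i:ℝ)) * q.1| = |q.2 - r.2| := by rw [hkey]
  rw [abs_mul, abs_of_pos hpos] at e3
  nlinarith [mul_le_mul_of_nonneg_right h1 hpos.le]

lemma LL_inter {i j : Fin m} (hij : i ≠ j) {p : ℝ × ℝ}
    (hpi : p ∈ fL m i '' T m) (hpj : p ∈ fL m j '' T m) : p = av := by
  obtain ⟨q, hq, rfl⟩ := hpi
  obtain ⟨r, hr, he⟩ := hpj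
  have hqS := T_subset_S0 hq
  have hrS := T_subset_S0 hr
  rw [fL, fL, Prod.ext_iff] at he
  obtain ⟨he1, he2⟩ := he
  dsimp only at he1 he2
  have e1 : r.1 = q.1 := by linarith
  have hq1 : q.1 = 0 := snd_eq_aux he2 e1 hqS hrS hij
  have : q = av := S0_x0 hqS hq1
  rw [this, fL_av]

lemma RR_inter {i j : Fin m} (hij : i ≠ j) {p : ℝ × ℝ}
    (hpi : p ∈ fR m i '' T m) (hpj : p ∈ fR m j '' T m) : p = bv := by
  obtain ⟨q, hq, rfl⟩ := hpi
  obtain ⟨r, hr, he⟩ := hpj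
  have hqS := T_subset_S0 hq
  have hrS := T_subset_S0 hr
  rw [fR, fR, Prod.ext_iff] at he
  obtain ⟨he1, he2⟩ := he
  dsimp only at he1 he2
  have e1 : r.1 = q.1 := by linarith
  have hq1 : q.1 = 0 := snd_eq_aux he2 e1 hqS hrS hij
  have : q = av := S0_x0 hqS hq1
  rw [this, fR_av]

lemma LR_inter {i j : Fin m} {p : ℝ × ℝ}
    (hpi : p ∈ fL m i '' T m) (hpj : p ∈ fR m j '' T m) : p = cpt m i := by
  obtain ⟨q, hq, rfl⟩ := hpi
  obtain ⟨r, hr, he⟩ := hpj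
  have hqS := T_subset_S0 hq
  have hrS := T_subset_S0 hr
  rw [fR, fL, Prod.ext_iff] at he
  obtain ⟨he1, he2⟩ := he
  dsimp only at he1 he2
  have hq1 : q.1 = 1 := by linarith [hqS.2.1, hrS.2.1]
  have : q = bv := S0_x1 hqS hq1
  rw [this, fL_bv]

lemma cpt_inj : Function.Injective (cpt m) := by
  intro i j h
  rw [cpt, cpt, Prod.ext_iff] at h
  have h2 := h.2
  dsimp only at h2
  have hk := (k2_pos m).ne'
  rw [div_eq_div_iff hk hk] at h2
  have h3 : ((i:ℕ):ℝ) = ((j:ℕ):ℝ) := by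
    have := mul_right_cancel₀ hk h2
    linarith
  exact Fin.ext (by exact_mod_cast h3)

lemma av_not_XX : av ∉ XX m := by
  rintro ⟨i, hi⟩
  have := congrArg Prod.fst hi
  simp [cpt, av] at this

lemma bv_not_XX : bv ∉ XX m := by
  rintro ⟨i, hi⟩
  have := congrArg Prod.fst hi
  simp [cpt, bv] at this

lemma cpt_mem_T (hm : 1 ≤ m) (i : Fin m) : cpt m i ∈ T m := by
  rw [← fL_bv i, ← H_T m]
  exact mem_iUnion.2 ⟨Sum.inl i, bv, bv_mem_T hm, rfl⟩

lemma cpt_mem_fL {l i : Fin m} (h : cpt m l ∈ fL m i '' T m) : l = i := by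
  obtain ⟨q, hq, he⟩ := h
  have hqS := T_subset_S0 hq
  have hq1 : q.1 = 1 := by
    have h1 := congrArg Prod.fst he
    simp only [fL, cpt] at h1
    linarith
  rw [S0_x1 hqS hq1, fL_bv] at he
  exact (cpt_inj he).symm

lemma cpt_mem_fR {l i : Fin m} (h : cpt m l ∈ fR m i '' T m) : l = i := by
  obtain ⟨q, hq, he⟩ := h
  have hqS := T_subset_S0 hq
  have hq1 : q.1 = 1 := by
    have h1 := congrArg Prod.fst he
    simp only [fR, cpt] at h1
    linarith
  rw [S0_x1 hqS hq1, fR_bv] at he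
  exact (cpt_inj he).symm


lemma rf_rf (p : ℝ × ℝ) : rf (rf p) = p := by
  simp [rf]

lemma rf_inj : Function.Injective rf :=
  Function.LeftInverse.injective rf_rf

lemma rf_cont : Continuous rf := by
  unfold rf
  fun_prop

lemma rf_fL (i : Fin m) (p : ℝ × ℝ) : rf (fL m i p) = fR m i p := by
  simp [rf, fL, fR]

lemma rf_fR (i : Fin m) (p : ℝ × ℝ) : rf (fR m i p) = fL m i p := by
  simp [rf, fL, fR]

lemma rf_av : rf av = bv := by simp [rf, av, bv]

lemma rf_bv : rf bv = av := by simp [rf, av, bv]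

lemma rf_dist (p q : ℝ × ℝ) : dist (rf p) (rf q) = dist p q := by
  rw [Prod.dist_eq, Prod.dist_eq]
  congr 1
  rw [Real.dist_eq, Real.dist_eq]
  show |1 - p.1 - (1 - q.1)| = _
  rw [show (1:ℝ) - p.1 - (1 - q.1) = -(p.1 - q.1) by ring, abs_neg]

lemma rf_image (A : Set (ℝ × ℝ)) : rf '' A = rf ⁻¹' A := by
  ext p
  constructor
  · rintro ⟨q, hq, rfl⟩
    rw [mem_preimage, rf_rf]
    exact hq
  · intro h
    exact ⟨rf p, h, rf_rf p⟩

variable (m) in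
lemma rf_S0 : rf '' S0 m = S0 m := by
  rw [rf_image]
  ext p
  simp only [mem_preimage, S0, mem_setOf_eq, rf]
  constructor <;> rintro ⟨h1, h2, h3, h4, h5⟩ <;>
    refine ⟨by linarith, by linarith, h3, by nlinarith, by nlinarith⟩

lemma rf_H (S : Set (ℝ × ℝ)) : rf '' H m S = H m S := by
  rw [H_eq, image_union, image_iUnion, image_iUnion]
  have e1 : ∀ i : Fin m, rf '' (fL m i '' S) = fR m i '' S := by
    intro i
    rw [← image_comp]
    exact image_congr fun p _ => rf_fL i p
  have e2 : ∀ i : Fin m, rf '' (fR m i '' S) = fL m i '' S := by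
    intro i
    rw [← image_comp]
    exact image_congr fun p _ => rf_fR i p
  simp_rw [e1, e2]
  exact union_comm _ _

variable (m) in
lemma rf_SS (n : ℕ) : rf '' SS m n = SS m n := by
  cases n with
  | zero => exact rf_S0 m
  | succ n => rw [SS_succ]; exact rf_H _

variable (m) in
lemma rf_T : rf '' T m = T m := by
  rw [rf_image]
  unfold T
  rw [preimage_iInter]
  exact iInter_congr fun n => by rw [← rf_image, rf_SS]

variable (m) in
def CC : ℕ → Set (ℝ × ℝ)
  | 0 => ⋃ i, fL m i '' T m
  | (n + 1) => (⋃ i, fL m i '' T m) ∪ ⋃ i, fR m i '' (rf '' CC n)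

lemma CC_zero : CC m 0 = ⋃ i, fL m i '' T m := rfl

lemma CC_succ (n : ℕ) :
    CC m (n + 1) = (⋃ i, fL m i '' T m) ∪ ⋃ i, fR m i '' (rf '' CC m n) := rfl

lemma L_subset_T : (⋃ i, fL m i '' T m) ⊆ T m := by
  conv_rhs => rw [← H_T m, H_eq]
  exact subset_union_left

lemma R_subset_T : (⋃ i, fR m i '' T m) ⊆ T m := by
  conv_rhs => rw [← H_T m, H_eq]
  exact subset_union_right

lemma CC_subset_T : ∀ n, CC m n ⊆ T m := by
  intro n
  induction n with
  | zero => exact L_subset_T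
  | succ n ih =>
    rw [CC_succ]
    apply union_subset L_subset_T
    refine iUnion_subset fun i => ?_
    have h1 : rf '' CC m n ⊆ T m := by
      rw [← rf_T m]
      exact image_mono ih
    exact (image_mono h1).trans
      ((subset_iUnion (fun i => fR m i '' T m) i).trans R_subset_T)

lemma av_mem_CC (hm : 1 ≤ m) (n : ℕ) : av ∈ CC m n := by
  have h : av ∈ ⋃ i, fL m i '' T m :=
    mem_iUnion.2 ⟨⟨0, hm⟩, av, av_mem_T hm, fL_av _⟩
  cases n with
  | zero => exact h
  | succ n => exact Or.inl h

lemma bv_not_mem_L : bv ∉ ⋃ i, fL m i '' T m := by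
  rw [mem_iUnion]
  rintro ⟨i, q, hq, he⟩
  have h1 := congrArg Prod.fst he
  have hq2 := (T_subset_S0 hq).2.1
  simp only [fL, bv] at h1
  linarith

lemma bv_not_mem_CC : ∀ n, bv ∉ CC m n := by
  intro n
  induction n with
  | zero => exact bv_not_mem_L
  | succ n ih =>
    rw [CC_succ]
    rintro (h | h)
    · exact bv_not_mem_L h
    · rw [mem_iUnion] at h
      obtain ⟨i, s, hs, he⟩ := h
      have hsT : s ∈ T m := by
        rw [← rf_T m]
        exact image_mono (CC_subset_T n) hs
      have hs1 : s.1 = 0 := by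
        have h1 := congrArg Prod.fst he
        simp only [fR, bv] at h1
        linarith
      have : s = av := S0_x0 (T_subset_S0 hsT) hs1
      rw [this] at hs
      obtain ⟨t, ht, hta⟩ := hs
      have : t = bv := by
        have := congrArg rf hta
        rwa [rf_rf, rf_av] at this
      rw [this] at ht
      exact ih ht

lemma CC_preconnected (hm : 1 ≤ m) : ∀ n, IsPreconnected (CC m n) := by
  have hL : IsPreconnected (⋃ i, fL m i '' T m) := by
    apply isPreconnected_iUnion
    · exact ⟨av, mem_iInter.2 fun i => ⟨av, av_mem_T hm, fL_av i⟩⟩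
    · exact fun i => (T_connected m hm).isPreconnected.image _
        (fL_lip i).continuous.continuousOn
  intro n
  induction n with
  | zero => exact hL
  | succ n ih =>
    rw [CC_succ]
    haveI : Nonempty (Fin m) := ⟨⟨0, hm⟩⟩
    rw [union_iUnion]
    apply isPreconnected_iUnion
    · exact ⟨av, mem_iInter.2 fun i => Or.inl (av_mem_CC hm 0)⟩
    · intro i
      apply IsPreconnected.union (cpt m i)
      · exact mem_iUnion.2 ⟨i, bv, bv_mem_T hm, fL_bv i⟩
      · exact ⟨bv, ⟨av, av_mem_CC hm n, rf_av⟩, fR_bv i⟩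
      · exact hL
      · exact (ih.image rf rf_cont.continuousOn).image _
          (fR_lip i).continuous.continuousOn

lemma dist_le_one {p : ℝ × ℝ} (hp : p ∈ S0 m) : dist p bv ≤ 1 ∧ dist p av ≤ 1 := by
  obtain ⟨h1, h2, h3, h4, h5⟩ := hp
  have hc0 := cc_nonneg m
  have hc1 := cc_lt_one m
  have hp2 : p.2 ≤ 1 := by nlinarith
  constructor <;>
  · rw [Prod.dist_eq]
    apply max_le <;> rw [Real.dist_eq, abs_le] <;> constructor <;>
      simp only [av, bv] <;> linarith

lemma dist_bound (hm : 1 ≤ m) : ∀ n, ∀ p ∈ T m \ CC m n, dist p bv ≤ (1/2) ^ n := by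
  intro n
  induction n with
  | zero =>
    intro p hp
    simpa using (dist_le_one (T_subset_S0 hp.1)).1
  | succ n ih =>
    rintro p ⟨hpT, hpC⟩
    have hpH : p ∈ H m (T m) := by rw [H_T]; exact hpT
    rw [H_eq] at hpH
    have hpR : p ∈ ⋃ i, fR m i '' T m := by
      rcases hpH with h | h
      · exact absurd (Or.inl h : p ∈ CC m (n+1)) hpC
      · exact h
    obtain ⟨i, s, hs, rfl⟩ := mem_iUnion.1 hpR
    have hsC : s ∉ rf '' CC m n := fun hc =>
      hpC (Or.inr (mem_iUnion.2 ⟨i, s, hc, rfl⟩))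
    have hrs : rf s ∈ T m \ CC m n := by
      constructor
      · rw [← rf_T m]
        exact ⟨s, hs, rfl⟩
      · exact fun hc => hsC ⟨rf s, hc, rf_rf s⟩
    have ih' := ih (rf s) hrs
    have hds : dist s av = dist (rf s) bv := by
      rw [← rf_av, rf_dist]
    have hlip := (fR_lip i).dist_le_mul s av
    rw [fR_av] at hlip
    have hcast : ((1/2 : NNReal) : ℝ) = 1/2 := by norm_num
    rw [hcast] at hlip
    calc dist (fR m i s) bv ≤ 1/2 * dist s av := hlip
    _ ≤ 1/2 * (1/2)^n := by rw [hds]; linarith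
    _ = (1/2)^(n+1) := by ring

variable (m) in
lemma T_diff_bv (hm : 1 ≤ m) : IsPreconnected (T m \ {bv}) := by
  have he : T m \ {bv} = ⋃ n, CC m n := by
    apply Subset.antisymm
    · rintro p ⟨hpT, hpb⟩
      have hd : 0 < dist p bv := dist_pos.2 (by simpa using hpb)
      obtain ⟨n, hn⟩ := exists_pow_lt_of_lt_one hd (by norm_num : (1/2:ℝ) < 1)
      refine mem_iUnion.2 ⟨n, ?_⟩
      by_contra hc
      exact absurd (dist_bound hm n p ⟨hpT, hc⟩) (by linarith)
    · refine iUnion_subset fun n p hp => ⟨CC_subset_T n hp, fun hb => ?_⟩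
      rw [mem_singleton_iff] at hb
      rw [hb] at hp
      exact bv_not_mem_CC n hp
  rw [he]
  exact isPreconnected_iUnion ⟨av, mem_iInter.2 fun n => av_mem_CC hm n⟩
    (CC_preconnected hm)

variable (m) in
lemma T_diff_av (hm : 1 ≤ m) : IsPreconnected (T m \ {av}) := by
  have he : T m \ {av} = rf '' (T m \ {bv}) := by
    rw [image_diff rf_inj, rf_T, image_singleton, rf_bv]
  rw [he]
  exact (T_diff_bv m hm).image rf rf_cont.continuousOn


lemma not_sepUnion_of_preconnected {α : Type*} [TopologicalSpace α] {S : Set α}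
    (h : IsPreconnected S) : ¬ SepUnion S := by
  rintro ⟨U, V, hS, hU, hV, hUV, hVU⟩
  obtain ⟨u0, hu0⟩ := hU
  obtain ⟨v0, hv0⟩ := hV
  have hcov : S ⊆ (closure V)ᶜ ∪ (closure U)ᶜ := by
    rw [hS]
    rintro p (hp | hp)
    · exact Or.inl fun hc => (eq_empty_iff_forall_notMem.1 hVU p) ⟨hp, hc⟩
    · exact Or.inr fun hc => (eq_empty_iff_forall_notMem.1 hUV p) ⟨hc, hp⟩
  have h1 : (S ∩ (closure V)ᶜ).Nonempty :=
    ⟨u0, by rw [hS]; exact Or.inl hu0,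
      fun hc => (eq_empty_iff_forall_notMem.1 hVU u0) ⟨hu0, hc⟩⟩
  have h2 : (S ∩ (closure U)ᶜ).Nonempty :=
    ⟨v0, by rw [hS]; exact Or.inr hv0,
      fun hc => (eq_empty_iff_forall_notMem.1 hUV v0) ⟨hc, hv0⟩⟩
  obtain ⟨x, hxS, hx1, hx2⟩ := h (closure V)ᶜ (closure U)ᶜ
    isClosed_closure.isOpen_compl isClosed_closure.isOpen_compl hcov h1 h2
  rw [hS] at hxS
  rcases hxS with h' | h'
  · exact hx2 (subset_closure h')
  · exact hx1 (subset_closure h')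

lemma fL_diff_pre (hm : 1 ≤ m) (i : Fin m) {X₀ : Set (ℝ × ℝ)} (hX₀ : X₀ ⊆ XX m) :
    IsPreconnected (fL m i '' T m \ X₀) ∧ av ∈ fL m i '' T m \ X₀ := by
  have hav : av ∈ fL m i '' T m \ X₀ :=
    ⟨⟨av, av_mem_T hm, fL_av i⟩, fun h => av_not_XX (hX₀ h)⟩
  refine ⟨?_, hav⟩
  by_cases hc : cpt m i ∈ X₀
  · have he : fL m i '' T m \ X₀ = fL m i '' (T m \ {bv}) := by
      rw [image_diff (fL_inj i), image_singleton, fL_bv]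
      apply Subset.antisymm
      · rintro p ⟨hp, hpX⟩
        exact ⟨hp, fun hb => hpX (by rw [mem_singleton_iff.1 hb]; exact hc)⟩
      · rintro p ⟨hp, hpc⟩
        refine ⟨hp, fun hX => ?_⟩
        obtain ⟨l, hl⟩ := hX₀ hX
        have hp' : cpt m l ∈ fL m i '' T m := by rw [hl]; exact hp
        have hli : l = i := cpt_mem_fL hp'
        apply hpc
        rw [mem_singleton_iff, ← hl, hli]
    rw [he]
    exact (T_diff_bv m hm).image _ (fL_lip i).continuous.continuousOn
  · have he : fL m i '' T m \ X₀ = fL m i '' T m := by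
      apply Subset.antisymm diff_subset
      intro p hp
      refine ⟨hp, fun hX => ?_⟩
      obtain ⟨l, hl⟩ := hX₀ hX
      have hp' : cpt m l ∈ fL m i '' T m := by rw [hl]; exact hp
      have hli : l = i := cpt_mem_fL hp'
      rw [hli] at hl
      rw [← hl] at hX
      exact hc hX
    rw [he]
    exact (T_connected m hm).isPreconnected.image _ (fL_lip i).continuous.continuousOn

lemma fR_diff_pre (hm : 1 ≤ m) (i : Fin m) {X₀ : Set (ℝ × ℝ)} (hX₀ : X₀ ⊆ XX m) :
    IsPreconnected (fR m i '' T m \ X₀) ∧ bv ∈ fR m i '' T m \ X₀ := by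
  have hbv : bv ∈ fR m i '' T m \ X₀ :=
    ⟨⟨av, av_mem_T hm, fR_av i⟩, fun h => bv_not_XX (hX₀ h)⟩
  refine ⟨?_, hbv⟩
  by_cases hc : cpt m i ∈ X₀
  · have he : fR m i '' T m \ X₀ = fR m i '' (T m \ {bv}) := by
      rw [image_diff (fR_inj i), image_singleton, fR_bv]
      apply Subset.antisymm
      · rintro p ⟨hp, hpX⟩
        exact ⟨hp, fun hb => hpX (by rw [mem_singleton_iff.1 hb]; exact hc)⟩
      · rintro p ⟨hp, hpc⟩
        refine ⟨hp, fun hX => ?_⟩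
        obtain ⟨l, hl⟩ := hX₀ hX
        have hp' : cpt m l ∈ fR m i '' T m := by rw [hl]; exact hp
        have hli : l = i := cpt_mem_fR hp'
        apply hpc
        rw [mem_singleton_iff, ← hl, hli]
    rw [he]
    exact (T_diff_bv m hm).image _ (fR_lip i).continuous.continuousOn
  · have he : fR m i '' T m \ X₀ = fR m i '' T m := by
      apply Subset.antisymm diff_subset
      intro p hp
      refine ⟨hp, fun hX => ?_⟩
      obtain ⟨l, hl⟩ := hX₀ hX
      have hp' : cpt m l ∈ fR m i '' T m := by rw [hl]; exact hp
      have hli : l = i := cpt_mem_fR hp'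
      rw [hli] at hl
      rw [← hl] at hX
      exact hc hX
    rw [he]
    exact (T_connected m hm).isPreconnected.image _ (fR_lip i).continuous.continuousOn

lemma TL_closed : IsClosed (⋃ i, fL m i '' T m) :=
  (isCompact_iUnion fun i => (T_compact m).image (fL_lip i).continuous).isClosed

lemma TR_closed : IsClosed (⋃ i, fR m i '' T m) :=
  (isCompact_iUnion fun i => (T_compact m).image (fR_lip i).continuous).isClosed

variable (m) in
lemma cut_sep (hm : 1 ≤ m) : SepUnion (T m \ XX m) := by
  refine ⟨(⋃ i, fL m i '' T m) \ XX m, (⋃ i, fR m i '' T m) \ XX m, ?_, ?_, ?_, ?_, ?_⟩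
  · rw [← union_diff_distrib]
    congr 1
    conv_lhs => rw [← H_T m]
    rw [H_eq]
  · exact ⟨av, mem_iUnion.2 ⟨⟨0, hm⟩, av, av_mem_T hm, fL_av _⟩, av_not_XX⟩
  · exact ⟨bv, mem_iUnion.2 ⟨⟨0, hm⟩, av, av_mem_T hm, fR_av _⟩, bv_not_XX⟩
  · rw [eq_empty_iff_forall_notMem]
    rintro p ⟨hpU, hpV⟩
    have hpL : p ∈ ⋃ i, fL m i '' T m :=
      closure_minimal diff_subset TL_closed hpU
    obtain ⟨i, hpi⟩ := mem_iUnion.1 hpL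
    obtain ⟨hpR, hpX⟩ := hpV
    obtain ⟨j, hpj⟩ := mem_iUnion.1 hpR
    apply hpX
    rw [LR_inter hpi hpj]
    exact mem_range_self i
  · rw [eq_empty_iff_forall_notMem]
    rintro p ⟨hpU, hpV⟩
    have hpR : p ∈ ⋃ i, fR m i '' T m :=
      closure_minimal diff_subset TR_closed hpV
    obtain ⟨j, hpj⟩ := mem_iUnion.1 hpR
    obtain ⟨hpL', hpX⟩ := hpU
    obtain ⟨i, hpi⟩ := mem_iUnion.1 hpL'
    apply hpX
    rw [LR_inter hpi hpj]
    exact mem_range_self i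

variable (m) in
lemma irred (hm : 1 ≤ m) : ∀ X₀ : Set (ℝ × ℝ), X₀ ⊂ XX m →
    closure X₀ ∩ T m ⊆ X₀ → ¬ SepUnion (T m \ X₀) := by
  intro X₀ hX₀ _
  obtain ⟨x, hxX, hxX₀⟩ := exists_of_ssubset hX₀
  obtain ⟨j, rfl⟩ := hxX
  apply not_sepUnion_of_preconnected
  have hX₀X : X₀ ⊆ XX m := hX₀.subset
  have hdecomp : T m \ X₀ =
      (⋃ i, (fL m i '' T m \ X₀)) ∪ ⋃ i, (fR m i '' T m \ X₀) := by
    rw [← iUnion_diff, ← iUnion_diff, ← union_diff_distrib]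
    congr 1
    conv_lhs => rw [← H_T m]
    rw [H_eq]
  rw [hdecomp]
  apply IsPreconnected.union (cpt m j)
  · exact mem_iUnion.2 ⟨j, ⟨bv, bv_mem_T hm, fL_bv j⟩, hxX₀⟩
  · exact mem_iUnion.2 ⟨j, ⟨bv, bv_mem_T hm, fR_bv j⟩, hxX₀⟩
  · exact isPreconnected_iUnion ⟨av, mem_iInter.2 fun i => (fL_diff_pre hm i hX₀X).2⟩
      (fun i => (fL_diff_pre hm i hX₀X).1)
  · exact isPreconnected_iUnion ⟨bv, mem_iInter.2 fun i => (fR_diff_pre hm i hX₀X).2⟩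
      (fun i => (fR_diff_pre hm i hX₀X).1)

variable (m) in
lemma XX_ncard : (XX m).ncard = m := by
  rw [XX, ← image_univ, Set.ncard_image_of_injective _ cpt_inj, Set.ncard_univ]
  simp

end

end S9

theorem statement9 (m : ℕ) (hm : 1 ≤ m) :
    ∃ (q : ℕ) (f : Fin q → ℝ × ℝ → ℝ × ℝ), 0 < q ∧
      (∀ i, Function.Injective (f i)) ∧
      (∀ i, ∃ K, ContractingWith K (f i)) ∧
      ∃ T : Set (ℝ × ℝ), T.Nonempty ∧ IsCompact T ∧ IsConnected T ∧
        T = ⋃ i, f i '' T ∧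
        ∃ X : Set (ℝ × ℝ), IsIrredCutSet T X ∧ X.ncard = m := by
  refine ⟨m + m, fun j => S9.F m (finSumFinEquiv.symm j), by omega,
    fun j => S9.F_inj _, fun j => ⟨1/2, by exact_mod_cast show (1:ℝ)/2 < 1 by norm_num, S9.F_lip _⟩,
    S9.T m, ⟨S9.av, S9.av_mem_T hm⟩, S9.T_compact m, S9.T_connected m hm, ?_,
    S9.XX m, ⟨⟨?_, S9.cut_sep m hm⟩, S9.irred m hm⟩, S9.XX_ncard m⟩
  · have h : ⋃ j : Fin (m + m), S9.F m (finSumFinEquiv.symm j) '' S9.T m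
        = S9.H m (S9.T m) := by
      unfold S9.H
      exact Function.Surjective.iUnion_comp finSumFinEquiv.symm.surjective
        (fun ι => S9.F m ι '' S9.T m)
    rw [h, S9.H_T]
  · rintro p ⟨i, rfl⟩
    exact S9.cpt_mem_T hm i
end

section
/- Let A be the 2×2 integer matrix with rows (0, 3) and (1, 1), let D := {(0,0), (1,0), (−1,0)} ⊂ ℤ², and let T = T(A,D) be the unique nonempty compact subset of ℝ² with A·T = T + D. Then for every s ∈ ℤ² with s ≠ 0, T ∩ (T+s) ≠ ∅ if and only if s ∈ {±(1,0), ±(−2,1), ±(−1,1), ±(−4,2), ±(−3,1)}. -/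
open Set Filter Topology Matrix

noncomputable section

namespace Statement13Aux

abbrev A2 : Matrix (Fin 2) (Fin 2) ℤ := !![0, 3; 1, 1]
abbrev D2 : Set (Fin 2 → ℤ) := {![0, 0], ![1, 0], ![-1, 0]}

lemma mulA_apply (x : Fin 2 → ℝ) : (rmat A2).mulVec x = ![3 * x 1, x 0 + x 1] := by
  funext i; fin_cases i <;>
    simp [rmat, Matrix.mulVec, dotProduct, Fin.sum_univ_two, Matrix.map_apply]

lemma vec_eq_zero_iff (s : Fin 2 → ℤ) : s = 0 ↔ s 0 = 0 ∧ s 1 = 0 := by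
  constructor
  · rintro rfl; simp
  · rintro ⟨h0, h1⟩; funext i; fin_cases i <;> simpa

lemma stepA {T : Set (Fin 2 → ℝ)} (hself : SelfAffine A2 D2 T) {x : Fin 2 → ℝ} (hx : x ∈ T) :
    ∃ u ∈ T, ∃ c : ℤ, (c = 0 ∨ c = 1 ∨ c = -1) ∧
      3 * x 1 = u 0 + (c : ℝ) ∧ x 0 + x 1 = u 1 := by
  have hm : (rmat A2).mulVec x ∈ ⋃ e ∈ D2, (fun t => t + rvec e) '' T := by
    rw [← hself.2.2]; exact mem_image_of_mem _ hx
  simp only [mem_iUnion, exists_prop] at hm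
  obtain ⟨e, he, u, hu, heq⟩ := hm
  have h0 := congrFun heq 0
  have h1 := congrFun heq 1
  rw [mulA_apply] at h0 h1
  simp only [Pi.add_apply] at h0 h1
  rcases he with rfl | rfl | rfl
  · exact ⟨u, hu, 0, Or.inl rfl, by simpa [rvec] using h0.symm, by simpa [rvec] using h1.symm⟩
  · exact ⟨u, hu, 1, Or.inr (Or.inl rfl), by simpa [rvec] using h0.symm,
      by simpa [rvec] using h1.symm⟩
  · exact ⟨u, hu, -1, Or.inr (Or.inr rfl), by simpa [rvec] using h0.symm,
      by simpa [rvec] using h1.symm⟩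

lemma stepB {T : Set (Fin 2 → ℝ)} (hself : SelfAffine A2 D2 T) {u : Fin 2 → ℝ} (hu : u ∈ T)
    {c : ℤ} (hc : c = 0 ∨ c = 1 ∨ c = -1) :
    ∃ x ∈ T, 3 * x 1 = u 0 + (c : ℝ) ∧ x 0 + x 1 = u 1 := by
  have he : (![c, 0] : Fin 2 → ℤ) ∈ D2 := by
    rcases hc with rfl | rfl | rfl
    · left; rfl
    · right; left; rfl
    · right; right; rfl
  have hm : u + rvec ![c, 0] ∈ ⋃ e ∈ D2, (fun t => t + rvec e) '' T := by
    simp only [mem_iUnion, exists_prop]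
    exact ⟨![c, 0], he, mem_image_of_mem _ hu⟩
  rw [← hself.2.2] at hm
  obtain ⟨x, hx, heq⟩ := hm
  have h0 := congrFun heq 0
  have h1 := congrFun heq 1
  rw [mulA_apply] at h0 h1
  simp only [Pi.add_apply] at h0 h1
  refine ⟨x, hx, by simpa [rvec] using h0, by simpa [rvec] using h1⟩

lemma tile_bounds {T : Set (Fin 2 → ℝ)} (hself : SelfAffine A2 D2 T) :
    ∀ x ∈ T, |x 0| ≤ 2 ∧ |x 1| ≤ 1 := by
  have hne := hself.1
  have hc := hself.2.1
  set a : ℝ := sSup ((fun t => |t 0|) '' T) with ha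
  have hbdd : BddAbove ((fun t => |t 0|) '' T) :=
    (hc.image ((continuous_apply 0).abs)).bddAbove
  have hub : ∀ x ∈ T, |x 0| ≤ a := fun x hx => le_csSup hbdd (mem_image_of_mem _ hx)
  have h1 : ∀ x ∈ T, |x 1| ≤ (a + 1) / 3 := by
    intro x hx
    obtain ⟨u, hu, c, hc3, e0, e1⟩ := stepA hself hx
    have hcr : |(c : ℝ)| ≤ 1 := by rcases hc3 with rfl | rfl | rfl <;> norm_num
    have := hub u hu
    rw [abs_le] at *
    constructor <;> [nlinarith; nlinarith]
  have h0 : ∀ x ∈ T, |x 0| ≤ 2 * (a + 1) / 3 := by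
    intro x hx
    obtain ⟨u, hu, c, hc3, e0, e1⟩ := stepA hself hx
    have hu1 := h1 u hu
    have hx1 := h1 x hx
    rw [abs_le] at *
    constructor <;> linarith
  have hle : a ≤ 2 * (a + 1) / 3 := by
    apply csSup_le (hne.image _)
    rintro r ⟨x, hx, rfl⟩; exact h0 x hx
  have ha2 : a ≤ 2 := by linarith
  intro x hx
  exact ⟨(hub x hx).trans ha2, (h1 x hx).trans (by linarith)⟩

def Nbr (T : Set (Fin 2 → ℝ)) (s : Fin 2 → ℤ) : Prop := (T ∩ trT T s).Nonempty

lemma nbr_iff (T : Set (Fin 2 → ℝ)) (s : Fin 2 → ℤ) :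
    Nbr T s ↔ ∃ x ∈ T, ∃ y ∈ T, ∀ i, x i = y i + (s i : ℝ) := by
  constructor
  · rintro ⟨x, hx, y, hy, rfl⟩
    exact ⟨_, hx, y, hy, fun i => rfl⟩
  · rintro ⟨x, hx, y, hy, h⟩
    exact ⟨x, hx, y, hy, funext fun i => (h i).symm⟩

lemma nbr_neg {T : Set (Fin 2 → ℝ)} {s s' : Fin 2 → ℤ} (h0 : s' 0 = -s 0)
    (h1 : s' 1 = -s 1) (hn : Nbr T s) : Nbr T s' := by
  rw [nbr_iff] at hn ⊢
  obtain ⟨x, hx, y, hy, h⟩ := hn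
  refine ⟨y, hy, x, hx, fun i => ?_⟩
  fin_cases i <;> simp only [Fin.isValue, Fin.zero_eta, Fin.mk_one]
  · have := h 0; rw [h0]; push_cast; linarith
  · have := h 1; rw [h1]; push_cast; linarith

lemma fstep {T : Set (Fin 2 → ℝ)} (hself : SelfAffine A2 D2 T) {s : Fin 2 → ℤ}
    (hs : ¬(s 0 = 0 ∧ s 1 = 0)) (hn : Nbr T s) :
    ∃ c : ℤ, |c| ≤ 2 ∧ ∃ s' : Fin 2 → ℤ, Nbr T s' ∧ ¬(s' 0 = 0 ∧ s' 1 = 0) ∧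
      s' 0 = 3 * s 1 - c ∧ s' 1 = s 0 + s 1 := by
  rw [nbr_iff] at hn
  obtain ⟨x, hx, y, hy, h⟩ := hn
  obtain ⟨u, hu, c1, hc1, e0, e1⟩ := stepA hself hx
  obtain ⟨v, hv, c2, hc2, f0, f1⟩ := stepA hself hy
  refine ⟨c1 - c2, ?_, ![3 * s 1 - (c1 - c2), s 0 + s 1], ?_, ?_, by simp, by simp⟩
  · rcases hc1 with rfl | rfl | rfl <;> rcases hc2 with rfl | rfl | rfl <;> norm_num
  · rw [nbr_iff]
    refine ⟨u, hu, v, hv, fun i => ?_⟩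
    have g0 := h 0
    have g1 := h 1
    fin_cases i <;> simp <;> push_cast <;> linarith
  · simp only [Matrix.cons_val_zero, Matrix.cons_val_one, Matrix.head_cons]
    rcases hc1 with rfl | rfl | rfl <;> rcases hc2 with rfl | rfl | rfl <;> omega

lemma bstep {T : Set (Fin 2 → ℝ)} (hself : SelfAffine A2 D2 T) {s s' : Fin 2 → ℤ}
    (c1 c2 : ℤ) (hc1 : c1 = 0 ∨ c1 = 1 ∨ c1 = -1) (hc2 : c2 = 0 ∨ c2 = 1 ∨ c2 = -1)
    (e0 : s' 0 = 3 * s 1 - (c1 - c2)) (e1 : s' 1 = s 0 + s 1)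
    (hn : Nbr T s') : Nbr T s := by
  rw [nbr_iff] at hn ⊢
  obtain ⟨t1, ht1, t2, ht2, h⟩ := hn
  obtain ⟨x, hx, p0, p1⟩ := stepB hself ht1 hc1
  obtain ⟨y, hy, q0, q1⟩ := stepB hself ht2 hc2
  have g0 := h 0
  have g1 := h 1
  rw [e0] at g0
  rw [e1] at g1
  push_cast at g0 g1
  refine ⟨x, hx, y, hy, fun i => ?_⟩
  fin_cases i <;> push_cast <;> linarith

lemma nbr_bounds {T : Set (Fin 2 → ℝ)} (hself : SelfAffine A2 D2 T) {s : Fin 2 → ℤ}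
    (hn : Nbr T s) : |s 0| ≤ 4 ∧ |s 1| ≤ 2 := by
  rw [nbr_iff] at hn
  obtain ⟨x, hx, y, hy, h⟩ := hn
  obtain ⟨hx0, hx1⟩ := tile_bounds hself x hx
  obtain ⟨hy0, hy1⟩ := tile_bounds hself y hy
  have g0 := h 0
  have g1 := h 1
  constructor
  · have : |(s 0 : ℝ)| ≤ 4 := by rw [abs_le] at *; constructor <;> linarith
    exact_mod_cast this
  · have : |(s 1 : ℝ)| ≤ 2 := by rw [abs_le] at *; constructor <;> linarith
    exact_mod_cast this

lemma cycle_nbr {T : Set (Fin 2 → ℝ)} (hself : SelfAffine A2 D2 T) {s : Fin 2 → ℤ}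
    (ca ca' cb cb' : ℤ)
    (hca : ca = 0 ∨ ca = 1 ∨ ca = -1) (hca' : ca' = 0 ∨ ca' = 1 ∨ ca' = -1)
    (hcb : cb = 0 ∨ cb = 1 ∨ cb = -1) (hcb' : cb' = 0 ∨ cb' = 1 ∨ cb' = -1)
    (e0 : 3 * s 0 + 3 * s 1 = s 0 + (ca - ca'))
    (e1 : s 0 + 4 * s 1 = s 1 + (cb - cb')) :
    Nbr T s := by
  have hc := hself.2.1
  have key : ∀ n : ℕ, ∃ x ∈ T, ∃ y ∈ T,
      |x 0 - y 0 - (s 0 : ℝ)| ≤ 8 * (7/9) ^ n ∧ |x 1 - y 1 - (s 1 : ℝ)| ≤ 8 * (7/9) ^ n := by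
    intro n
    induction n with
    | zero =>
      obtain ⟨t0, ht0⟩ := hself.1
      have hb0 : |(s 0 : ℝ)| ≤ 8 := by
        have : |(s 0 : ℤ)| ≤ 8 := by
          rw [abs_le]
          rcases hca with rfl|rfl|rfl <;> rcases hca' with rfl|rfl|rfl <;>
            rcases hcb with rfl|rfl|rfl <;> rcases hcb' with rfl|rfl|rfl <;> omega
        exact_mod_cast this
      have hb1 : |(s 1 : ℝ)| ≤ 8 := by
        have : |(s 1 : ℤ)| ≤ 8 := by
          rw [abs_le]
          rcases hca with rfl|rfl|rfl <;> rcases hca' with rfl|rfl|rfl <;>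
            rcases hcb with rfl|rfl|rfl <;> rcases hcb' with rfl|rfl|rfl <;> omega
        exact_mod_cast this
      refine ⟨t0, ht0, t0, ht0, ?_, ?_⟩ <;> simp <;> [exact hb0; exact hb1]
    | succ n ih =>
      obtain ⟨x, hx, y, hy, hb0, hb1⟩ := ih
      obtain ⟨u, hu, u0, u1⟩ := stepB hself hx hca
      obtain ⟨x1, hx1, x10, x11⟩ := stepB hself hu hcb
      obtain ⟨v, hv, v0, v1⟩ := stepB hself hy hca'
      obtain ⟨y1, hy1, y10, y11⟩ := stepB hself hv hcb'
      refine ⟨x1, hx1, y1, hy1, ?_, ?_⟩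
      · have E0 : (3:ℝ) * s 0 + 3 * s 1 = s 0 + ((ca:ℝ) - ca') := by exact_mod_cast e0
        have E1 : (s 0:ℝ) + 4 * s 1 = s 1 + ((cb:ℝ) - cb') := by exact_mod_cast e1
        rw [abs_le] at hb0 hb1 ⊢
        rw [pow_succ]
        constructor <;> linarith [hb0.1, hb0.2, hb1.1, hb1.2]
      · have E0 : (3:ℝ) * s 0 + 3 * s 1 = s 0 + ((ca:ℝ) - ca') := by exact_mod_cast e0
        have E1 : (s 0:ℝ) + 4 * s 1 = s 1 + ((cb:ℝ) - cb') := by exact_mod_cast e1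
        rw [abs_le] at hb0 hb1 ⊢
        rw [pow_succ]
        constructor <;> linarith [hb0.1, hb0.2, hb1.1, hb1.2]
  set DS : Set (Fin 2 → ℝ) := (fun p : (Fin 2 → ℝ) × (Fin 2 → ℝ) => p.1 - p.2) '' (T ×ˢ T)
    with hDS
  have hDSc : IsCompact DS := (hc.prod hc).image (continuous_fst.sub continuous_snd)
  have hmem : rvec s ∈ DS := by
    have hcl : rvec s ∈ closure DS := by
      rw [Metric.mem_closure_iff]
      intro eps heps
      obtain ⟨n, hn⟩ := exists_pow_lt_of_lt_one (by positivity : (0:ℝ) < eps / 8)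
        (by norm_num : (7:ℝ)/9 < 1)
      obtain ⟨x, hx, y, hy, hb0, hb1⟩ := key n
      refine ⟨x - y, ⟨(x, y), ⟨hx, hy⟩, rfl⟩, ?_⟩
      have h8 : 8 * (7/9:ℝ) ^ n < eps := by
        have : (7/9:ℝ)^n < eps / 8 := hn
        linarith
      calc dist (rvec s) (x - y) ≤ 8 * (7/9)^n := by
            rw [dist_pi_le_iff (by positivity)]
            intro i
            rw [Real.dist_eq]
            fin_cases i <;> simp only [Pi.sub_apply, rvec] <;>
              [ (rw [abs_sub_comm]; exact hb0); (rw [abs_sub_comm]; exact hb1) ]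
        _ < eps := h8
    rwa [hDSc.isClosed.closure_eq] at hcl
  obtain ⟨⟨x, y⟩, ⟨hx, hy⟩, heq⟩ := hmem
  rw [nbr_iff]
  refine ⟨x, hx, y, hy, fun i => ?_⟩
  have := congrFun heq i
  simp only [Pi.sub_apply] at this
  rw [show rvec s i = (s i : ℝ) from rfl] at this
  linarith

def boxF : Finset (ℤ × ℤ) := ((Finset.Icc (-4 : ℤ) 4) ×ˢ (Finset.Icc (-2 : ℤ) 2)).erase (0, 0)

def stepF (W : Finset (ℤ × ℤ)) : Finset (ℤ × ℤ) :=
  W.filter (fun p => ∃ c ∈ Finset.Icc (-2 : ℤ) 2, (3 * p.2 - c, p.1 + p.2) ∈ W)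

def NF : Finset (ℤ × ℤ) :=
  {(1,0), (-1,0), (-2,1), (2,-1), (-1,1), (1,-1), (-4,2), (4,-2), (-3,1), (3,-1)}

lemma W3_eq : stepF (stepF (stepF boxF)) = NF := by decide

lemma base_mem {T : Set (Fin 2 → ℝ)} (hself : SelfAffine A2 D2 T) :
    ∀ s : Fin 2 → ℤ, s ≠ 0 → Nbr T s → (s 0, s 1) ∈ boxF := by
  intro s hs hn
  obtain ⟨b0, b1⟩ := nbr_bounds hself hn
  refine Finset.mem_erase.2 ⟨?_, Finset.mem_product.2
    ⟨Finset.mem_Icc.2 (abs_le.1 b0), Finset.mem_Icc.2 (abs_le.1 b1)⟩⟩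
  intro h
  exact hs ((vec_eq_zero_iff s).2 ⟨congrArg Prod.fst h, congrArg Prod.snd h⟩)

lemma descend {T : Set (Fin 2 → ℝ)} (hself : SelfAffine A2 D2 T) (W : Finset (ℤ × ℤ))
    (hW : ∀ s : Fin 2 → ℤ, s ≠ 0 → Nbr T s → (s 0, s 1) ∈ W) :
    ∀ s : Fin 2 → ℤ, s ≠ 0 → Nbr T s → (s 0, s 1) ∈ stepF W := by
  intro s hs hn
  have hs' : ¬(s 0 = 0 ∧ s 1 = 0) := fun h => hs ((vec_eq_zero_iff s).2 h)
  obtain ⟨c, hc, s', hn', hs'0, e0, e1⟩ := fstep hself hs' hn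
  have hmem : (s' 0, s' 1) ∈ W :=
    hW s' (fun h => hs'0 ((vec_eq_zero_iff s').1 h)) hn'
  rw [e0, e1] at hmem
  refine Finset.mem_filter.2 ⟨hW s hs hn, ⟨c, Finset.mem_Icc.2 (abs_le.1 hc), hmem⟩⟩

end Statement13Aux

open Statement13Aux in
theorem statement13 (T : Set (Fin 2 → ℝ))
    (hself : SelfAffine !![0, 3; 1, 1]
      ({![0, 0], ![1, 0], ![-1, 0]} : Set (Fin 2 → ℤ)) T) :
    ∀ s : Fin 2 → ℤ, s ≠ 0 →
      ((T ∩ trT T s).Nonempty ↔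
        s ∈ ({![1, 0], ![-1, 0], ![-2, 1], ![2, -1], ![-1, 1], ![1, -1],
          ![-4, 2], ![4, -2], ![-3, 1], ![3, -1]} : Set (Fin 2 → ℤ))) := by
  have hself' : SelfAffine A2 D2 T := hself
  intro s hs
  constructor
  · intro hn
    have h3 : (s 0, s 1) ∈ stepF (stepF (stepF boxF)) :=
      descend hself' _ (descend hself' _ (descend hself' _ (base_mem hself'))) s hs hn
    rw [W3_eq] at h3
    have he : s = ![s 0, s 1] := by funext i; fin_cases i <;> rfl
    simp only [NF, Finset.mem_insert, Finset.mem_singleton, Prod.mk.injEq] at h3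
    rcases h3 with ⟨h0, h1⟩ | ⟨h0, h1⟩ | ⟨h0, h1⟩ | ⟨h0, h1⟩ | ⟨h0, h1⟩ | ⟨h0, h1⟩ |
      ⟨h0, h1⟩ | ⟨h0, h1⟩ | ⟨h0, h1⟩ | ⟨h0, h1⟩ <;>
      rw [he, h0, h1] <;> simp [Set.mem_insert_iff]
  · intro hmem
    have n1 : Nbr T ![1, 0] :=
      cycle_nbr hself' 1 (-1) 1 0 (by norm_num) (by norm_num) (by norm_num) (by norm_num)
        (by norm_num) (by norm_num)
    have n2 : Nbr T ![-1, 1] :=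
      bstep hself' 1 (-1) (by norm_num) (by norm_num) (by norm_num) (by norm_num) n1
    have n3 : Nbr T ![-1, 0] := nbr_neg (by norm_num) (by norm_num) n1
    have n4 : Nbr T ![1, -1] := nbr_neg (by norm_num) (by norm_num) n2
    have n5 : Nbr T ![-2, 1] :=
      bstep hself' 1 (-1) (by norm_num) (by norm_num) (by norm_num) (by norm_num) n4
    have n6 : Nbr T ![2, -1] := nbr_neg (by norm_num) (by norm_num) n5
    have n7 : Nbr T ![-4, 2] :=
      cycle_nbr hself' (-1) 1 1 (-1) (by norm_num) (by norm_num) (by norm_num) (by norm_num)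
        (by norm_num) (by norm_num)
    have n8 : Nbr T ![4, -2] := nbr_neg (by norm_num) (by norm_num) n7
    have n9 : Nbr T ![-3, 1] :=
      bstep hself' 0 1 (by norm_num) (by norm_num) (by norm_num) (by norm_num) n8
    have n10 : Nbr T ![3, -1] := nbr_neg (by norm_num) (by norm_num) n9
    simp only [Set.mem_insert_iff, Set.mem_singleton_iff] at hmem
    rcases hmem with rfl | rfl | rfl | rfl | rfl | rfl | rfl | rfl | rfl | rfl <;>
      assumption
end
end

section
/- Let A be the 2×2 integer matrix with rows (0, 3) and (1, 1), let D := {(0,0), (1,0), (−1,0)} ⊂ ℤ², and let T = T(A,D) be the unique nonempty compact subset of ℝ² with A·T = T + D. Then T is connected and the origin z = (0,0) is a cut point of T, i.e., T \ {(0,0)} is disconnected. -/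
open Set Filter Topology Matrix

noncomputable section

namespace S15

abbrev E2 := Fin 2 → ℝ

def lam : ℝ := (1 + Real.sqrt 13) / 2
def Bi (x : E2) : E2 := ![-(x 0) / 3 + x 1, x 0 / 3]
def ee : E2 := ![1, 0]
def gg (c : ℝ) (x : E2) : E2 := Bi (x + c • ee)
def ph (x : E2) : ℝ := x 0 + lam * x 1
def Nn (x : E2) : ℝ := max |x 0| (2 * |x 1|)
def Dg : Set ℝ := {0, 1, -1}

lemma s13_sq : Real.sqrt 13 ^ 2 = 13 := Real.sq_sqrt (by norm_num)
lemma s13_gt : (3:ℝ) < Real.sqrt 13 := by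
  rw [show (3:ℝ) = Real.sqrt 9 by rw [show (9:ℝ) = 3^2 by norm_num, Real.sqrt_sq]; norm_num]
  exact Real.sqrt_lt_sqrt (by norm_num) (by norm_num)
lemma lam_gt2 : 2 < lam := by unfold lam; nlinarith [s13_gt]
lemma lam_pos : 0 < lam := by linarith [lam_gt2]
lemma lam_sq : lam ^ 2 = lam + 3 := by
  unfold lam; nlinarith [s13_sq]

lemma Bi_apply0 (x : E2) : Bi x 0 = -(x 0) / 3 + x 1 := rfl
lemma Bi_apply1 (x : E2) : Bi x 1 = x 0 / 3 := rfl

lemma ph_Bi (x : E2) : ph (Bi x) = ph x / lam := by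
  have h := lam_sq
  have hl := lam_pos.ne'
  unfold ph
  rw [Bi_apply0, Bi_apply1]
  field_simp
  linear_combination x 0 * h

lemma gg_zero (x : E2) : gg 0 x = Bi x := by
  unfold gg; rw [zero_smul, add_zero]

lemma ph_ee : ph ee = 1 := by unfold ph ee; norm_num

lemma ph_add (x y : E2) : ph (x + y) = ph x + ph y := by
  unfold ph; simp [Pi.add_apply]; ring

lemma ph_smul (c : ℝ) (x : E2) : ph (c • x) = c * ph x := by
  unfold ph; simp [Pi.smul_apply, smul_eq_mul]; ring

lemma ph_g (c : ℝ) (x : E2) : ph (gg c x) = (ph x + c) / lam := by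
  unfold gg; rw [ph_Bi, ph_add, ph_smul, ph_ee]; ring_nf

lemma ph_zero : ph (0 : E2) = 0 := by unfold ph; simp

lemma ph_cont : Continuous ph := by
  unfold ph
  exact (continuous_apply 0).add (continuous_const.mul (continuous_apply 1))

lemma ph_iter (n : ℕ) (x : E2) : ph (Bi^[n] x) = ph x / lam ^ n := by
  induction n with
  | zero => simp
  | succ n ih =>
    rw [Function.iterate_succ_apply', ph_Bi, ih, pow_succ, div_div]

lemma Nn_nonneg (x : E2) : 0 ≤ Nn x := le_trans (abs_nonneg _) (le_max_left _ _)

lemma Nn_Bi (x : E2) : Nn (Bi x) ≤ 5/6 * Nn x := by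
  have h0 : |x 0| ≤ Nn x := le_max_left _ _
  have h1 : |x 1| ≤ Nn x / 2 := by
    have := le_max_right (|x 0|) (2 * |x 1|); unfold Nn; linarith
  unfold Nn
  rw [Bi_apply0, Bi_apply1]
  apply max_le
  · calc |-(x 0) / 3 + x 1| ≤ |-(x 0) / 3| + |x 1| := abs_add_le _ _
      _ = |x 0| / 3 + |x 1| := by rw [abs_div, abs_neg]; norm_num
      _ ≤ Nn x / 3 + Nn x / 2 := by unfold Nn at *; linarith
      _ = 5/6 * Nn x := by ring
  · calc 2 * |x 0 / 3| = 2/3 * |x 0| := by rw [abs_div]; norm_num; ring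
      _ ≤ 5/6 * Nn x := by have := Nn_nonneg x; unfold Nn at *; linarith

lemma norm_le_Nn (x : E2) : ‖x‖ ≤ Nn x := by
  apply pi_norm_le_iff_of_nonneg (Nn_nonneg x) |>.2
  intro i
  fin_cases i
  · show ‖x 0‖ ≤ Nn x
    rw [Real.norm_eq_abs]; exact le_max_left _ _
  · show ‖x 1‖ ≤ Nn x
    rw [Real.norm_eq_abs]
    have h2 := le_max_right (|x 0|) (2 * |x 1|)
    have h := abs_nonneg (x 1)
    unfold Nn; linarith

lemma Nn_le (x : E2) : Nn x ≤ 2 * ‖x‖ := by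
  have h0 : |x 0| ≤ ‖x‖ := by simpa [Real.norm_eq_abs] using norm_le_pi_norm x 0
  have h1 : |x 1| ≤ ‖x‖ := by simpa [Real.norm_eq_abs] using norm_le_pi_norm x 1
  have := norm_nonneg x
  apply max_le <;> linarith

lemma Bi_sub (x y : E2) : Bi x - Bi y = Bi (x - y) := by
  funext i; fin_cases i <;> simp [Bi, Pi.sub_apply] <;> ring

lemma gg_sub (c : ℝ) (x y : E2) : gg c x - gg c y = Bi (x - y) := by
  unfold gg; rw [Bi_sub, show x + c • ee - (y + c • ee) = x - y from by abel]

lemma Bi_zero : Bi 0 = 0 := by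
  funext i; fin_cases i <;> simp [Bi]

lemma Nn_iter (n : ℕ) (x : E2) : Nn (Bi^[n] x) ≤ (5/6)^n * Nn x := by
  induction n with
  | zero => simp
  | succ n ih =>
    rw [Function.iterate_succ_apply']
    calc Nn (Bi (Bi^[n] x)) ≤ 5/6 * Nn (Bi^[n] x) := Nn_Bi _
      _ ≤ 5/6 * ((5/6)^n * Nn x) := by nlinarith [Nn_nonneg (Bi^[n] x)]
      _ = (5/6)^(n+1) * Nn x := by ring

lemma norm_iter (n : ℕ) (x : E2) : ‖Bi^[n] x‖ ≤ (5/6)^n * (2 * ‖x‖) := by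
  calc ‖Bi^[n] x‖ ≤ Nn (Bi^[n] x) := norm_le_Nn _
    _ ≤ (5/6)^n * Nn x := Nn_iter n x
    _ ≤ (5/6)^n * (2 * ‖x‖) := by
        have := Nn_le x
        have hp : (0:ℝ) ≤ (5/6)^n := by positivity
        nlinarith

/-! ### The set equation -/

lemma hBiA (x : E2) : Bi ((rmat !![0, 3; 1, 1]).mulVec x) = x := by
  funext i
  fin_cases i <;>
    simp [Bi, rmat, Matrix.mulVec, dotProduct, Fin.sum_univ_two, Matrix.map_apply] <;>
    ring

lemma rvec00 : rvec ![0, 0] = (0 : E2) := by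
  funext i; fin_cases i <;> simp [rvec]

lemma rvec10 : rvec ![1, 0] = ee := by
  funext i; fin_cases i <;> simp [rvec, ee]

lemma rvecm10 : rvec ![-1, 0] = -ee := by
  funext i; fin_cases i <;> simp [rvec, ee]

lemma seteq (T : Set E2)
    (heq : (rmat !![0, 3; 1, 1]).mulVec '' T =
      ⋃ e ∈ ({![0, 0], ![1, 0], ![-1, 0]} : Set (Fin 2 → ℤ)), (fun x => x + rvec e) '' T) :
    T = gg 0 '' T ∪ gg 1 '' T ∪ gg (-1) '' T := by
  have hid : T = Bi '' ((rmat !![0, 3; 1, 1]).mulVec '' T) := by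
    rw [← Set.image_comp]
    have : Bi ∘ (rmat !![0, 3; 1, 1]).mulVec = id := funext hBiA
    rw [this, Set.image_id]
  have e0 : (Bi ∘ fun x => x + rvec ![0,0]) '' T = gg 0 '' T := by
    apply Set.image_congr'; intro x; simp [gg, Function.comp, rvec00]
  have e1 : (Bi ∘ fun x => x + rvec ![1,0]) '' T = gg 1 '' T := by
    apply Set.image_congr'; intro x; simp [gg, Function.comp, rvec10, one_smul]
  have e2 : (Bi ∘ fun x => x + rvec ![-1,0]) '' T = gg (-1) '' T := by
    apply Set.image_congr'; intro x
    have h : (-1 : ℝ) • ee = -ee := by rw [neg_smul, one_smul]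
    simp [gg, Function.comp, rvecm10, h, sub_eq_add_neg]
  conv_lhs => rw [hid, heq]
  rw [show (⋃ e ∈ ({![0, 0], ![1, 0], ![-1, 0]} : Set (Fin 2 → ℤ)), (fun x => x + rvec e) '' T)
      = (fun x => x + rvec ![0,0]) '' T ∪ (fun x => x + rvec ![1,0]) '' T ∪
        (fun x => x + rvec ![-1,0]) '' T from by simp [Set.biUnion_insert, Set.union_assoc]]
  rw [Set.image_union, Set.image_union, ← Set.image_comp, ← Set.image_comp, ← Set.image_comp,
    e0, e1, e2]

/-! ### Words and pieces -/

def gmap : List ℝ → E2 → E2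
  | [], x => x
  | c :: l, x => gg c (gmap l x)

lemma gmap_nil (x : E2) : gmap [] x = x := rfl
lemma gmap_cons (c : ℝ) (l : List ℝ) (x : E2) : gmap (c :: l) x = gg c (gmap l x) := rfl

lemma gmap_sub (l : List ℝ) (x y : E2) :
    gmap l x - gmap l y = Bi^[l.length] (x - y) := by
  induction l with
  | nil => simp [gmap]
  | cons c l ih =>
    rw [gmap_cons, gmap_cons, gg_sub, ih, List.length_cons,
      ← Function.iterate_succ_apply' Bi]

/-! ### The cycle of six points -/

def qN : ℕ → E2
  | 0 => ![1/2, 0]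
  | 1 => ![-1, 1/2]
  | 2 => ![1/2, -1/2]
  | 3 => ![-1/2, 0]
  | 4 => ![1, -1/2]
  | _ => ![-1/2, 1/2]
def cdN : ℕ → ℝ
  | 0 => 1
  | 1 => 1
  | 2 => -1
  | 3 => -1
  | 4 => -1
  | _ => 1
def q (i : ℕ) : E2 := qN (i % 6)
def cdn (i : ℕ) : ℝ := cdN (i % 6)

lemma cdn_mem (i : ℕ) : cdn i ∈ Dg := by
  unfold cdn Dg
  have h : i % 6 = 0 ∨ i % 6 = 1 ∨ i % 6 = 2 ∨ i % 6 = 3 ∨ i % 6 = 4 ∨ i % 6 = 5 := by omega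
  rcases h with h|h|h|h|h|h <;> rw [h] <;> simp [cdN]

lemma cyc (i : ℕ) : q i = gg (cdn i) (q (i + 1)) := by
  unfold q cdn
  have h : i % 6 = 0 ∨ i % 6 = 1 ∨ i % 6 = 2 ∨ i % 6 = 3 ∨ i % 6 = 4 ∨ i % 6 = 5 := by omega
  rcases h with h|h|h|h|h|h <;>
    · have h2 : (i+1) % 6 = (i % 6 + 1) % 6 := by omega
      rw [h] at h2
      norm_num at h2
      rw [h, h2]
      funext j
      fin_cases j <;> norm_num [qN, cdN, gg, Bi, ee]

lemma q_norm (i : ℕ) : ‖q i‖ ≤ 1 := by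
  unfold q
  apply pi_norm_le_iff_of_nonneg (by norm_num) |>.2
  intro j
  have h : i % 6 = 0 ∨ i % 6 = 1 ∨ i % 6 = 2 ∨ i % 6 = 3 ∨ i % 6 = 4 ∨ i % 6 = 5 := by omega
  rcases h with h|h|h|h|h|h <;> rw [h] <;> fin_cases j <;>
    simp [qN, Real.norm_eq_abs] <;> norm_num

lemma cross1 : gg 1 (q 3) = gg 0 (q 0) := by
  funext j; fin_cases j <;> norm_num [q, qN, gg, Bi, ee]

lemma cross2 : gg (-1) (q 0) = gg 0 (q 3) := by
  funext j; fin_cases j <;> norm_num [q, qN, gg, Bi, ee]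

def Wl : ℕ → ℕ → List ℝ
  | _, 0 => []
  | i, n+1 => cdn i :: Wl (i+1) n

lemma Wl_len (i n : ℕ) : (Wl i n).length = n := by
  induction n generalizing i with
  | zero => rfl
  | succ n ih => simp [Wl, ih]

lemma Wl_valid (i n : ℕ) : ∀ c ∈ Wl i n, c ∈ Dg := by
  induction n generalizing i with
  | zero => intro c hc; simp [Wl] at hc
  | succ n ih =>
    intro c hc
    rw [Wl] at hc
    rcases List.mem_cons.1 hc with h | h
    · rw [h]; exact cdn_mem i
    · exact ih (i+1) c h

lemma q_gmap (n i : ℕ) : q i = gmap (Wl i n) (q (i + n)) := by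
  induction n generalizing i with
  | zero => simp [Wl, gmap_nil]
  | succ n ih =>
    rw [Wl, gmap_cons, show i + (n+1) = (i+1) + n from by omega, ← ih (i+1), ← cyc]

end S15

section TPart
open S15

variable {T : Set S15.E2}

lemma gmap_mem (hsub : ∀ c ∈ Dg, ∀ x ∈ T, gg c x ∈ T) :
    ∀ (l : List ℝ), (∀ c ∈ l, c ∈ Dg) → ∀ x ∈ T, gmap l x ∈ T := by
  intro l
  induction l with
  | nil => intro _ x hx; exact hx
  | cons c l ih =>
    intro hv x hx
    rw [gmap_cons]
    exact hsub c (hv c List.mem_cons_self) _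
      (ih (fun d hd => hv d (List.mem_cons_of_mem c hd)) x hx)

lemma cover_n (hcov : ∀ x ∈ T, ∃ c ∈ Dg, ∃ y ∈ T, x = gg c y) :
    ∀ (n : ℕ), ∀ x ∈ T, ∃ l : List ℝ, l.length = n ∧ (∀ c ∈ l, c ∈ Dg) ∧
      ∃ y ∈ T, x = gmap l y := by
  intro n
  induction n with
  | zero => intro x hx; exact ⟨[], rfl, by simp, x, hx, rfl⟩
  | succ n ih =>
    intro x hx
    obtain ⟨c, hc, y, hy, hxy⟩ := hcov x hx
    obtain ⟨l, hlen, hval, z, hz, hyz⟩ := ih y hy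
    refine ⟨c :: l, by simp [hlen], ?_, z, hz, ?_⟩
    · intro d hd
      rcases List.mem_cons.1 hd with h | h
      · rw [h]; exact hc
      · exact hval d h
    · rw [gmap_cons, ← hyz, hxy]

lemma piece_dist {R : ℝ} (hR : ∀ t ∈ T, ‖t‖ ≤ R) (l : List ℝ) {x y : S15.E2}
    (hx : x ∈ T) (hy : y ∈ T) :
    dist (gmap l x) (gmap l y) ≤ (5/6)^l.length * (4 * R) := by
  rw [dist_eq_norm, gmap_sub]
  calc ‖Bi^[l.length] (x - y)‖ ≤ (5/6)^l.length * (2 * ‖x - y‖) := norm_iter _ _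
    _ ≤ (5/6)^l.length * (4 * R) := by
        have h1 : ‖x - y‖ ≤ ‖x‖ + ‖y‖ := norm_sub_le x y
        have h2 := hR x hx
        have h3 := hR y hy
        have hp : (0:ℝ) ≤ (5/6 : ℝ)^l.length := by positivity
        nlinarith

lemma qT (hcl : IsClosed T) {t0 : S15.E2} (ht0 : t0 ∈ T)
    (hsub : ∀ c ∈ Dg, ∀ x ∈ T, gg c x ∈ T) : ∀ i, q i ∈ T := by
  intro i
  have hmem : ∀ n : ℕ, gmap (Wl i n) t0 ∈ T :=
    fun n => gmap_mem hsub (Wl i n) (Wl_valid i n) t0 ht0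
  have htend : Filter.Tendsto (fun n : ℕ => gmap (Wl i n) t0) Filter.atTop (nhds (q i)) := by
   rw [tendsto_iff_dist_tendsto_zero]
   apply squeeze_zero (fun n => dist_nonneg) (g := fun n => (5/6)^n * (2 * (‖t0‖ + 1)))
   · intro n
     have hq : q i = gmap (Wl i n) (q (i + n)) := q_gmap n i
     rw [hq, dist_eq_norm, gmap_sub, Wl_len]
     calc ‖Bi^[n] (t0 - q (i+n))‖ ≤ (5/6)^n * (2 * ‖t0 - q (i+n)‖) := norm_iter _ _
       _ ≤ (5/6)^n * (2 * (‖t0‖ + 1)) := by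
           have h1 : ‖t0 - q (i+n)‖ ≤ ‖t0‖ + ‖q (i+n)‖ := norm_sub_le _ _
           have h2 := q_norm (i+n)
           have hp : (0:ℝ) ≤ (5/6 : ℝ)^n := by positivity
           nlinarith
   · have h := tendsto_pow_atTop_nhds_zero_of_lt_one (by norm_num : (0:ℝ) ≤ 5/6)
       (by norm_num : (5/6:ℝ) < 1)
     simpa using h.mul_const (2 * (‖t0‖ + 1))
  exact hcl.mem_of_tendsto htend (Filter.Eventually.of_forall hmem)

lemma BiIter_mem (hsub : ∀ c ∈ Dg, ∀ x ∈ T, gg c x ∈ T) :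
    ∀ (n : ℕ), ∀ x ∈ T, Bi^[n] x ∈ T := by
  intro n
  induction n with
  | zero => intro x hx; exact hx
  | succ n ih =>
    intro x hx
    rw [Function.iterate_succ_apply']
    have h0 : (0:ℝ) ∈ Dg := by simp [Dg]
    have := hsub 0 h0 _ (ih x hx)
    rwa [gg_zero] at this

lemma zeroT (hcl : IsClosed T) {t0 : S15.E2} (ht0 : t0 ∈ T)
    (hsub : ∀ c ∈ Dg, ∀ x ∈ T, gg c x ∈ T) : (0 : S15.E2) ∈ T := by
  have htend : Filter.Tendsto (fun n : ℕ => Bi^[n] t0) Filter.atTop (nhds 0) := by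
    rw [tendsto_zero_iff_norm_tendsto_zero]
    apply squeeze_zero (fun n => norm_nonneg _) (g := fun n => (5/6)^n * (2 * ‖t0‖))
    · exact fun n => norm_iter n t0
    · have h := tendsto_pow_atTop_nhds_zero_of_lt_one (by norm_num : (0:ℝ) ≤ 5/6)
        (by norm_num : (5/6:ℝ) < 1)
      simpa using h.mul_const (2 * ‖t0‖)
  exact hcl.mem_of_tendsto htend
    (Filter.Eventually.of_forall (fun n => BiIter_mem hsub n t0 ht0))

lemma ph_bound (hcomp : IsCompact T) (hne : T.Nonempty)
    (hcov : ∀ x ∈ T, ∃ c ∈ Dg, ∃ y ∈ T, x = gg c y) :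
    ∀ t ∈ T, |ph t| ≤ 1 / (lam - 1) := by
  obtain ⟨tm, htm, hmax⟩ := hcomp.exists_isMaxOn hne
    ((continuous_abs.comp ph_cont).continuousOn)
  have hM : ∀ t ∈ T, |ph t| ≤ |ph tm| := fun t ht => hmax ht
  obtain ⟨c, hc, y, hy, hty⟩ := hcov tm htm
  have hc1 : |c| ≤ 1 := by
    rcases hc with h | h | h <;> rw [h] <;> norm_num
  have hlam := lam_gt2
  have key : |ph tm| ≤ (|ph tm| + 1) / lam := by
    conv_lhs => rw [hty]
    rw [ph_g, abs_div, abs_of_pos lam_pos]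
    have hnum : |ph y + c| ≤ |ph tm| + 1 :=
      (abs_add_le _ _).trans (add_le_add (hM y hy) hc1)
    exact div_le_div_of_nonneg_right hnum lam_pos.le
  have hMle : |ph tm| ≤ 1 / (lam - 1) := by
    rw [le_div_iff₀ (by linarith : (0:ℝ) < lam - 1)]
    have h2 := (le_div_iff₀ lam_pos).1 key
    nlinarith
  exact fun t ht => (hM t ht).trans hMle

lemma colorConst (hq : ∀ i, q i ∈ T) :
    ∀ (n : ℕ) (χ : List ℝ → Prop),
      (∀ l l' : List ℝ, (∀ c ∈ l, c ∈ Dg) → (∀ c ∈ l', c ∈ Dg) →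
        l.length = n → l'.length = n →
        (gmap l '' T ∩ gmap l' '' T).Nonempty → (χ l ↔ χ l')) →
      ∀ l l' : List ℝ, (∀ c ∈ l, c ∈ Dg) → (∀ c ∈ l', c ∈ Dg) →
        l.length = n → l'.length = n → (χ l ↔ χ l') := by
  intro n
  induction n with
  | zero =>
    intro χ _ l l' _ _ hl hl'
    rw [List.length_eq_zero_iff] at hl hl'
    rw [hl, hl']
  | succ n ih =>
    intro χ hadj l l' hv hv' hl hl'
    have h0 : (0:ℝ) ∈ Dg := by simp [Dg]
    have h1 : (1:ℝ) ∈ Dg := by simp [Dg]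
    have hm1 : (-1:ℝ) ∈ Dg := by simp [Dg]
    have consV : ∀ (a : ℝ), a ∈ Dg → ∀ (s : List ℝ), (∀ c ∈ s, c ∈ Dg) →
        ∀ d ∈ (a :: s), d ∈ Dg := by
      intro a ha s hs d hd
      rcases List.mem_cons.1 hd with h | h
      · rw [h]; exact ha
      · exact hs d h
    have IHa : ∀ a : ℝ, a ∈ Dg → ∀ s s' : List ℝ, (∀ c ∈ s, c ∈ Dg) → (∀ c ∈ s', c ∈ Dg) →
        s.length = n → s'.length = n → (χ (a :: s) ↔ χ (a :: s')) := by
      intro a ha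
      refine ih (fun s => χ (a :: s)) ?_
      intro s s' hs hs' hls hls' hinter
      obtain ⟨z, hz1, hz2⟩ := hinter
      apply hadj (a :: s) (a :: s') (consV a ha s hs) (consV a ha s' hs')
        (by simp [hls]) (by simp [hls'])
      obtain ⟨y, hy, hyz⟩ := hz1
      obtain ⟨y', hy', hyz'⟩ := hz2
      exact ⟨gg a z, ⟨y, hy, by rw [gmap_cons, hyz]⟩, ⟨y', hy', by rw [gmap_cons, hyz']⟩⟩
    have hqin : ∀ i : ℕ, q i ∈ gmap (Wl i n) '' T :=
      fun i => ⟨q (i + n), hq (i + n), (q_gmap n i).symm⟩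
    have hadj10 : χ (1 :: Wl 3 n) ↔ χ (0 :: Wl 0 n) := by
      apply hadj _ _ (consV 1 h1 _ (Wl_valid 3 n)) (consV 0 h0 _ (Wl_valid 0 n))
        (by simp [Wl_len]) (by simp [Wl_len])
      refine ⟨gg 1 (q 3), ?_, ?_⟩
      · obtain ⟨y, hy, hyz⟩ := hqin 3
        exact ⟨y, hy, by rw [gmap_cons, hyz]⟩
      · obtain ⟨y, hy, hyz⟩ := hqin 0
        exact ⟨y, hy, by rw [gmap_cons, hyz, ← cross1]⟩
    have hadjm0 : χ (-1 :: Wl 0 n) ↔ χ (0 :: Wl 3 n) := by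
      apply hadj _ _ (consV (-1) hm1 _ (Wl_valid 0 n)) (consV 0 h0 _ (Wl_valid 3 n))
        (by simp [Wl_len]) (by simp [Wl_len])
      refine ⟨gg (-1) (q 0), ?_, ?_⟩
      · obtain ⟨y, hy, hyz⟩ := hqin 0
        exact ⟨y, hy, by rw [gmap_cons, hyz]⟩
      · obtain ⟨y, hy, hyz⟩ := hqin 3
        exact ⟨y, hy, by rw [gmap_cons, hyz, ← cross2]⟩
    have h00 : χ (0 :: Wl 0 n) ↔ χ (0 :: Wl 3 n) :=
      IHa 0 h0 _ _ (Wl_valid 0 n) (Wl_valid 3 n) (Wl_len 0 n) (Wl_len 3 n)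
    have key : ∀ a : ℝ, a ∈ Dg → ∀ s : List ℝ, (∀ c ∈ s, c ∈ Dg) → s.length = n →
        (χ (a :: s) ↔ χ (0 :: Wl 0 n)) := by
      intro a ha s hs hls
      rcases (show a = 0 ∨ a = 1 ∨ a = -1 by simpa [Dg] using ha) with rfl | rfl | rfl
      · exact IHa 0 h0 s (Wl 0 n) hs (Wl_valid 0 n) hls (Wl_len 0 n)
      · exact (IHa 1 h1 s (Wl 3 n) hs (Wl_valid 3 n) hls (Wl_len 3 n)).trans hadj10
      · exact ((IHa (-1) hm1 s (Wl 0 n) hs (Wl_valid 0 n) hls (Wl_len 0 n)).trans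
          hadjm0).trans h00.symm
    cases l with
    | nil => simp at hl
    | cons c t =>
      cases l' with
      | nil => simp at hl'
      | cons c' t' =>
        have hc : c ∈ Dg := hv c List.mem_cons_self
        have hc' : c' ∈ Dg := hv' c' List.mem_cons_self
        have hvt : ∀ d ∈ t, d ∈ Dg := fun d hd => hv d (List.mem_cons_of_mem c hd)
        have hvt' : ∀ d ∈ t', d ∈ Dg := fun d hd => hv' d (List.mem_cons_of_mem c' hd)
        have hlt : t.length = n := by simpa using hl
        have hlt' : t'.length = n := by simpa using hl'
        exact (key c hc t hvt hlt).trans (key c' hc' t' hvt' hlt').symm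

lemma Tpreconn (hcomp : IsCompact T) (hne : T.Nonempty)
    (hsub : ∀ c ∈ Dg, ∀ x ∈ T, gg c x ∈ T)
    (hcov : ∀ x ∈ T, ∃ c ∈ Dg, ∃ y ∈ T, x = gg c y) :
    IsPreconnected T := by
  obtain ⟨t0, ht0⟩ := hne
  have hcl : IsClosed T := hcomp.isClosed
  have hq := qT hcl ht0 hsub
  obtain ⟨tR, htR, hRmax⟩ := hcomp.exists_isMaxOn ⟨t0, ht0⟩ continuous_norm.continuousOn
  set R := ‖tR‖ with hRdef
  have hR : ∀ t ∈ T, ‖t‖ ≤ R := fun t ht => hRmax ht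
  intro u v hu hv hcover hau hbv
  by_contra hcon
  rw [Set.not_nonempty_iff_eq_empty] at hcon
  obtain ⟨a, haT, hau'⟩ := hau
  obtain ⟨b, hbT, hbv'⟩ := hbv
  have hdisj : ∀ x, x ∈ T \ v → x ∈ T \ u → False := by
    rintro x ⟨hxT, hxv⟩ ⟨_, hxu⟩
    rcases hcover hxT with h | h
    · exact hxu h
    · exact hxv h
  have hcovK : ∀ x ∈ T, x ∈ T \ v ∨ x ∈ T \ u := by
    intro x hx
    rcases hcover hx with h | h
    · left
      refine ⟨hx, fun hxv => ?_⟩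
      have : x ∈ T ∩ (u ∩ v) := ⟨hx, h, hxv⟩
      rw [hcon] at this
      exact this
    · right
      refine ⟨hx, fun hxu => ?_⟩
      have : x ∈ T ∩ (u ∩ v) := ⟨hx, hxu, h⟩
      rw [hcon] at this
      exact this
  have haK1 : a ∈ T \ v := by
    refine ⟨haT, fun hav => ?_⟩
    have : a ∈ T ∩ (u ∩ v) := ⟨haT, hau', hav⟩
    rw [hcon] at this
    exact this
  have hbK2 : b ∈ T \ u := by
    refine ⟨hbT, fun hbu => ?_⟩
    have : b ∈ T ∩ (u ∩ v) := ⟨hbT, hbu, hbv'⟩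
    rw [hcon] at this
    exact this
  have hK1cp : IsCompact (T \ v) :=
    hcomp.of_isClosed_subset (hcl.sdiff hv) Set.diff_subset
  have hK2cp : IsCompact (T \ u) :=
    hcomp.of_isClosed_subset (hcl.sdiff hu) Set.diff_subset
  obtain ⟨p0, hp0, hmin⟩ := (hK1cp.prod hK2cp).exists_isMinOn
    ⟨(a, b), Set.mk_mem_prod haK1 hbK2⟩
    (continuous_dist.continuousOn : ContinuousOn (fun p : S15.E2 × S15.E2 => dist p.1 p.2) _)
  set d := dist p0.1 p0.2 with hddef
  have hd : 0 < d := by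
    rw [hddef, dist_pos]
    intro hEq
    rw [Set.mem_prod] at hp0
    exact hdisj p0.1 hp0.1 (hEq ▸ hp0.2)
  have hdle : ∀ x ∈ T \ v, ∀ y ∈ T \ u, d ≤ dist x y := by
    intro x hx y hy
    exact hmin (Set.mk_mem_prod hx hy)
  have hlim : Filter.Tendsto (fun n : ℕ => (5/6:ℝ)^n * (4*R)) Filter.atTop (nhds 0) := by
    have h := tendsto_pow_atTop_nhds_zero_of_lt_one (by norm_num : (0:ℝ) ≤ 5/6)
      (by norm_num : (5/6:ℝ) < 1)
    simpa using h.mul_const (4*R)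
  obtain ⟨n, hn⟩ := (hlim.eventually (gt_mem_nhds hd)).exists
  have hdich : ∀ l : List ℝ, (∀ c ∈ l, c ∈ Dg) → l.length = n →
      gmap l '' T ⊆ T \ v ∨ gmap l '' T ⊆ T \ u := by
    intro l hvl hln
    by_cases hall : gmap l '' T ⊆ T \ v
    · exact Or.inl hall
    · right
      rw [Set.not_subset] at hall
      obtain ⟨z0, hz0p, hz0n⟩ := hall
      have hz0T : z0 ∈ T := by
        obtain ⟨y, hy, rfl⟩ := hz0p
        exact gmap_mem hsub l hvl y hy
      have hz0K2 : z0 ∈ T \ u := (hcovK z0 hz0T).resolve_left hz0n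
      intro z hzp
      have hzT : z ∈ T := by
        obtain ⟨y, hy, rfl⟩ := hzp
        exact gmap_mem hsub l hvl y hy
      rcases hcovK z hzT with h | h
      · exfalso
        obtain ⟨y, hy, rfl⟩ := hzp
        obtain ⟨y0, hy0, rfl⟩ := hz0p
        have hge := hdle _ h _ hz0K2
        have hdist := piece_dist hR l hy hy0
        rw [hln] at hdist
        linarith
      · exact h
  have hadjP : ∀ l l' : List ℝ, (∀ c ∈ l, c ∈ Dg) → (∀ c ∈ l', c ∈ Dg) →
      l.length = n → l'.length = n → (gmap l '' T ∩ gmap l' '' T).Nonempty →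
      ((gmap l '' T ⊆ T \ v) ↔ (gmap l' '' T ⊆ T \ v)) := by
    intro l l' hvl hvl' hll hll' hint
    obtain ⟨z, hz1, hz2⟩ := hint
    constructor
    · intro hsub1
      rcases hdich l' hvl' hll' with h | h
      · exact h
      · exact (hdisj z (hsub1 hz1) (h hz2)).elim
    · intro hsub1
      rcases hdich l hvl hll with h | h
      · exact h
      · exact (hdisj z (hsub1 hz2) (h hz1)).elim
  have hconst := colorConst hq n (fun l => gmap l '' T ⊆ T \ v) hadjP
  obtain ⟨la, hlal, hlav, ya, hya, haeq⟩ := cover_n hcov n a haT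
  obtain ⟨lb, hlbl, hlbv, yb, hyb, hbeq⟩ := cover_n hcov n b hbT
  have hpa : gmap la '' T ⊆ T \ v := by
    rcases hdich la hlav hlal with h | h
    · exact h
    · exact (hdisj a haK1 (h ⟨ya, hya, haeq.symm⟩)).elim
  have hpb : gmap lb '' T ⊆ T \ v := (hconst la lb hlav hlbv hlal hlbl).1 hpa
  exact hdisj b (hpb ⟨yb, hyb, hbeq.symm⟩) hbK2


end TPart

theorem statement15 (T : Set (Fin 2 → ℝ))
    (hself : SelfAffine !![0, 3; 1, 1]
      ({![0, 0], ![1, 0], ![-1, 0]} : Set (Fin 2 → ℤ)) T) :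
    IsConnected T ∧ (0 : Fin 2 → ℝ) ∈ T ∧ SepUnion (T \ {(0 : Fin 2 → ℝ)}) := by
  obtain ⟨hne, hcomp, heq⟩ := hself
  have hcl : IsClosed T := hcomp.isClosed
  have hTeq := S15.seteq T heq
  have hsub : ∀ c ∈ S15.Dg, ∀ x ∈ T, S15.gg c x ∈ T := by
    intro c hc x hx
    rcases (show c = 0 ∨ c = 1 ∨ c = -1 by simpa [S15.Dg] using hc) with rfl | rfl | rfl
    · rw [hTeq]; exact Or.inl (Or.inl (Set.mem_image_of_mem _ hx))
    · rw [hTeq]; exact Or.inl (Or.inr (Set.mem_image_of_mem _ hx))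
    · rw [hTeq]; exact Or.inr (Set.mem_image_of_mem _ hx)
  have hcov : ∀ x ∈ T, ∃ c ∈ S15.Dg, ∃ y ∈ T, x = S15.gg c y := by
    intro x hx
    rw [hTeq] at hx
    rcases hx with (⟨y, hy, rfl⟩ | ⟨y, hy, rfl⟩) | ⟨y, hy, rfl⟩
    · exact ⟨0, by simp [S15.Dg], y, hy, rfl⟩
    · exact ⟨1, by simp [S15.Dg], y, hy, rfl⟩
    · exact ⟨-1, by simp [S15.Dg], y, hy, rfl⟩
  obtain ⟨t0, ht0⟩ := hne
  have h0T : (0 : S15.E2) ∈ T := zeroT hcl ht0 hsub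
  refine ⟨⟨⟨t0, ht0⟩, Tpreconn hcomp ⟨t0, ht0⟩ hsub hcov⟩, h0T, ?_⟩
  obtain ⟨tR, htR, hRmax⟩ := hcomp.exists_isMaxOn ⟨t0, ht0⟩ continuous_norm.continuousOn
  set R := ‖tR‖ with hRdef
  have hR : ∀ t ∈ T, ‖t‖ ≤ R := fun t ht => hRmax ht
  have hb := ph_bound hcomp ⟨t0, ht0⟩ hcov
  have hlg := S15.lam_gt2
  have hmlt : 1 / (S15.lam - 1) < 1 := by
    rw [div_lt_one (by linarith)]; linarith
  set U := ⋃ n : ℕ, (fun x => S15.Bi^[n] (S15.gg 1 x)) '' T with hUdef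
  set V := ⋃ n : ℕ, (fun x => S15.Bi^[n] (S15.gg (-1) x)) '' T with hVdef
  have hUpos : ∀ z ∈ U, 0 < S15.ph z := by
    intro z hz
    rw [hUdef, Set.mem_iUnion] at hz
    obtain ⟨n, y, hy, rfl⟩ := hz
    show 0 < S15.ph (S15.Bi^[n] (S15.gg 1 y))
    rw [S15.ph_iter, S15.ph_g]
    have h1 := abs_le.1 (hb y hy)
    exact div_pos (div_pos (by linarith [h1.1]) S15.lam_pos) (pow_pos S15.lam_pos n)
  have hVneg : ∀ z ∈ V, S15.ph z < 0 := by
    intro z hz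
    rw [hVdef, Set.mem_iUnion] at hz
    obtain ⟨n, y, hy, rfl⟩ := hz
    show S15.ph (S15.Bi^[n] (S15.gg (-1) y)) < 0
    rw [S15.ph_iter, S15.ph_g]
    have h1 := abs_le.1 (hb y hy)
    exact div_neg_of_neg_of_pos
      (div_neg_of_neg_of_pos (by linarith [h1.2]) S15.lam_pos) (pow_pos S15.lam_pos n)
  have hUT : U ⊆ T := by
    intro z hz
    rw [hUdef, Set.mem_iUnion] at hz
    obtain ⟨n, y, hy, rfl⟩ := hz
    exact BiIter_mem hsub n _ (hsub 1 (by simp [S15.Dg]) y hy)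
  have hVT : V ⊆ T := by
    intro z hz
    rw [hVdef, Set.mem_iUnion] at hz
    obtain ⟨n, y, hy, rfl⟩ := hz
    exact BiIter_mem hsub n _ (hsub (-1) (by simp [S15.Dg]) y hy)
  have hcoverUV : ∀ x ∈ T, x ≠ 0 → x ∈ U ∪ V := by
    intro x hx hx0
    by_contra hnot
    have hall : ∀ n : ℕ, ∃ t ∈ T, x = S15.Bi^[n] t := by
      intro n
      induction n with
      | zero => exact ⟨x, hx, rfl⟩
      | succ n ih =>
        obtain ⟨t, ht, hxt⟩ := ih
        obtain ⟨c, hc, y, hy, hty⟩ := hcov t ht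
        rcases (show c = 0 ∨ c = 1 ∨ c = -1 by simpa [S15.Dg] using hc) with rfl | rfl | rfl
        · exact ⟨y, hy, by
            rw [hxt, hty, S15.gg_zero, ← Function.iterate_succ_apply]⟩
        · exact absurd (Or.inl (by
            rw [hUdef, Set.mem_iUnion]
            exact ⟨n, y, hy, by rw [hxt, hty]⟩) : x ∈ U ∪ V) hnot
        · exact absurd (Or.inr (by
            rw [hVdef, Set.mem_iUnion]
            exact ⟨n, y, hy, by rw [hxt, hty]⟩) : x ∈ U ∪ V) hnot
    have hxn : ∀ n : ℕ, ‖x‖ ≤ (5/6)^n * (2 * R) := by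
      intro n
      obtain ⟨t, ht, hxt⟩ := hall n
      rw [hxt]
      calc ‖S15.Bi^[n] t‖ ≤ (5/6)^n * (2 * ‖t‖) := S15.norm_iter n t
        _ ≤ (5/6)^n * (2 * R) := by
            have := hR t ht
            have hp : (0:ℝ) ≤ (5/6:ℝ)^n := by positivity
            nlinarith
    have hlim : Filter.Tendsto (fun n : ℕ => (5/6:ℝ)^n * (2 * R)) Filter.atTop (nhds 0) := by
      have h := tendsto_pow_atTop_nhds_zero_of_lt_one (by norm_num : (0:ℝ) ≤ 5/6)
        (by norm_num : (5/6:ℝ) < 1)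
      simpa using h.mul_const (2 * R)
    have hx0' : ‖x‖ ≤ 0 := ge_of_tendsto hlim (Filter.Eventually.of_forall hxn)
    exact hx0 (norm_le_zero_iff.1 hx0')
  refine ⟨U, V, ?_, ?_, ?_, ?_, ?_⟩
  · apply Set.Subset.antisymm
    · rintro x ⟨hxT, hx0⟩
      exact hcoverUV x hxT (by simpa using hx0)
    · intro x hx
      rcases hx with hx | hx
      · refine ⟨hUT hx, ?_⟩
        simp only [Set.mem_singleton_iff]
        intro h
        have := hUpos x hx
        rw [h, S15.ph_zero] at this
        exact lt_irrefl 0 this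
      · refine ⟨hVT hx, ?_⟩
        simp only [Set.mem_singleton_iff]
        intro h
        have := hVneg x hx
        rw [h, S15.ph_zero] at this
        exact lt_irrefl 0 this
  · exact ⟨S15.gg 1 t0, by rw [hUdef, Set.mem_iUnion]; exact ⟨0, t0, ht0, rfl⟩⟩
  · exact ⟨S15.gg (-1) t0, by rw [hVdef, Set.mem_iUnion]; exact ⟨0, t0, ht0, rfl⟩⟩
  · apply Set.eq_empty_iff_forall_notMem.2
    rintro z ⟨hzc, hzV⟩
    have h1 : 0 ≤ S15.ph z := by
      have hsubc : closure U ⊆ {w : S15.E2 | 0 ≤ S15.ph w} :=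
        closure_minimal (fun w hw => (hUpos w hw).le)
          (isClosed_le continuous_const S15.ph_cont)
      exact hsubc hzc
    exact absurd (hVneg z hzV) (not_lt.2 h1)
  · apply Set.eq_empty_iff_forall_notMem.2
    rintro z ⟨hzU, hzc⟩
    have h1 : S15.ph z ≤ 0 := by
      have hsubc : closure V ⊆ {w : S15.E2 | S15.ph w ≤ 0} :=
        closure_minimal (fun w hw => (hVneg w hw).le)
          (isClosed_le S15.ph_cont continuous_const)
      exact hsubc hzc
    exact absurd (hUpos z hzU) (not_lt.2 h1)
end
end
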